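/- arXiv:1310.1368 — 10 statements merged into one kernel-verified Lean document; each statement's English description precedes it below -/
import Mathlib

section
/- For every real number c with 0 < c < √2 there exists N such that for every integer n ≥ N, every n-uniform hypergraph with at most c·√(n/ln n)·2^(n−1) edges is 2-colorable. -/
open MeasureTheory Set Filter
open scoped ENNReal
noncomputable section
namespace RGTC
open scoped Classical

/-! ### The uniform measure on [0,1] and product measure -/

def ν : Measure ℝ := volume.restrict (Set.Icc 0 1)
instance : IsProbabilityMeasure ν := ⟨by simp [ν, Real.volume_Icc]⟩

lemma ν_Icc (a b : ℝ) : ν (Set.Icc a b) ≤ ENNReal.ofReal (b - a) := by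
  rw [ν, Measure.restrict_apply measurableSet_Icc]
  exact le_trans (measure_mono Set.inter_subset_left) (le_of_eq Real.volume_Icc)

lemma ν_Iio (b : ℝ) : ν (Set.Iio b) ≤ ENNReal.ofReal b := by
  rw [ν, Measure.restrict_apply measurableSet_Iio]
  refine le_trans (measure_mono ?_) (le_of_eq (by rw [Real.volume_Icc, sub_zero]))
  rintro x ⟨h, h2, _⟩; exact ⟨h2, h.le⟩

lemma ν_Iic (b : ℝ) : ν (Set.Iic b) ≤ ENNReal.ofReal b := by
  rw [ν, Measure.restrict_apply measurableSet_Iic]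
  refine le_trans (measure_mono ?_) (le_of_eq (by rw [Real.volume_Icc, sub_zero]))
  rintro x ⟨h, h2, _⟩; exact ⟨h2, h⟩

lemma ν_Ioi (b : ℝ) : ν (Set.Ioi b) ≤ ENNReal.ofReal (1 - b) := by
  rw [ν, Measure.restrict_apply measurableSet_Ioi]
  refine le_trans (measure_mono ?_) (le_of_eq Real.volume_Icc)
  rintro x ⟨h, _, h3⟩; exact ⟨h.le, h3⟩

lemma ν_Ici (b : ℝ) : ν (Set.Ici b) ≤ ENNReal.ofReal (1 - b) := by
  rw [ν, Measure.restrict_apply measurableSet_Ici]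
  refine le_trans (measure_mono ?_) (le_of_eq Real.volume_Icc)
  rintro x ⟨h, _, h3⟩; exact ⟨h, h3⟩

lemma ν_compl_Icc : ν ((Set.Icc (0:ℝ) 1)ᶜ) = 0 := by
  rw [ν, Measure.restrict_apply measurableSet_Icc.compl]; simp

lemma exists_subinterval (q δ : ℝ) :
    ∀ K : ℕ, K ≠ 0 → ∀ x : ℝ, q ≤ x → x ≤ q + K * δ →
      ∃ i < K, q + i * δ ≤ x ∧ x ≤ q + i * δ + δ := by
  intro K
  induction K with
  | zero => intro h; exact absurd rfl h
  | succ K ih =>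
    intro _ x hx1 hx2
    rcases Nat.eq_zero_or_pos K with hK | hK
    · subst hK
      refine ⟨0, Nat.zero_lt_one, by simpa using hx1, ?_⟩
      push_cast at hx2 ⊢
      linarith
    · by_cases hx : x ≤ q + K * δ
      · obtain ⟨i, hi, h1, h2⟩ := ih hK.ne' x hx1 hx
        exact ⟨i, hi.trans (Nat.lt_succ_self K), h1, h2⟩
      · push_neg at hx
        refine ⟨K, Nat.lt_succ_self K, hx.le, ?_⟩
        push_cast at hx2 ⊢
        linarith

variable {V : Type} [Fintype V] [DecidableEq V]

def μ (V : Type) [Fintype V] : Measure (V → ℝ) := Measure.pi fun _ => ν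
instance : IsProbabilityMeasure (μ V) := by unfold μ; infer_instance

omit [DecidableEq V] in
lemma μ_rect (S : V → Set ℝ) : μ V (Set.pi Set.univ S) = ∏ v, ν (S v) :=
  Measure.pi_pi _ _

lemma μ_mem_le (s : Finset V) (T : V → Set ℝ) (A : Set (V → ℝ))
    (hA : ∀ x ∈ A, ∀ v ∈ s, x v ∈ T v) :
    μ V A ≤ ∏ v ∈ s, ν (T v) := by
  have hsub : A ⊆ Set.pi Set.univ (fun v => if v ∈ s then T v else Set.univ) := by
    intro x hx v _
    by_cases hv : v ∈ s
    · simpa [hv] using hA x hx v hv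
    · simp [hv]
  refine le_trans (measure_mono hsub) (le_of_eq ?_)
  rw [μ_rect]
  calc ∏ v, ν (if v ∈ s then T v else Set.univ)
      = ∏ v, (if v ∈ s then ν (T v) else 1) := by
        apply Finset.prod_congr rfl; intro v _
        split <;> simp [measure_univ]
    _ = ∏ v ∈ s, ν (T v) := (Finset.prod_ite_mem _ _ _).trans (by rw [Finset.univ_inter])

/-! ### The bad events -/

def Last (E : Finset (Finset V)) (σ : V → ℝ) (v : V) : Prop :=
  ∃ e ∈ E, v ∈ e ∧ ∀ w ∈ e, w ≠ v → σ w ≤ σ v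

def Blue (E : Finset (Finset V)) (p : ℝ) (σ : V → ℝ) (v : V) : Prop :=
  σ v < (1 - p)/2 ∨ (σ v ≤ (1 + p)/2 ∧ ¬ Last E σ v)

def col (E : Finset (Finset V)) (p : ℝ) (σ : V → ℝ) (v : V) : Fin 2 :=
  if Blue E p σ v then 0 else 1

def B1 (E : Finset (Finset V)) (p : ℝ) : Set (V → ℝ) :=
  ⋃ e ∈ E, {x | ∀ v ∈ e, x v < (1 - p)/2}

def B2 (E : Finset (Finset V)) (p : ℝ) : Set (V → ℝ) :=
  ⋃ e ∈ E, {x | ∀ v ∈ e, (1 + p)/2 < x v}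

def Ties (V : Type) [Fintype V] : Set (V → ℝ) :=
  ⋃ (u : V), ⋃ (z : V), ⋃ (_ : u ≠ z), {x | x u = x z}

def D (p : ℝ) (e f : Finset V) : Set (V → ℝ) :=
  {x | ∃ u, e ∩ f = {u} ∧ (1 - p)/2 ≤ x u ∧ x u ≤ (1 + p)/2 ∧
    (∀ w ∈ e, w ≠ u → x w ≤ x u) ∧ (∀ w ∈ f, w ≠ u → x u ≤ x w)}

def B3 (E : Finset (Finset V)) (p : ℝ) : Set (V → ℝ) :=
  ⋃ e ∈ E, ⋃ f ∈ E, D p e f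

/-! ### A good sample yields a proper coloring -/

theorem good_coloring (E : Finset (Finset V)) (p : ℝ) (σ : V → ℝ)
    (hE : ∀ e ∈ E, e.Nonempty)
    (h : σ ∉ B1 E p ∪ B2 E p ∪ B3 E p ∪ Ties V) :
    ∀ e ∈ E, ∃ u ∈ e, ∃ v ∈ e, col E p σ u ≠ col E p σ v := by
  simp only [Set.mem_union, not_or] at h
  obtain ⟨⟨⟨h1, h2⟩, h3⟩, h4⟩ := h
  intro e he
  by_contra hcon
  push_neg at hcon
  obtain ⟨v0, hv0⟩ := hE e he
  obtain ⟨v, hv, hvmax⟩ := e.exists_max_image σ ⟨v0, hv0⟩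
  obtain ⟨u, hu, humin⟩ := e.exists_min_image σ ⟨v0, hv0⟩
  have hlast : Last E σ v := ⟨e, he, hv, fun w hw _ => hvmax w hw⟩
  by_cases hb : Blue E p σ v
  · have hvlt : σ v < (1 - p)/2 := by
      rcases hb with h' | ⟨_, hnl⟩
      · exact h'
      · exact absurd hlast hnl
    exact h1 (Set.mem_biUnion he (fun w hw => lt_of_le_of_lt (hvmax w hw) hvlt))
  · have hured : ¬ Blue E p σ u := by
      intro hbu
      have := hcon u hu v hv
      simp only [col, if_pos hbu, if_neg hb] at this
      exact absurd this (by decide)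
    rw [Blue, not_or, not_lt, not_and_or, not_not, not_le] at hured
    obtain ⟨hq, hc2⟩ := hured
    by_cases hband : σ u ≤ (1 + p)/2
    · have hlastu : Last E σ u := by
        rcases hc2 with h' | hl
        · linarith
        · exact hl
      obtain ⟨e', he', hue', hcmp⟩ := hlastu
      by_cases htie : ∃ z ∈ e' ∩ e, z ≠ u
      · obtain ⟨z, hz, hzu⟩ := htie
        rw [Finset.mem_inter] at hz
        have : σ z = σ u := le_antisymm (hcmp z hz.1 hzu) (humin z hz.2)
        exact h4 (Set.mem_iUnion.2 ⟨z, Set.mem_iUnion.2 ⟨u, Set.mem_iUnion.2 ⟨hzu, this⟩⟩⟩)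
      · push_neg at htie
        have hsing : e' ∩ e = {u} := by
          apply Finset.Subset.antisymm
          · intro z hz
            rw [Finset.mem_singleton]
            exact htie z hz
          · intro z hz
            rw [Finset.mem_singleton] at hz
            subst hz
            exact Finset.mem_inter.2 ⟨hue', hu⟩
        refine h3 (Set.mem_biUnion he' (Set.mem_biUnion he ?_))
        exact ⟨u, hsing, hq, hband, hcmp, fun w hw hwu => humin w hw⟩
    · push_neg at hband
      exact h2 (Set.mem_biUnion he (fun w hw => lt_of_lt_of_le hband (humin w hw)))

/-! ### Measure bounds for the bad events -/

lemma μ_B1_le (E : Finset (Finset V)) (p : ℝ) (n : ℕ) (hcard : ∀ e ∈ E, e.card = n)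
    (hp1 : p ≤ 1) :
    μ V (B1 E p) ≤ ENNReal.ofReal ((E.card : ℝ) * ((1 - p)/2)^n) := by
  have hq0 : (0:ℝ) ≤ (1 - p)/2 := by linarith
  refine le_trans (measure_biUnion_finset_le _ _) ?_
  have per : ∀ e ∈ E, μ V {x : V → ℝ | ∀ v ∈ e, x v < (1 - p)/2}
      ≤ ENNReal.ofReal (((1 - p)/2)^n) := by
    intro e he
    refine le_trans (μ_mem_le e (fun _ => Set.Iio ((1 - p)/2)) _ (fun x hx v hv => hx v hv)) ?_
    refine le_trans (Finset.prod_le_prod' fun v _ => ν_Iio _) ?_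
    rw [Finset.prod_const, hcard e he, ENNReal.ofReal_pow hq0]
  refine le_trans (Finset.sum_le_sum per) ?_
  rw [Finset.sum_const, nsmul_eq_mul, ← ENNReal.ofReal_natCast,
    ← ENNReal.ofReal_mul (Nat.cast_nonneg _)]

lemma μ_B2_le (E : Finset (Finset V)) (p : ℝ) (n : ℕ) (hcard : ∀ e ∈ E, e.card = n)
    (hp1 : p ≤ 1) :
    μ V (B2 E p) ≤ ENNReal.ofReal ((E.card : ℝ) * ((1 - p)/2)^n) := by
  have hq0 : (0:ℝ) ≤ (1 - p)/2 := by linarith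
  refine le_trans (measure_biUnion_finset_le _ _) ?_
  have per : ∀ e ∈ E, μ V {x : V → ℝ | ∀ v ∈ e, (1 + p)/2 < x v}
      ≤ ENNReal.ofReal (((1 - p)/2)^n) := by
    intro e he
    refine le_trans (μ_mem_le e (fun _ => Set.Ioi ((1 + p)/2)) _ (fun x hx v hv => hx v hv)) ?_
    refine le_trans (Finset.prod_le_prod' fun v _ => ν_Ioi _) ?_
    rw [Finset.prod_const, hcard e he]
    rw [show (1:ℝ) - (1 + p)/2 = (1 - p)/2 by ring, ENNReal.ofReal_pow hq0]
  refine le_trans (Finset.sum_le_sum per) ?_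
  rw [Finset.sum_const, nsmul_eq_mul, ← ENNReal.ofReal_natCast,
    ← ENNReal.ofReal_mul (Nat.cast_nonneg _)]

lemma μ_D_le (n : ℕ) (p δ : ℝ) (K : ℕ) (e f : Finset V)
    (hcarde : e.card = n) (hcardf : f.card = n)
    (hp1 : p ≤ 1) (hδ : 0 ≤ δ) (hK : K ≠ 0) (hKδ : (K:ℝ) * δ = p) :
    μ V (D p e f) ≤ K * ENNReal.ofReal (δ * ((1:ℝ)/4 + δ)^(n-1)) := by
  by_cases hef : ∃ u, e ∩ f = {u}
  · obtain ⟨u, hu⟩ := hef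
    have hue : u ∈ e := Finset.mem_of_mem_inter_left (hu ▸ Finset.mem_singleton_self u)
    have huf : u ∈ f := Finset.mem_of_mem_inter_right (hu ▸ Finset.mem_singleton_self u)
    set q : ℝ := (1 - p)/2 with hq
    have hq0 : 0 ≤ q := by rw [hq]; linarith
    have hcover : D p e f ⊆ ⋃ i ∈ Finset.range K,
        {x : V → ℝ | (q + i*δ ≤ x u ∧ x u ≤ q + i*δ + δ) ∧
          (∀ w ∈ e, w ≠ u → x w ≤ q + i*δ + δ) ∧ (∀ w ∈ f, w ≠ u → q + i*δ ≤ x w)} := by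
      rintro x ⟨u', hu', hb1, hb2, hce, hcf⟩
      have huu : u' = u := by
        rw [hu] at hu'
        exact (Finset.singleton_injective hu').symm ▸ rfl
      subst huu
      obtain ⟨i, hi, h1, h2⟩ :=
        exists_subinterval q δ K hK (x u') hb1 (by rw [hKδ]; rw [hq]; linarith)
      refine Set.mem_biUnion (Finset.mem_range.2 hi) ?_
      exact ⟨⟨h1, h2⟩, fun w hw hwu => le_trans (hce w hw hwu) h2,
        fun w hw hwu => le_trans h1 (hcf w hw hwu)⟩
    refine le_trans (le_trans (measure_mono hcover) (measure_biUnion_finset_le _ _)) ?_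
    refine le_trans (Finset.sum_le_sum (fun i hi => ?_))
      (le_of_eq (by rw [Finset.sum_const, Finset.card_range, nsmul_eq_mul]))
    rw [Finset.mem_range] at hi
    set a : ℝ := q + i*δ with ha
    have ha0 : 0 ≤ a := by positivity
    have haδ : a + δ ≤ 1 := by
      have h' : ((i:ℝ)+1) * δ ≤ K * δ := by
        apply mul_le_mul_of_nonneg_right _ hδ
        exact_mod_cast hi
      have h'' : q + ((i:ℝ)+1)*δ ≤ q + K*δ := by linarith
      rw [hKδ] at h''
      rw [ha]
      rw [hq] at h'' ⊢
      linarith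
    have ha1 : a ≤ 1 := by linarith
    have hdisj : Disjoint (e.erase u) (f.erase u) := by
      rw [Finset.disjoint_left]
      intro z hz1 hz2
      have : z ∈ e ∩ f :=
        Finset.mem_inter.2 ⟨Finset.mem_of_mem_erase hz1, Finset.mem_of_mem_erase hz2⟩
      rw [hu, Finset.mem_singleton] at this
      exact (Finset.ne_of_mem_erase hz1) this
    have hnotin : u ∉ e.erase u ∪ f.erase u := by simp [Finset.mem_union]
    set T : V → Set ℝ := fun v => if v = u then Set.Icc a (a + δ) else
      if v ∈ e then Set.Iic (a + δ) else Set.Ici a with hT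
    refine le_trans (μ_mem_le (insert u (e.erase u ∪ f.erase u)) T _ ?_) ?_
    · rintro x ⟨⟨hx1, hx2⟩, hxe, hxf⟩ v hv
      rw [Finset.mem_insert] at hv
      rcases hv with rfl | hv
      · simp only [hT, if_pos rfl]
        exact ⟨hx1, hx2⟩
      · rw [Finset.mem_union] at hv
        have hvu : v ≠ u := by
          rcases hv with h | h <;> exact Finset.ne_of_mem_erase h
        rcases hv with h | h
        · simp only [hT, if_neg hvu, if_pos (Finset.mem_of_mem_erase h)]
          exact hxe v (Finset.mem_of_mem_erase h) hvu
        · have hvnote : v ∉ e := by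
            intro hve
            have : v ∈ e ∩ f := Finset.mem_inter.2 ⟨hve, Finset.mem_of_mem_erase h⟩
            rw [hu, Finset.mem_singleton] at this
            exact hvu this
          simp only [hT, if_neg hvu, if_neg hvnote]
          exact hxf v (Finset.mem_of_mem_erase h) hvu
    · rw [Finset.prod_insert hnotin, Finset.prod_union hdisj]
      have h1 : ν (T u) ≤ ENNReal.ofReal δ := by
        simp only [hT, if_pos rfl]
        refine le_trans (ν_Icc a (a+δ)) (le_of_eq (by ring_nf))
      have h2 : ∏ v ∈ e.erase u, ν (T v) ≤ ENNReal.ofReal (a + δ) ^ (n-1) := by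
        rw [← hcarde, ← Finset.card_erase_of_mem hue, ← Finset.prod_const]
        refine Finset.prod_le_prod' fun v hv => ?_
        simp only [hT, if_neg (Finset.ne_of_mem_erase hv), if_pos (Finset.mem_of_mem_erase hv)]
        exact ν_Iic _
      have h3 : ∏ v ∈ f.erase u, ν (T v) ≤ ENNReal.ofReal (1 - a) ^ (n-1) := by
        rw [← hcardf, ← Finset.card_erase_of_mem huf, ← Finset.prod_const]
        refine Finset.prod_le_prod' fun v hv => ?_
        have hvu := Finset.ne_of_mem_erase hv
        have hvnote : v ∉ e := by
          intro hve
          have : v ∈ e ∩ f := Finset.mem_inter.2 ⟨hve, Finset.mem_of_mem_erase hv⟩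
          rw [hu, Finset.mem_singleton] at this
          exact hvu this
        simp only [hT, if_neg hvu, if_neg hvnote]
        exact ν_Ici _
      refine le_trans (mul_le_mul' h1 (mul_le_mul' h2 h3)) ?_
      have hand : (0:ℝ) ≤ a + δ := by linarith
      have h1a : (0:ℝ) ≤ 1 - a := by linarith
      rw [← ENNReal.ofReal_pow hand, ← ENNReal.ofReal_pow h1a,
        ← ENNReal.ofReal_mul (pow_nonneg hand _), ← ENNReal.ofReal_mul hδ]
      apply ENNReal.ofReal_le_ofReal
      rw [← mul_pow]
      have key : (a + δ) * (1 - a) ≤ 1/4 + δ := by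
        nlinarith [sq_nonneg (a - 1/2), mul_nonneg ha0 hδ]
      have hnn : 0 ≤ (a + δ) * (1 - a) := by nlinarith
      exact mul_le_mul_of_nonneg_left (pow_le_pow_left₀ hnn key _) hδ
  · have : D p e f = ∅ := by
      rw [Set.eq_empty_iff_forall_notMem]
      rintro x ⟨u, hu, _⟩
      exact hef ⟨u, hu⟩
    rw [this]
    simp

lemma μ_B3_le (E : Finset (Finset V)) (n : ℕ) (p δ : ℝ) (K : ℕ)
    (hcard : ∀ e ∈ E, e.card = n)
    (hp1 : p ≤ 1) (hδ : 0 ≤ δ) (hK : K ≠ 0) (hKδ : (K:ℝ) * δ = p) :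
    μ V (B3 E p) ≤
      ENNReal.ofReal ((E.card : ℝ) * (E.card : ℝ) * (K * (δ * ((1:ℝ)/4 + δ)^(n-1)))) := by
  refine le_trans (measure_biUnion_finset_le _ _) ?_
  have per : ∀ e ∈ E, μ V (⋃ f ∈ E, D p e f)
      ≤ (E.card : ℝ≥0∞) * ((K : ℝ≥0∞) * ENNReal.ofReal (δ * ((1:ℝ)/4 + δ)^(n-1))) := by
    intro e he
    refine le_trans (measure_biUnion_finset_le _ _) ?_
    refine le_trans (Finset.sum_le_sum (fun f hf =>
      μ_D_le n p δ K e f (hcard e he) (hcard f hf) hp1 hδ hK hKδ)) ?_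
    rw [Finset.sum_const, nsmul_eq_mul]
  refine le_trans (Finset.sum_le_sum per) ?_
  rw [Finset.sum_const, nsmul_eq_mul]
  have hδ4 : (0:ℝ) ≤ δ * ((1:ℝ)/4 + δ)^(n-1) := by positivity
  rw [← ENNReal.ofReal_natCast E.card, ← ENNReal.ofReal_natCast K,
    ← ENNReal.ofReal_mul (Nat.cast_nonneg _), ← ENNReal.ofReal_mul (Nat.cast_nonneg _),
    ← ENNReal.ofReal_mul (Nat.cast_nonneg _)]
  apply ENNReal.ofReal_le_ofReal
  rw [mul_assoc]

lemma ties_pair_zero (u z : V) (huz : u ≠ z) : μ V {x | x u = x z} = 0 := by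
  by_contra h0
  obtain ⟨K, hK⟩ := ENNReal.exists_inv_nat_lt h0
  have hKpos : 0 < K := by
    rcases Nat.eq_zero_or_pos K with h | h
    · subst h
      rw [Nat.cast_zero, ENNReal.inv_zero] at hK
      exact absurd (hK.trans_le le_top) (lt_irrefl _)
    · exact h
  have hKR : (0:ℝ) < K := by exact_mod_cast hKpos
  have hcover : {x : V → ℝ | x u = x z} ⊆
      {x : V → ℝ | x u ∈ (Set.Icc 0 1)ᶜ} ∪
        ⋃ i ∈ Finset.range K, {x : V → ℝ | x u ∈ Set.Icc ((i:ℝ)/K) ((i+1)/K) ∧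
          x z ∈ Set.Icc ((i:ℝ)/K) ((i+1)/K)} := by
    intro x hx
    by_cases hcube : x u ∈ Set.Icc (0:ℝ) 1
    · obtain ⟨i, hi, h1, h2⟩ := exists_subinterval 0 (1/K) K hKpos.ne'
        (x u) hcube.1 (by rw [mul_one_div, div_self hKR.ne']; simpa using hcube.2)
      refine Or.inr (Set.mem_biUnion (Finset.mem_range.2 hi) ?_)
      have hb1 : (i:ℝ)/K ≤ x u := by rw [div_eq_mul_one_div]; linarith
      have hb2 : x u ≤ ((i:ℝ)+1)/K := by rw [add_div, div_eq_mul_one_div]; linarith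
      exact ⟨⟨hb1, hb2⟩, by rw [← hx]; exact hb1, by rw [← hx]; exact hb2⟩
    · exact Or.inl hcube
  refine absurd hK (not_lt.2 ?_)
  calc μ V {x : V → ℝ | x u = x z}
      ≤ μ V {x : V → ℝ | x u ∈ (Set.Icc 0 1)ᶜ} +
        ∑ i ∈ Finset.range K, μ V {x : V → ℝ | x u ∈ Set.Icc ((i:ℝ)/K) ((i+1)/K) ∧
          x z ∈ Set.Icc ((i:ℝ)/K) ((i+1)/K)} := by
        refine le_trans (measure_mono hcover) (le_trans (measure_union_le _ _) ?_)
        exact add_le_add (le_refl _) (measure_biUnion_finset_le _ _)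
    _ ≤ 0 + ∑ i ∈ Finset.range K, ENNReal.ofReal ((1:ℝ)/K) * ENNReal.ofReal ((1:ℝ)/K) := by
        refine add_le_add ?_ (Finset.sum_le_sum fun i _ => ?_)
        · refine le_of_eq (le_antisymm ?_ zero_le)
          refine le_trans (μ_mem_le {u} (fun _ => (Set.Icc 0 1)ᶜ) _ ?_) ?_
          · intro x hx v hv
            rw [Finset.mem_singleton] at hv; subst hv; exact hx
          · rw [Finset.prod_singleton, ν_compl_Icc]
        · refine le_trans (μ_mem_le {u, z} (fun _ => Set.Icc ((i:ℝ)/K) ((i+1)/K)) _ ?_) ?_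
          · intro x hx v hv
            rw [Finset.mem_insert, Finset.mem_singleton] at hv
            rcases hv with rfl | rfl
            · exact hx.1
            · exact hx.2
          · rw [Finset.prod_pair huz]
            have := ν_Icc ((i:ℝ)/K) ((i+1)/K)
            have heq : ((i:ℝ)+1)/K - (i:ℝ)/K = (1:ℝ)/K := by field_simp; ring
            rw [heq] at this
            exact mul_le_mul' this this
    _ ≤ (K:ℝ≥0∞)⁻¹ := by
        rw [zero_add, Finset.sum_const, Finset.card_range, nsmul_eq_mul,
          ← ENNReal.ofReal_mul (by positivity), ← ENNReal.ofReal_natCast K,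
          ← ENNReal.ofReal_mul (by positivity)]
        rw [← ENNReal.ofReal_inv_of_pos hKR]
        apply ENNReal.ofReal_le_ofReal
        rw [one_div, ← mul_assoc, mul_inv_cancel₀ hKR.ne', one_mul]

omit [DecidableEq V] in
lemma ties_zero : μ V (Ties V) = 0 := by
  classical
  refine le_antisymm ?_ zero_le
  refine le_trans (measure_iUnion_le _) ?_
  simp only [nonpos_iff_eq_zero, ENNReal.tsum_eq_zero]
  intro u
  refine le_antisymm ?_ zero_le
  refine le_trans (measure_iUnion_le _) ?_
  simp only [nonpos_iff_eq_zero, ENNReal.tsum_eq_zero]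
  intro z
  rcases eq_or_ne u z with rfl | huz
  · simp
  · rw [Set.iUnion_eq_if, if_pos huz]
    exact ties_pair_zero u z huz

/-! ### The key finite lemma -/

theorem key_lemma (n : ℕ) (hn : 1 ≤ n) (p δ : ℝ) (K : ℕ)
    (hp1 : p ≤ 1) (hδ : 0 ≤ δ) (hK : K ≠ 0) (hKδ : (K:ℝ) * δ = p)
    (E : Finset (Finset V)) (hcard : ∀ e ∈ E, e.card = n)
    (hlt : 2 * (E.card:ℝ) * ((1 - p)/2)^n +
      (E.card:ℝ) * (E.card:ℝ) * (K * (δ * ((1:ℝ)/4 + δ)^(n-1))) < 1) :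
    ∃ c : V → Fin 2, ∀ e ∈ E, ∃ u ∈ e, ∃ v ∈ e, c u ≠ c v := by
  set Bad : Set (V → ℝ) := B1 E p ∪ B2 E p ∪ B3 E p ∪ Ties V with hBad
  have hμBad : μ V Bad < 1 := by
    have h1 := μ_B1_le E p n hcard hp1
    have h2 := μ_B2_le E p n hcard hp1
    have h3 := μ_B3_le E n p δ K hcard hp1 hδ hK hKδ
    have h4 : μ V (Ties V) = 0 := ties_zero
    calc μ V Bad ≤ μ V (B1 E p ∪ B2 E p ∪ B3 E p) + μ V (Ties V) := measure_union_le _ _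
      _ ≤ (μ V (B1 E p ∪ B2 E p) + μ V (B3 E p)) + 0 :=
          add_le_add (measure_union_le _ _) (le_of_eq h4)
      _ ≤ (μ V (B1 E p) + μ V (B2 E p)) + μ V (B3 E p) + 0 :=
          add_le_add (add_le_add (measure_union_le _ _) (le_refl _)) (le_refl _)
      _ ≤ (ENNReal.ofReal ((E.card : ℝ) * ((1 - p)/2)^n) +
            ENNReal.ofReal ((E.card : ℝ) * ((1 - p)/2)^n)) +
          ENNReal.ofReal ((E.card : ℝ) * (E.card : ℝ) * (K * (δ * ((1:ℝ)/4 + δ)^(n-1)))) + 0 :=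
          add_le_add (add_le_add (add_le_add h1 h2) h3) (le_refl _)
      _ < 1 := by
          have hq0 : (0:ℝ) ≤ (1 - p)/2 := by linarith
          have hA : (0:ℝ) ≤ (E.card : ℝ) * ((1 - p)/2)^n :=
            mul_nonneg (Nat.cast_nonneg _) (pow_nonneg hq0 _)
          have hB : (0:ℝ) ≤ (E.card : ℝ) * (E.card : ℝ) * (K * (δ * ((1:ℝ)/4 + δ)^(n-1))) := by
            positivity
          rw [add_zero, ← ENNReal.ofReal_add hA hA, ← ENNReal.ofReal_add (by linarith) hB]
          apply ENNReal.ofReal_lt_one.2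
          linarith
  have hne : Bad ≠ Set.univ := by
    intro h
    rw [h, measure_univ] at hμBad
    exact absurd hμBad (lt_irrefl _)
  obtain ⟨σ, hσ⟩ := (Set.ne_univ_iff_exists_notMem Bad).1 hne
  refine ⟨col E p σ, good_coloring E p σ (fun e he => Finset.card_pos.1 ?_) hσ⟩
  rw [hcard e he]
  exact hn

end RGTC
end


/-- An `n`-uniform hypergraph given by its edge set `E` (a finite family of
`n`-element finite subsets of the vertex set `V`) is `r`-colorable if there is a
coloring of the vertices with `r` colors under which no edge is monochromatic. -/
def IsRColorable {V : Type*} (r : ℕ) (E : Finset (Finset V)) : Prop :=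
  ∃ c : V → Fin r, ∀ e ∈ E, ∃ u ∈ e, ∃ v ∈ e, c u ≠ c v

open MeasureTheory Set Filter Topology
open Asymptotics

set_option maxHeartbeats 2000000 in
/-- For every real `c` with `0 < c < √2` there exists `N` such that for all `n ≥ N`,
every `n`-uniform hypergraph with at most `c·√(n/ln n)·2^(n-1)` edges is 2-colorable. -/
theorem random_greedy_two_coloring (c : ℝ) (hc0 : 0 < c) (hc : c < Real.sqrt 2) :
    ∃ N : ℕ, ∀ n : ℕ, N ≤ n →
      ∀ (V : Type) (E : Finset (Finset V)),
        (∀ e ∈ E, e.card = n) →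
        (E.card : ℝ) ≤ c * Real.sqrt ((n : ℝ) / Real.log n) * 2 ^ (n - 1) →
        IsRColorable 2 E := by
  classical
  have hc2 : c^2 < 2 := by
    have := Real.sq_sqrt (by norm_num : (0:ℝ) ≤ 2)
    nlinarith [Real.sqrt_nonneg 2]
  set α : ℝ := 1/4 + 1/(2*c^2) with hα
  have hcsq : 0 < c^2 := by positivity
  have hα0 : 0 < α := by positivity
  have hαhalf : 1/2 < α := by
    have h4 : (1:ℝ)/4 < 1/(2*c^2) := by
      rw [div_lt_div_iff₀ (by norm_num) (by positivity)]
      nlinarith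
    rw [hα]; linarith
  have hαval : c^2 * α = c^2/4 + 1/2 := by
    rw [hα]; field_simp
  have hcα : c^2 * α < 1 := by rw [hαval]; linarith
  set ε : ℝ := 1 - c^2*α with hε
  have hε0 : 0 < ε := by rw [hε]; linarith
  -- the eventual conditions
  have htlog : Tendsto (fun n:ℕ => Real.log n / (n:ℝ)) atTop (𝓝 0) :=
    (Real.isLittleO_log_id_atTop.tendsto_div_nhds_zero).comp tendsto_natCast_atTop_atTop
  have ev1 : ∀ᶠ n:ℕ in atTop, α * (Real.log n / (n:ℝ)) < 1 := by
    have : Tendsto (fun n:ℕ => α * (Real.log n / (n:ℝ))) atTop (𝓝 (α * 0)) :=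
      htlog.const_mul α
    rw [mul_zero] at this
    exact this.eventually_lt_const (by norm_num)
  have ev2 : ∀ᶠ n:ℕ in atTop, c * (n:ℝ)^((1:ℝ)/2 - α) < ε/2 := by
    have h1 : Tendsto (fun x:ℝ => x^(-(α - 1/2))) atTop (𝓝 0) :=
      tendsto_rpow_neg_atTop (by linarith)
    have h3 := (h1.comp (tendsto_natCast_atTop_atTop (R := ℝ))).const_mul c
    have heq : -(α - 1/2) = 1/2 - α := by ring
    simp only [Function.comp, heq, mul_zero] at h3
    exact h3.eventually_lt_const (by positivity)
  have ev3 : ∀ᶠ n:ℕ in atTop,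
      c^2*α * Real.exp (4*α*(Real.log n/(n:ℝ)^2)) < c^2*α + ε/2 := by
    have hsq : Tendsto (fun n:ℕ => Real.log n / (n:ℝ)^2) atTop (𝓝 0) := by
      have h1 : Tendsto (fun x:ℝ => Real.log x / x^(2:ℝ)) atTop (𝓝 0) :=
        (isLittleO_log_rpow_atTop (by norm_num : (0:ℝ) < 2)).tendsto_div_nhds_zero
      have h2 := h1.comp (tendsto_natCast_atTop_atTop (R := ℝ))
      refine h2.congr' ?_
      filter_upwards [eventually_ge_atTop 1] with n hn
      have : ((n:ℝ))^(2:ℝ) = (n:ℝ)^2 := by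
        rw [show (2:ℝ) = ((2:ℕ):ℝ) by norm_num, Real.rpow_natCast]
      simp [Function.comp, this]
    have h3 : Tendsto (fun n:ℕ => c^2*α * Real.exp (4*α*(Real.log n/(n:ℝ)^2)))
        atTop (𝓝 (c^2*α * Real.exp (4*α*0))) := by
      refine Tendsto.const_mul _ ?_
      exact (Real.continuous_exp.tendsto _).comp (hsq.const_mul (4*α))
    rw [mul_zero, Real.exp_zero, mul_one] at h3
    exact h3.eventually_lt_const (by linarith)
  obtain ⟨N, hN⟩ := eventually_atTop.1 ((ev1.and ev2).and (ev3.and (eventually_ge_atTop 3)))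
  refine ⟨N, fun n hn V E hcard hsize => ?_⟩
  obtain ⟨⟨hev1, hev2⟩, hev3, hn3⟩ := hN n hn
  -- basic positivity facts
  have hn0 : (0:ℝ) < n := by
    have : (3:ℝ) ≤ n := by exact_mod_cast hn3
    linarith
  have hn1 : 1 ≤ n := le_trans (by norm_num) hn3
  have hlog1 : 1 ≤ Real.log n := by
    have h3 : Real.exp 1 ≤ 3 := by
      have := Real.exp_one_lt_d9
      linarith
    have : (1:ℝ) ≤ Real.log 3 := (Real.le_log_iff_exp_le (by norm_num)).2 h3
    refine le_trans this (Real.log_le_log (by norm_num) ?_)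
    exact_mod_cast hn3
  have hlog0 : 0 < Real.log n := by linarith
  set p : ℝ := α * Real.log n / n with hp
  set δ : ℝ := p / (n:ℝ)^2 with hδdef
  set K : ℕ := n^2 with hKdef
  have hp0 : 0 < p := by rw [hp]; positivity
  have hp1 : p ≤ 1 := by
    rw [hp, mul_div_assoc]
    exact (hev1).le
  have hδ0 : 0 ≤ δ := by rw [hδdef]; positivity
  have hKne : K ≠ 0 := by simp [hKdef]; omega
  have hKδ : (K:ℝ) * δ = p := by
    rw [hKdef, hδdef]
    push_cast
    field_simp
  -- reduce to the finite vertex set W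
  set W : Finset V := E.biUnion id with hW
  have hsubW : ∀ e ∈ E, e ⊆ W := by
    intro e he v hv
    exact Finset.mem_biUnion.2 ⟨e, he, hv⟩
  set E' : Finset (Finset ↥W) := E.image (fun e => e.subtype (· ∈ W)) with hE'
  have hcard' : ∀ e' ∈ E', e'.card = n := by
    intro e' he'
    obtain ⟨e, he, rfl⟩ := Finset.mem_image.1 he'
    rw [Finset.card_subtype, Finset.filter_true_of_mem (fun v hv => hsubW e he hv)]
    exact hcard e he
  have hm'm : (E'.card : ℝ) ≤ (E.card : ℝ) := by
    exact_mod_cast Finset.card_image_le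
  -- the main numeric inequality
  set m : ℝ := (E'.card : ℝ) with hm
  have hm0 : 0 ≤ m := Nat.cast_nonneg _
  set s : ℝ := Real.sqrt ((n:ℝ)/Real.log n) with hs
  set M : ℝ := c * s * 2^(n-1) with hM
  have hmM : m ≤ M := le_trans hm'm hsize
  have hs0 : 0 ≤ s := Real.sqrt_nonneg _
  have hs2 : s^2 = (n:ℝ)/Real.log n := Real.sq_sqrt (by positivity)
  have hq0 : (0:ℝ) ≤ (1-p)/2 := by linarith
  have h2n : (2:ℝ)^n = 2^(n-1) * 2 := by
    rw [← pow_succ]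
    congr 1
    omega
  have hlt : 2 * m * ((1 - p)/2)^n + m * m * ((K:ℝ) * (δ * ((1:ℝ)/4 + δ)^(n-1))) < 1 := by
    have hX0 : (0:ℝ) ≤ ((1-p)/2)^n := pow_nonneg hq0 _
    have hY0 : (0:ℝ) ≤ (K:ℝ) * (δ * ((1:ℝ)/4 + δ)^(n-1)) := by positivity
    -- term 1
    have t1 : 2 * m * ((1 - p)/2)^n ≤ c * s * (1-p)^n := by
      have step : 2 * M * ((1 - p)/2)^n = c * s * (1-p)^n := by
        rw [hM, div_pow]
        rw [show 2 * (c * s * 2^(n-1)) * ((1-p)^n / 2^n)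
          = c * s * ((2^(n-1) * 2) * ((1-p)^n / 2^n)) by ring, ← h2n]
        rw [mul_div_cancel₀ _ (by positivity : ((2:ℝ)^n) ≠ 0)]
      rw [← step]
      gcongr
    have t1b : c * s * (1-p)^n ≤ c * (n:ℝ)^((1:ℝ)/2 - α) := by
      have hsn : s ≤ Real.sqrt n := by
        rw [hs]
        apply Real.sqrt_le_sqrt
        exact div_le_self hn0.le hlog1
      have hexp : (1-p)^n ≤ Real.exp (-p) ^ n := by
        apply pow_le_pow_left₀ (by linarith)
        have := Real.add_one_le_exp (-p)
        linarith
      have hchain : c * s * (1-p)^n ≤ c * Real.sqrt n * Real.exp (-p) ^ n := by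
        gcongr
      refine le_trans hchain (le_of_eq ?_)
      rw [← Real.exp_nat_mul]
      have hpn : (n:ℝ) * (-p) = -(α * Real.log n) := by
        rw [hp]
        field_simp
      rw [hpn]
      have hrpow : Real.exp (-(α * Real.log n)) = (n:ℝ)^(-α) := by
        rw [Real.rpow_def_of_pos hn0]
        congr 1
        ring
      rw [hrpow, Real.sqrt_eq_rpow, mul_assoc, ← Real.rpow_add hn0]
      rw [show (1:ℝ)/2 + -α = 1/2 - α by ring]
    -- term 2
    have t2 : m * m * ((K:ℝ) * (δ * ((1:ℝ)/4 + δ)^(n-1)))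
        ≤ c^2*α * Real.exp (4*α*(Real.log n/(n:ℝ)^2)) := by
      have step : M * M * ((K:ℝ) * (δ * ((1:ℝ)/4 + δ)^(n-1)))
          = c^2*α * (1 + 4*δ)^(n-1) := by
        have h4 : (2:ℝ)^(n-1) * 2^(n-1) = 4^(n-1) := by
          rw [← mul_pow]; norm_num
        have hMM : M * M = c^2 * ((n:ℝ)/Real.log n) * 4^(n-1) := by
          rw [hM]
          calc c * s * 2^(n-1) * (c * s * 2^(n-1))
              = c^2 * s^2 * (2^(n-1) * 2^(n-1)) := by ring
            _ = c^2 * ((n:ℝ)/Real.log n) * 4^(n-1) := by rw [hs2, h4]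
        have hassoc : (K:ℝ) * (δ * ((1:ℝ)/4 + δ)^(n-1)) = p * ((1:ℝ)/4 + δ)^(n-1) := by
          rw [← hKδ]; ring
        rw [hMM, hassoc]
        have hα' : ((n:ℝ)/Real.log n) * p = α := by
          rw [hp]
          field_simp
        calc c^2 * ((n:ℝ)/Real.log n) * 4^(n-1) * (p * ((1:ℝ)/4 + δ)^(n-1))
            = c^2 * (((n:ℝ)/Real.log n) * p) * (4^(n-1) * ((1:ℝ)/4 + δ)^(n-1)) := by ring
          _ = c^2 * α * ((4 * ((1:ℝ)/4 + δ))^(n-1)) := by rw [hα', mul_pow]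
          _ = c^2*α * (1 + 4*δ)^(n-1) := by ring_nf
        -- end step
      have t2a : m * m * ((K:ℝ) * (δ * ((1:ℝ)/4 + δ)^(n-1)))
          ≤ M * M * ((K:ℝ) * (δ * ((1:ℝ)/4 + δ)^(n-1))) := by
        gcongr
      rw [step] at t2a
      refine le_trans t2a ?_
      have hexp2 : (1 + 4*δ)^(n-1) ≤ Real.exp (4*α*(Real.log n/(n:ℝ)^2)) := by
        have e1 : (1 + 4*δ)^(n-1) ≤ Real.exp (4*δ)^(n-1) := by
          apply pow_le_pow_left₀ (by linarith)
          have := Real.add_one_le_exp (4*δ)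
          linarith
        have e2 : Real.exp (4*δ)^(n-1) = Real.exp (((n-1:ℕ):ℝ) * (4*δ)) := by
          rw [← Real.exp_nat_mul]
        have e3 : ((n-1:ℕ):ℝ) * (4*δ) ≤ 4*α*(Real.log n/(n:ℝ)^2) := by
          have hcast : ((n-1:ℕ):ℝ) ≤ (n:ℝ) := by
            exact_mod_cast Nat.sub_le n 1
          have hδval : δ = α * Real.log n / (n:ℝ)^3 := by
            rw [hδdef, hp]
            field_simp
          have : ((n-1:ℕ):ℝ) * (4*δ) ≤ (n:ℝ) * (4*δ) := by
            apply mul_le_mul_of_nonneg_right hcast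
            linarith
          refine le_trans this (le_of_eq ?_)
          rw [hδval]
          field_simp
        calc (1 + 4*δ)^(n-1) ≤ Real.exp (4*δ)^(n-1) := e1
          _ = Real.exp (((n-1:ℕ):ℝ) * (4*δ)) := e2
          _ ≤ Real.exp (4*α*(Real.log n/(n:ℝ)^2)) := Real.exp_le_exp.2 e3
      calc c^2*α * (1 + 4*δ)^(n-1)
          ≤ c^2*α * Real.exp (4*α*(Real.log n/(n:ℝ)^2)) := by
            apply mul_le_mul_of_nonneg_left hexp2 (by positivity)
        _ ≤ _ := le_refl _
    calc 2 * m * ((1 - p)/2)^n + m * m * ((K:ℝ) * (δ * ((1:ℝ)/4 + δ)^(n-1)))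
        ≤ c * s * (1-p)^n + c^2*α * Real.exp (4*α*(Real.log n/(n:ℝ)^2)) := add_le_add t1 t2
      _ ≤ c * (n:ℝ)^((1:ℝ)/2 - α) + c^2*α * Real.exp (4*α*(Real.log n/(n:ℝ)^2)) :=
          add_le_add t1b (le_refl _)
      _ < ε/2 + (c^2*α + ε/2) := add_lt_add hev2 hev3
      _ = 1 := by rw [hε]; ring
  -- apply the key lemma
  obtain ⟨c', hc'⟩ := RGTC.key_lemma n hn1 p δ K hp1 hδ0 hKne hKδ E' hcard' hlt
  refine ⟨fun v => if h : v ∈ W then c' ⟨v, h⟩ else 0, fun e he => ?_⟩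
  obtain ⟨u', hu', v', hv', hne⟩ := hc' (e.subtype (· ∈ W)) (Finset.mem_image_of_mem _ he)
  rw [Finset.mem_subtype] at hu' hv'
  refine ⟨u'.1, hu', v'.1, hv', ?_⟩
  show (if h : ↑u' ∈ W then c' ⟨↑u', h⟩ else 0) ≠ (if h : ↑v' ∈ W then c' ⟨↑v', h⟩ else 0)
  rw [dif_pos u'.2, dif_pos v'.2]
  simpa using hne
end

section
/- Let n ≥ 2 be an integer and let k > 0 and p ∈ (0,1) be real numbers satisfying k·(1−p)^n + k²·p < 1. Then every n-uniform hypergraph with at most k·2^(n−1) edges is 2-colorable. -/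
open Finset Filter

attribute [local instance] Classical.propDecidable

section PropertyB

variable {V : Type}

def isRed (E : Finset (Finset V)) (σ : V → ℕ) (a b : ℕ) (v : V) : Prop :=
  b ≤ σ v ∨ (a ≤ σ v ∧ σ v < b ∧
    ∃ A ∈ E, v ∈ A ∧ ∀ u ∈ A, u ≠ v → ∃ _ : σ u < σ v, ¬ isRed E σ a b u)
termination_by σ v

/-- No bad events ⇒ the greedy coloring is proper. -/

theorem coloring_works (E : Finset (Finset V)) (σ : V → ℕ) (a b : ℕ)
    (Vs : Finset V) (hVs : ∀ A ∈ E, A ⊆ Vs) (hinj : Set.InjOn σ Vs)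
    (hcard : ∀ A ∈ E, A.Nonempty)
    (hlow : ¬ ∃ A ∈ E, ∀ v ∈ A, σ v < a)
    (hhigh : ¬ ∃ A ∈ E, ∀ v ∈ A, b ≤ σ v)
    (hbad2 : ¬ ∃ A ∈ E, ∃ B ∈ E, ∃ v, v ∈ A ∧ v ∈ B ∧ a ≤ σ v ∧ σ v < b ∧
      (∀ u ∈ A, u ≠ v → σ u < σ v) ∧ (∀ u ∈ B, u ≠ v → σ v < σ u)) :
    ∃ c : V → Fin 2, ∀ e ∈ E, ∃ u ∈ e, ∃ w ∈ e, c u ≠ c w := by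
  classical
  refine ⟨fun v => if isRed E σ a b v then 1 else 0, fun e he => ?_⟩
  by_contra hcon
  push_neg at hcon
  -- all vertices of e have the same color
  obtain ⟨v0, hv0⟩ := hcard e he
  by_cases hred : isRed E σ a b v0
  · -- all red: take the minimum
    have hallred : ∀ v ∈ e, isRed E σ a b v := by
      intro v hv
      by_contra hnr
      have := hcon v0 hv0 v hv
      simp [hred, hnr] at this
    obtain ⟨v, hv, hmin⟩ := e.exists_min_image σ ⟨v0, hv0⟩
    have hvb : σ v < b := by
      by_contra hb
      push_neg at hb
      exact hhigh ⟨e, he, fun u hu => le_trans hb (hmin u hu)⟩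
    have := hallred v hv
    rw [isRed] at this
    rcases this with h1 | ⟨ha, hb', A, hA, hvA, hA2⟩
    · omega
    · refine hbad2 ⟨A, hA, e, he, v, hvA, hv, ha, hb', ?_, ?_⟩
      · intro u hu hne
        obtain ⟨h, _⟩ := hA2 u hu hne
        exact h
      · intro u hu hne
        have h1 := hmin u hu
        have h2 : σ u ≠ σ v := fun hEq =>
          hne (hinj (hVs e he hu) (hVs e he hv) hEq)
        omega
  · -- all blue: take the maximum
    have hallblue : ∀ v ∈ e, ¬ isRed E σ a b v := by
      intro v hv
      by_contra hnr
      have := hcon v0 hv0 v hv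
      rcases hnr with hnr
      simp [hred, hnr] at this
    obtain ⟨v, hv, hmax⟩ := e.exists_max_image σ ⟨v0, hv0⟩
    have hva : a ≤ σ v := by
      by_contra hb
      push_neg at hb
      exact hlow ⟨e, he, fun u hu => lt_of_le_of_lt (hmax u hu) hb⟩
    have hvb : σ v < b := by
      by_contra hb
      push_neg at hb
      exact hallblue v hv (by rw [isRed]; exact Or.inl hb)
    refine hallblue v hv ?_
    rw [isRed]
    refine Or.inr ⟨hva, hvb, e, he, hv, fun u hu hne => ?_⟩
    have h1 := hmax u hu
    have h2 : σ u ≠ σ v := fun hEq => hne (hinj (hVs e he hu) (hVs e he hv) hEq)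
    exact ⟨by omega, hallblue u hu⟩

lemma count_constraints {M : ℕ} (Vs : Finset V) (S : Finset V) (hS : S ⊆ Vs)
    (t : V → Finset (Fin M)) :
    (Finset.univ.filter fun σ : ↥Vs → Fin M => ∀ x : ↥Vs, ↑x ∈ S → σ x ∈ t ↑x).card
      = (∏ v ∈ S, (t v).card) * M ^ (Vs.card - S.card) := by
  classical
  have hfil : (Finset.univ.filter fun σ : ↥Vs → Fin M => ∀ x : ↥Vs, ↑x ∈ S → σ x ∈ t ↑x)
      = Fintype.piFinset (fun x : ↥Vs => if (↑x : V) ∈ S then t ↑x else Finset.univ) := by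
    ext σ
    simp only [Finset.mem_filter, Finset.mem_univ, true_and, Fintype.mem_piFinset]
    constructor
    · intro h x
      by_cases hx : (↑x : V) ∈ S
      · simp [hx, h x hx]
      · simp [hx]
    · intro h x hx
      have := h x
      simpa [hx] using this
  rw [hfil, Fintype.card_piFinset]
  have : ∀ x : ↥Vs, (if (↑x : V) ∈ S then t ↑x else (Finset.univ : Finset (Fin M))).card
      = if (↑x : V) ∈ S then (t ↑x).card else M := by
    intro x; split <;> simp
  simp only [this]
  rw [Finset.prod_ite]
  have hc1 : (Finset.univ.filter fun x : ↥Vs => (↑x : V) ∈ S).card = S.card := by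
    refine Finset.card_bij (fun x _ => (↑x : V)) ?_ ?_ ?_
    · intro x hx; simpa using (Finset.mem_filter.mp hx).2
    · intro x hx y hy hxy; exact Subtype.ext hxy
    · intro v hv
      exact ⟨⟨v, hS hv⟩, by simp [hv], rfl⟩
  have hc2 : (Finset.univ.filter fun x : ↥Vs => ¬ (↑x : V) ∈ S).card = Vs.card - S.card := by
    have := Finset.card_filter_add_card_filter_not
      (s := (Finset.univ : Finset ↥Vs)) (p := fun x => (↑x : V) ∈ S)
    have hcu : (Finset.univ : Finset ↥Vs).card = Vs.card := by
      simp [Finset.card_univ]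
    omega
  have hp1 : (∏ x ∈ Finset.univ.filter fun x : ↥Vs => (↑x : V) ∈ S, (t ↑x).card)
      = ∏ v ∈ S, (t v).card := by
    refine Finset.prod_bij (fun x _ => (↑x : V)) ?_ ?_ ?_ ?_
    · intro x hx; simpa using (Finset.mem_filter.mp hx).2
    · intro x hx y hy hxy; exact Subtype.ext hxy
    · intro v hv; exact ⟨⟨v, hS hv⟩, by simp [hv], rfl⟩
    · intro x hx; rfl
  rw [hp1, Finset.prod_const, hc2]

noncomputable def extSig (Vs : Finset V) {M : ℕ} (σ : ↥Vs → Fin M) : V → ℕ :=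
  fun v => if h : v ∈ Vs then (σ ⟨v, h⟩ : ℕ) else 0

lemma extSig_coe (Vs : Finset V) {M : ℕ} (σ : ↥Vs → Fin M) (x : ↥Vs) :
    extSig Vs σ ↑x = (σ x : ℕ) := by simp [extSig]

lemma card_val_lt {M j : ℕ} :
    ((Finset.univ : Finset (Fin M)).filter fun q : Fin M => (q : ℕ) < j).card ≤ j := by
  classical
  calc ((Finset.univ : Finset (Fin M)).filter fun q : Fin M => (q : ℕ) < j).card
      ≤ (Finset.range j).card := by
        refine Finset.card_le_card_of_injOn (fun q => (q : ℕ)) ?_ ?_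
        · intro q hq
          simp only [Finset.mem_coe, Finset.mem_filter] at hq
          simpa using hq.2
        · intro q _ r _ hqr; exact Fin.ext hqr
    _ = j := Finset.card_range j

lemma card_val_ge {M b : ℕ} :
    ((Finset.univ : Finset (Fin M)).filter fun q : Fin M => b ≤ (q : ℕ)).card ≤ M - b := by
  classical
  calc ((Finset.univ : Finset (Fin M)).filter fun q : Fin M => b ≤ (q : ℕ)).card
      ≤ (Finset.Ico b M).card := by
        refine Finset.card_le_card_of_injOn (fun q => (q : ℕ)) ?_ ?_
        · intro q hq
          simp only [Finset.mem_coe, Finset.mem_filter] at hq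
          simp [Finset.mem_Ico, hq.2, q.2]
        · intro q _ r _ hqr; exact Fin.ext hqr
    _ = M - b := Nat.card_Ico b M

lemma card_val_gt {M j : ℕ} :
    ((Finset.univ : Finset (Fin M)).filter fun q : Fin M => j < (q : ℕ)).card ≤ M - 1 - j := by
  classical
  calc ((Finset.univ : Finset (Fin M)).filter fun q : Fin M => j < (q : ℕ)).card
      ≤ (Finset.Ico (j+1) M).card := by
        refine Finset.card_le_card_of_injOn (fun q => (q : ℕ)) ?_ ?_
        · intro q hq
          simp only [Finset.mem_coe, Finset.mem_filter] at hq
          have := q.2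
          simp only [Finset.mem_coe, Finset.mem_Ico]
          omega
        · intro q _ r _ hqr; exact Fin.ext hqr
    _ = M - 1 - j := by rw [Nat.card_Ico]; omega

-- count of "edge all below a" events

lemma count_coll {M : ℕ} (Vs : Finset V) (hVs : 2 ≤ Vs.card) :
    (Finset.univ.filter fun σ : ↥Vs → Fin M =>
        ∃ x y : ↥Vs, x ≠ y ∧ σ x = σ y).card
      ≤ Vs.card ^ 2 * M ^ (Vs.card - 1) := by
  classical
  have hsub : (Finset.univ.filter fun σ : ↥Vs → Fin M => ∃ x y : ↥Vs, x ≠ y ∧ σ x = σ y)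
      ⊆ (Finset.univ ×ˢ Finset.univ : Finset (↥Vs × ↥Vs)).biUnion
          (fun q => Finset.univ.filter fun σ : ↥Vs → Fin M =>
            q.1 ≠ q.2 ∧ σ q.1 = σ q.2) := by
    intro σ hσ
    obtain ⟨x, y, hxy, hEq⟩ := (Finset.mem_filter.mp hσ).2
    exact Finset.mem_biUnion.mpr ⟨(x, y), by simp, by simp [hxy, hEq]⟩
  refine le_trans (le_trans (Finset.card_le_card hsub) (Finset.card_biUnion_le)) ?_
  have hbound : ∀ q : ↥Vs × ↥Vs,
      (Finset.univ.filter fun σ : ↥Vs → Fin M => q.1 ≠ q.2 ∧ σ q.1 = σ q.2).card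
        ≤ M ^ (Vs.card - 1) := by
    rintro ⟨x, y⟩
    by_cases hxy : x = y
    · simp [hxy]
    · have hcoe : (↑x : V) ≠ ↑y := fun hEq => hxy (Subtype.ext hEq)
      have hsub2 : (Finset.univ.filter fun σ : ↥Vs → Fin M => x ≠ y ∧ σ x = σ y)
          ⊆ (Finset.univ : Finset (Fin M)).biUnion (fun j =>
              Finset.univ.filter fun σ : ↥Vs → Fin M =>
                ∀ z : ↥Vs, (↑z : V) ∈ ({↑x, ↑y} : Finset V) → σ z ∈ ({j} : Finset (Fin M))) := by
        intro σ hσ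
        obtain ⟨-, hEq⟩ := (Finset.mem_filter.mp hσ).2
        refine Finset.mem_biUnion.mpr ⟨σ x, Finset.mem_univ _, ?_⟩
        refine Finset.mem_filter.mpr ⟨Finset.mem_univ _, fun z hz => ?_⟩
        simp only [Finset.mem_insert, Finset.mem_singleton] at hz
        rcases hz with hz | hz
        · rw [show z = x from Subtype.ext hz]; simp
        · rw [show z = y from Subtype.ext hz]; simp [hEq]
      refine le_trans (le_trans (Finset.card_le_card hsub2) (Finset.card_biUnion_le)) ?_
      have hS : ({↑x, ↑y} : Finset V) ⊆ Vs := by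
        intro v hv
        simp only [Finset.mem_insert, Finset.mem_singleton] at hv
        rcases hv with rfl | rfl
        · exact x.2
        · exact y.2
      have hcard2 : ({↑x, ↑y} : Finset V).card = 2 := by
        rw [Finset.card_insert_of_notMem (by simp [hcoe]), Finset.card_singleton]
      calc ∑ j : Fin M, (Finset.univ.filter fun σ : ↥Vs → Fin M =>
            ∀ z : ↥Vs, (↑z : V) ∈ ({↑x, ↑y} : Finset V) → σ z ∈ ({j} : Finset (Fin M))).card
          = ∑ j : Fin M, (∏ v ∈ ({↑x, ↑y} : Finset V), (({j} : Finset (Fin M))).card)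
              * M ^ (Vs.card - 2) := by
            refine Finset.sum_congr rfl fun j _ => ?_
            rw [count_constraints Vs {↑x, ↑y} hS (fun _ => ({j} : Finset (Fin M))), hcard2]
        _ = M * M ^ (Vs.card - 2) := by simp
        _ ≤ M ^ (Vs.card - 1) := by
            rw [← pow_succ']
            apply le_of_eq
            congr 1
            omega
  calc ∑ q ∈ (Finset.univ ×ˢ Finset.univ : Finset (↥Vs × ↥Vs)),
        (Finset.univ.filter fun σ : ↥Vs → Fin M => q.1 ≠ q.2 ∧ σ q.1 = σ q.2).card
      ≤ ∑ _q ∈ (Finset.univ ×ˢ Finset.univ : Finset (↥Vs × ↥Vs)), M ^ (Vs.card - 1) :=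
        Finset.sum_le_sum fun q _ => hbound q
    _ = Vs.card ^ 2 * M ^ (Vs.card - 1) := by
        rw [Finset.sum_const, Finset.card_product]
        simp [Finset.card_univ, sq, Nat.smul_one_eq_cast]

lemma count_low {M a n : ℕ} (Vs : Finset V) (A : Finset V) (hA : A ⊆ Vs) (hAn : A.card = n) :
    (Finset.univ.filter fun σ : ↥Vs → Fin M => ∀ v ∈ A, extSig Vs σ v < a).card
      ≤ a ^ n * M ^ (Vs.card - n) := by
  classical
  have hsub : (Finset.univ.filter fun σ : ↥Vs → Fin M => ∀ v ∈ A, extSig Vs σ v < a)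
      ⊆ Finset.univ.filter fun σ : ↥Vs → Fin M => ∀ x : ↥Vs, ↑x ∈ A →
          σ x ∈ (Finset.univ.filter fun q : Fin M => (q : ℕ) < a) := by
    intro σ hσ
    have h := (Finset.mem_filter.mp hσ).2
    refine Finset.mem_filter.mpr ⟨Finset.mem_univ _, fun x hx => ?_⟩
    have := h ↑x hx
    rw [extSig_coe] at this
    simp [this]
  refine le_trans (Finset.card_le_card hsub) ?_
  rw [count_constraints Vs A hA (fun _ => Finset.univ.filter fun q : Fin M => (q : ℕ) < a)]
  rw [Finset.prod_const, hAn]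
  exact Nat.mul_le_mul_right _ (Nat.pow_le_pow_left card_val_lt n)

lemma count_high {M b n : ℕ} (Vs : Finset V) (A : Finset V) (hA : A ⊆ Vs) (hAn : A.card = n) :
    (Finset.univ.filter fun σ : ↥Vs → Fin M => ∀ v ∈ A, b ≤ extSig Vs σ v).card
      ≤ (M - b) ^ n * M ^ (Vs.card - n) := by
  classical
  have hsub : (Finset.univ.filter fun σ : ↥Vs → Fin M => ∀ v ∈ A, b ≤ extSig Vs σ v)
      ⊆ Finset.univ.filter fun σ : ↥Vs → Fin M => ∀ x : ↥Vs, ↑x ∈ A →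
          σ x ∈ (Finset.univ.filter fun q : Fin M => b ≤ (q : ℕ)) := by
    intro σ hσ
    have h := (Finset.mem_filter.mp hσ).2
    refine Finset.mem_filter.mpr ⟨Finset.mem_univ _, fun x hx => ?_⟩
    have := h ↑x hx
    rw [extSig_coe] at this
    simp [this]
  refine le_trans (Finset.card_le_card hsub) ?_
  rw [count_constraints Vs A hA (fun _ => Finset.univ.filter fun q : Fin M => b ≤ (q : ℕ))]
  rw [Finset.prod_const, hAn]
  exact Nat.mul_le_mul_right _ (Nat.pow_le_pow_left card_val_ge n)

lemma count_pair {M a b n : ℕ} (Vs : Finset V) (A B : Finset V) (hA : A ⊆ Vs) (hB : B ⊆ Vs)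
    (hAn : A.card = n) (hBn : B.card = n) (hn : 1 ≤ n) :
    4 ^ (n - 1) * (Finset.univ.filter fun σ : ↥Vs → Fin M => ∃ v, v ∈ A ∧ v ∈ B ∧
        a ≤ extSig Vs σ v ∧ extSig Vs σ v < b ∧
        (∀ u ∈ A, u ≠ v → extSig Vs σ u < extSig Vs σ v) ∧
        (∀ u ∈ B, u ≠ v → extSig Vs σ v < extSig Vs σ u)).card
      ≤ (b - a) * M ^ (Vs.card - 1) := by
  classical
  by_cases hsing : ∃ v0, A ∩ B = {v0}
  · obtain ⟨v0, hv0⟩ := hsing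
    have hv0AB : v0 ∈ A ∩ B := hv0 ▸ Finset.mem_singleton_self v0
    have hv0A : v0 ∈ A := (Finset.mem_inter.mp hv0AB).1
    have hv0B : v0 ∈ B := (Finset.mem_inter.mp hv0AB).2
    set tset : ℕ → V → Finset (Fin M) := fun j u =>
      if u = v0 then (Finset.univ.filter fun q : Fin M => (q : ℕ) = j)
      else if u ∈ A then (Finset.univ.filter fun q : Fin M => (q : ℕ) < j)
      else (Finset.univ.filter fun q : Fin M => j < (q : ℕ)) with htset
    have hsub : (Finset.univ.filter fun σ : ↥Vs → Fin M => ∃ v, v ∈ A ∧ v ∈ B ∧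
        a ≤ extSig Vs σ v ∧ extSig Vs σ v < b ∧
        (∀ u ∈ A, u ≠ v → extSig Vs σ u < extSig Vs σ v) ∧
        (∀ u ∈ B, u ≠ v → extSig Vs σ v < extSig Vs σ u))
        ⊆ (Finset.Ico a b).biUnion fun j => Finset.univ.filter
            fun σ : ↥Vs → Fin M => ∀ x : ↥Vs, ↑x ∈ A ∪ B → σ x ∈ tset j ↑x := by
      intro σ hσ
      obtain ⟨v, hvA, hvB, hva, hvb, hAc, hBc⟩ := (Finset.mem_filter.mp hσ).2
      have hvv0 : v = v0 := by
        have : v ∈ A ∩ B := Finset.mem_inter.mpr ⟨hvA, hvB⟩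
        rw [hv0] at this
        exact Finset.mem_singleton.mp this
      subst hvv0
      refine Finset.mem_biUnion.mpr ⟨extSig Vs σ v, Finset.mem_Ico.mpr ⟨hva, hvb⟩, ?_⟩
      refine Finset.mem_filter.mpr ⟨Finset.mem_univ _, fun x hx => ?_⟩
      by_cases hx0 : (↑x : V) = v
      · simp only [htset, hx0, if_pos rfl, Finset.mem_filter, Finset.mem_univ, true_and]
        rw [← extSig_coe Vs σ x, hx0]
      · by_cases hxA : (↑x : V) ∈ A
        · have := hAc ↑x hxA hx0
          simp only [htset, if_neg hx0, if_pos hxA, Finset.mem_filter, Finset.mem_univ, true_and]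
          rw [← extSig_coe Vs σ x]
          exact this
        · have hxB : (↑x : V) ∈ B := by
            rcases Finset.mem_union.mp hx with h | h
            · exact absurd h hxA
            · exact h
          have := hBc ↑x hxB hx0
          simp only [htset, if_neg hx0, if_neg hxA, Finset.mem_filter, Finset.mem_univ, true_and]
          rw [← extSig_coe Vs σ x]
          exact this
    have hABsub : A ∪ B ⊆ Vs := Finset.union_subset hA hB
    have hABcard : (A ∪ B).card = 2 * n - 1 := by
      have h1 := Finset.card_union_add_card_inter A B
      rw [hv0, hAn, hBn, Finset.card_singleton] at h1
      omega
    have hNge : 2 * n - 1 ≤ Vs.card := hABcard ▸ Finset.card_le_card hABsub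
    have hcardj : ∀ j, (Finset.univ.filter
          fun σ : ↥Vs → Fin M => ∀ x : ↥Vs, ↑x ∈ A ∪ B → σ x ∈ tset j ↑x).card
        ≤ j ^ (n - 1) * (M - 1 - j) ^ (n - 1) * M ^ (Vs.card - (2 * n - 1)) := by
      intro j
      rw [count_constraints Vs (A ∪ B) hABsub (tset j), hABcard]
      refine Nat.mul_le_mul_right _ ?_
      -- product over A ∪ B
      have hv0mem : v0 ∈ A ∪ B := Finset.mem_union_left _ hv0A
      rw [← Finset.mul_prod_erase _ _ hv0mem]
      have hv0card : (tset j v0).card ≤ 1 := by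
        simp only [htset, if_pos rfl]
        refine Finset.card_le_one.mpr fun q hq r hr => ?_
        simp only [Finset.mem_filter] at hq hr
        exact Fin.ext (hq.2.trans hr.2.symm)
      have herase : (A ∪ B).erase v0 = A.erase v0 ∪ B.erase v0 :=
        Finset.erase_union_distrib A B v0
      have hdisj : Disjoint (A.erase v0) (B.erase v0) := by
        rw [Finset.disjoint_left]
        intro u huA huB
        have h1 : u ∈ A ∩ B := Finset.mem_inter.mpr
          ⟨Finset.mem_of_mem_erase huA, Finset.mem_of_mem_erase huB⟩
        rw [hv0] at h1
        exact (Finset.ne_of_mem_erase huA) (Finset.mem_singleton.mp h1)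
      have hprodA : (∏ u ∈ A.erase v0, (tset j u).card) ≤ j ^ (n - 1) := by
        have : ∀ u ∈ A.erase v0, (tset j u).card ≤ j := by
          intro u hu
          have h1 : u ≠ v0 := Finset.ne_of_mem_erase hu
          have h2 : u ∈ A := Finset.mem_of_mem_erase hu
          simp only [htset, if_neg h1, if_pos h2]
          exact card_val_lt
        calc (∏ u ∈ A.erase v0, (tset j u).card) ≤ ∏ _u ∈ A.erase v0, j :=
              Finset.prod_le_prod' this
          _ = j ^ (n - 1) := by rw [Finset.prod_const, Finset.card_erase_of_mem hv0A, hAn]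
      have hprodB : (∏ u ∈ B.erase v0, (tset j u).card) ≤ (M - 1 - j) ^ (n - 1) := by
        have : ∀ u ∈ B.erase v0, (tset j u).card ≤ M - 1 - j := by
          intro u hu
          have h1 : u ≠ v0 := Finset.ne_of_mem_erase hu
          have h2 : u ∈ B := Finset.mem_of_mem_erase hu
          have h3 : u ∉ A := by
            intro hA'
            have : u ∈ A ∩ B := Finset.mem_inter.mpr ⟨hA', h2⟩
            rw [hv0] at this
            exact h1 (Finset.mem_singleton.mp this)
          simp only [htset, if_neg h1, if_neg h3]
          exact card_val_gt
        calc (∏ u ∈ B.erase v0, (tset j u).card) ≤ ∏ _u ∈ B.erase v0, (M - 1 - j) :=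
              Finset.prod_le_prod' this
          _ = (M - 1 - j) ^ (n - 1) := by
              rw [Finset.prod_const, Finset.card_erase_of_mem hv0B, hBn]
      calc (tset j v0).card * ∏ u ∈ (A ∪ B).erase v0, (tset j u).card
          ≤ 1 * ∏ u ∈ (A ∪ B).erase v0, (tset j u).card :=
            Nat.mul_le_mul_right _ hv0card
        _ = ∏ u ∈ (A ∪ B).erase v0, (tset j u).card := one_mul _
        _ = (∏ u ∈ A.erase v0, (tset j u).card) * ∏ u ∈ B.erase v0, (tset j u).card := by
            rw [herase, Finset.prod_union hdisj]
        _ ≤ j ^ (n - 1) * (M - 1 - j) ^ (n - 1) := Nat.mul_le_mul hprodA hprodB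
    calc 4 ^ (n - 1) * (Finset.univ.filter fun σ : ↥Vs → Fin M => ∃ v, v ∈ A ∧ v ∈ B ∧
        a ≤ extSig Vs σ v ∧ extSig Vs σ v < b ∧
        (∀ u ∈ A, u ≠ v → extSig Vs σ u < extSig Vs σ v) ∧
        (∀ u ∈ B, u ≠ v → extSig Vs σ v < extSig Vs σ u)).card
        ≤ 4 ^ (n - 1) * ∑ j ∈ Finset.Ico a b, (Finset.univ.filter
            fun σ : ↥Vs → Fin M => ∀ x : ↥Vs, ↑x ∈ A ∪ B → σ x ∈ tset j ↑x).card :=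
          Nat.mul_le_mul_left _ (le_trans (Finset.card_le_card hsub) Finset.card_biUnion_le)
      _ = ∑ j ∈ Finset.Ico a b, 4 ^ (n - 1) * (Finset.univ.filter
            fun σ : ↥Vs → Fin M => ∀ x : ↥Vs, ↑x ∈ A ∪ B → σ x ∈ tset j ↑x).card := by
          rw [Finset.mul_sum]
      _ ≤ ∑ j ∈ Finset.Ico a b, M ^ (Vs.card - 1) := by
          refine Finset.sum_le_sum fun j hj => ?_
          calc 4 ^ (n - 1) * (Finset.univ.filter
              fun σ : ↥Vs → Fin M => ∀ x : ↥Vs, ↑x ∈ A ∪ B → σ x ∈ tset j ↑x).card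
              ≤ 4 ^ (n - 1) * (j ^ (n - 1) * (M - 1 - j) ^ (n - 1)
                  * M ^ (Vs.card - (2 * n - 1))) := Nat.mul_le_mul_left _ (hcardj j)
            _ = (4 * j * (M - 1 - j)) ^ (n - 1) * M ^ (Vs.card - (2 * n - 1)) := by
                rw [mul_pow, mul_pow]; ring
            _ ≤ (M ^ 2) ^ (n - 1) * M ^ (Vs.card - (2 * n - 1)) := by
                refine Nat.mul_le_mul_right _ (Nat.pow_le_pow_left ?_ _)
                rcases Nat.lt_or_ge j M with hjM | hjM
                · have h4 : 4 * j * (M - 1 - j) ≤ (j + (M - 1 - j)) ^ 2 := by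
                    set c := M - 1 - j
                    zify
                    nlinarith [sq_nonneg ((j : ℤ) - c)]
                  refine le_trans h4 (Nat.pow_le_pow_left (by omega) 2)
                · have : M - 1 - j = 0 := by omega
                  simp [this]
            _ = M ^ (2 * (n - 1)) * M ^ (Vs.card - (2 * n - 1)) := by rw [← pow_mul]
            _ = M ^ (Vs.card - 1) := by
                rw [← pow_add]
                congr 1
                omega
      _ = (b - a) * M ^ (Vs.card - 1) := by rw [Finset.sum_const, Nat.card_Ico, smul_eq_mul]
  · -- no common single vertex: the event is empty
    have hempty : (Finset.univ.filter fun σ : ↥Vs → Fin M => ∃ v, v ∈ A ∧ v ∈ B ∧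
        a ≤ extSig Vs σ v ∧ extSig Vs σ v < b ∧
        (∀ u ∈ A, u ≠ v → extSig Vs σ u < extSig Vs σ v) ∧
        (∀ u ∈ B, u ≠ v → extSig Vs σ v < extSig Vs σ u)) = ∅ := by
      rw [Finset.eq_empty_iff_forall_notMem]
      intro σ hσ
      obtain ⟨v, hvA, hvB, _, _, hAc, hBc⟩ := (Finset.mem_filter.mp hσ).2
      refine hsing ⟨v, ?_⟩
      ext u
      simp only [Finset.mem_inter, Finset.mem_singleton]
      constructor
      · rintro ⟨huA, huB⟩
        by_contra hne
        exact absurd (hBc u huB hne) (not_lt.mpr (le_of_lt (hAc u huA hne)))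
      · rintro rfl
        exact ⟨hvA, hvB⟩
    rw [hempty]
    simp

lemma exists_good (E : Finset (Finset V)) (Vs : Finset V) (n M a b : ℕ)
    (hVs : ∀ A ∈ E, A ⊆ Vs) (hcardE : ∀ A ∈ E, A.card = n) (hn : 1 ≤ n)
    (hVs2 : 2 ≤ Vs.card)
    (hlt : 4 ^ (n - 1) * (Vs.card ^ 2 * M ^ (Vs.card - 1)
        + E.card * (a ^ n * M ^ (Vs.card - n))
        + E.card * ((M - b) ^ n * M ^ (Vs.card - n)))
        + E.card ^ 2 * ((b - a) * M ^ (Vs.card - 1))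
      < 4 ^ (n - 1) * M ^ Vs.card) :
    ∃ σ : ↥Vs → Fin M,
      Set.InjOn (extSig Vs σ) ↑Vs ∧
      (¬ ∃ A ∈ E, ∀ v ∈ A, extSig Vs σ v < a) ∧
      (¬ ∃ A ∈ E, ∀ v ∈ A, b ≤ extSig Vs σ v) ∧
      (¬ ∃ A ∈ E, ∃ B ∈ E, ∃ v, v ∈ A ∧ v ∈ B ∧
        a ≤ extSig Vs σ v ∧ extSig Vs σ v < b ∧
        (∀ u ∈ A, u ≠ v → extSig Vs σ u < extSig Vs σ v) ∧
        (∀ u ∈ B, u ≠ v → extSig Vs σ v < extSig Vs σ u)) := by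
  classical
  set N := Vs.card with hN
  set F1 := Finset.univ.filter fun σ : ↥Vs → Fin M => ∃ x y : ↥Vs, x ≠ y ∧ σ x = σ y with hF1
  set F2 := Finset.univ.filter fun σ : ↥Vs → Fin M =>
      ∃ A ∈ E, ∀ v ∈ A, extSig Vs σ v < a with hF2
  set F3 := Finset.univ.filter fun σ : ↥Vs → Fin M =>
      ∃ A ∈ E, ∀ v ∈ A, b ≤ extSig Vs σ v with hF3
  set F4 := Finset.univ.filter fun σ : ↥Vs → Fin M =>
      ∃ A ∈ E, ∃ B ∈ E, ∃ v, v ∈ A ∧ v ∈ B ∧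
        a ≤ extSig Vs σ v ∧ extSig Vs σ v < b ∧
        (∀ u ∈ A, u ≠ v → extSig Vs σ u < extSig Vs σ v) ∧
        (∀ u ∈ B, u ≠ v → extSig Vs σ v < extSig Vs σ u) with hF4
  have hc2 : F2.card ≤ E.card * (a ^ n * M ^ (N - n)) := by
    have : F2 ⊆ E.biUnion fun A =>
        Finset.univ.filter fun σ : ↥Vs → Fin M => ∀ v ∈ A, extSig Vs σ v < a := by
      intro σ hσ
      obtain ⟨A, hAE, hAp⟩ := (Finset.mem_filter.mp hσ).2
      exact Finset.mem_biUnion.mpr ⟨A, hAE, Finset.mem_filter.mpr ⟨Finset.mem_univ _, hAp⟩⟩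
    refine le_trans (le_trans (Finset.card_le_card this) Finset.card_biUnion_le) ?_
    calc ∑ A ∈ E, (Finset.univ.filter fun σ : ↥Vs → Fin M => ∀ v ∈ A, extSig Vs σ v < a).card
        ≤ ∑ A ∈ E, a ^ n * M ^ (N - n) :=
          Finset.sum_le_sum fun A hA => count_low Vs A (hVs A hA) (hcardE A hA)
      _ = E.card * (a ^ n * M ^ (N - n)) := by rw [Finset.sum_const, smul_eq_mul]
  have hc3 : F3.card ≤ E.card * ((M - b) ^ n * M ^ (N - n)) := by
    have : F3 ⊆ E.biUnion fun A =>
        Finset.univ.filter fun σ : ↥Vs → Fin M => ∀ v ∈ A, b ≤ extSig Vs σ v := by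
      intro σ hσ
      obtain ⟨A, hAE, hAp⟩ := (Finset.mem_filter.mp hσ).2
      exact Finset.mem_biUnion.mpr ⟨A, hAE, Finset.mem_filter.mpr ⟨Finset.mem_univ _, hAp⟩⟩
    refine le_trans (le_trans (Finset.card_le_card this) Finset.card_biUnion_le) ?_
    calc ∑ A ∈ E, (Finset.univ.filter fun σ : ↥Vs → Fin M => ∀ v ∈ A, b ≤ extSig Vs σ v).card
        ≤ ∑ A ∈ E, (M - b) ^ n * M ^ (N - n) :=
          Finset.sum_le_sum fun A hA => count_high Vs A (hVs A hA) (hcardE A hA)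
      _ = E.card * ((M - b) ^ n * M ^ (N - n)) := by rw [Finset.sum_const, smul_eq_mul]
  have hc4 : 4 ^ (n - 1) * F4.card ≤ E.card ^ 2 * ((b - a) * M ^ (N - 1)) := by
    have hsub : F4 ⊆ E.biUnion fun A => E.biUnion fun B =>
        Finset.univ.filter fun σ : ↥Vs → Fin M => ∃ v, v ∈ A ∧ v ∈ B ∧
          a ≤ extSig Vs σ v ∧ extSig Vs σ v < b ∧
          (∀ u ∈ A, u ≠ v → extSig Vs σ u < extSig Vs σ v) ∧
          (∀ u ∈ B, u ≠ v → extSig Vs σ v < extSig Vs σ u) := by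
      intro σ hσ
      obtain ⟨A, hAE, B, hBE, hrest⟩ := (Finset.mem_filter.mp hσ).2
      exact Finset.mem_biUnion.mpr ⟨A, hAE, Finset.mem_biUnion.mpr ⟨B, hBE,
        Finset.mem_filter.mpr ⟨Finset.mem_univ _, hrest⟩⟩⟩
    calc 4 ^ (n - 1) * F4.card
        ≤ 4 ^ (n - 1) * ∑ A ∈ E, ∑ B ∈ E,
            (Finset.univ.filter fun σ : ↥Vs → Fin M => ∃ v, v ∈ A ∧ v ∈ B ∧
              a ≤ extSig Vs σ v ∧ extSig Vs σ v < b ∧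
              (∀ u ∈ A, u ≠ v → extSig Vs σ u < extSig Vs σ v) ∧
              (∀ u ∈ B, u ≠ v → extSig Vs σ v < extSig Vs σ u)).card := by
          refine Nat.mul_le_mul_left _ ?_
          refine le_trans (Finset.card_le_card hsub) ?_
          refine le_trans Finset.card_biUnion_le ?_
          exact Finset.sum_le_sum fun A _ => Finset.card_biUnion_le
      _ = ∑ A ∈ E, ∑ B ∈ E, 4 ^ (n - 1) *
            (Finset.univ.filter fun σ : ↥Vs → Fin M => ∃ v, v ∈ A ∧ v ∈ B ∧
              a ≤ extSig Vs σ v ∧ extSig Vs σ v < b ∧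
              (∀ u ∈ A, u ≠ v → extSig Vs σ u < extSig Vs σ v) ∧
              (∀ u ∈ B, u ≠ v → extSig Vs σ v < extSig Vs σ u)).card := by
          rw [Finset.mul_sum]
          exact Finset.sum_congr rfl fun A _ => Finset.mul_sum _ _ _
      _ ≤ ∑ A ∈ E, ∑ B ∈ E, (b - a) * M ^ (N - 1) := by
          refine Finset.sum_le_sum fun A hA => Finset.sum_le_sum fun B hB => ?_
          exact count_pair Vs A B (hVs A hA) (hVs B hB) (hcardE A hA) (hcardE B hB) hn
      _ = E.card ^ 2 * ((b - a) * M ^ (N - 1)) := by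
          simp [Finset.sum_const, smul_eq_mul, sq]
          ring
  have hc1 : F1.card ≤ N ^ 2 * M ^ (N - 1) := count_coll Vs hVs2
  -- total
  have htot : 4 ^ (n - 1) * (F1 ∪ F2 ∪ F3 ∪ F4).card < 4 ^ (n - 1) * M ^ N := by
    have hcup : (F1 ∪ F2 ∪ F3 ∪ F4).card ≤ F1.card + F2.card + F3.card + F4.card := by
      refine le_trans (Finset.card_union_le _ _) ?_
      have h1 : (F1 ∪ F2 ∪ F3).card ≤ F1.card + F2.card + F3.card := by
        refine le_trans (Finset.card_union_le _ _) ?_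
        exact Nat.add_le_add_right (Finset.card_union_le _ _) _
      omega
    calc 4 ^ (n - 1) * (F1 ∪ F2 ∪ F3 ∪ F4).card
        ≤ 4 ^ (n - 1) * (F1.card + F2.card + F3.card + F4.card) :=
          Nat.mul_le_mul_left _ hcup
      _ = 4 ^ (n - 1) * (F1.card + F2.card + F3.card) + 4 ^ (n - 1) * F4.card := by ring
      _ ≤ 4 ^ (n - 1) * (N ^ 2 * M ^ (N - 1) + E.card * (a ^ n * M ^ (N - n))
            + E.card * ((M - b) ^ n * M ^ (N - n)))
            + E.card ^ 2 * ((b - a) * M ^ (N - 1)) := by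
          refine Nat.add_le_add (Nat.mul_le_mul_left _ (by omega)) hc4
      _ < 4 ^ (n - 1) * M ^ N := hlt
  have hbadlt : (F1 ∪ F2 ∪ F3 ∪ F4).card < M ^ N :=
    Nat.lt_of_mul_lt_mul_left htot
  have huniv : (Finset.univ : Finset (↥Vs → Fin M)).card = M ^ N := by
    rw [Finset.card_univ, Fintype.card_fun]
    simp [hN]
  obtain ⟨σ, hσ⟩ : ∃ σ : ↥Vs → Fin M, σ ∉ F1 ∪ F2 ∪ F3 ∪ F4 := by
    by_contra hcon
    push_neg at hcon
    have : (Finset.univ : Finset (↥Vs → Fin M)) ⊆ F1 ∪ F2 ∪ F3 ∪ F4 :=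
      fun σ _ => hcon σ
    have := Finset.card_le_card this
    omega
  simp only [Finset.mem_union, not_or] at hσ
  obtain ⟨⟨⟨h1, h2⟩, h3⟩, h4⟩ := hσ
  refine ⟨σ, ?_, ?_, ?_, ?_⟩
  · intro u hu w hw hEq
    simp only [Finset.coe_mem, Finset.mem_coe] at hu hw
    have hu' : u ∈ Vs := hu
    have hw' : w ∈ Vs := hw
    rw [extSig, extSig] at hEq
    rw [dif_pos hu', dif_pos hw'] at hEq
    by_contra hne
    refine h1 (Finset.mem_filter.mpr ⟨Finset.mem_univ _, ⟨⟨u, hu'⟩, ⟨w, hw'⟩, ?_, Fin.ext hEq⟩⟩)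
    exact fun hc => hne (congrArg Subtype.val hc)
  · exact fun hc => h2 (Finset.mem_filter.mpr ⟨Finset.mem_univ _, hc⟩)
  · exact fun hc => h3 (Finset.mem_filter.mpr ⟨Finset.mem_univ _, hc⟩)
  · exact fun hc => h4 (Finset.mem_filter.mpr ⟨Finset.mem_univ _, hc⟩)

end PropertyB

/-- If `n ≥ 2`, `k > 0` and `p ∈ (0,1)` satisfy `k(1-p)^n + k²p < 1`, then every
`n`-uniform hypergraph with at most `k·2^(n-1)` edges is 2-colorable. -/
theorem property_B_criterion (n : ℕ) (hn : 2 ≤ n) (k p : ℝ) (hk : 0 < k)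
    (hp : p ∈ Set.Ioo (0 : ℝ) 1) (h : k * (1 - p) ^ n + k ^ 2 * p < 1) :
    ∀ (V : Type) (E : Finset (Finset V)),
      (∀ e ∈ E, e.card = n) →
      (E.card : ℝ) ≤ k * 2 ^ (n - 1) →
      IsRColorable 2 E := by
  intro V E hcardE hEcard
  classical
  rcases E.eq_empty_or_nonempty with rfl | ⟨A0, hA0⟩
  · exact ⟨fun _ => 0, by simp⟩
  obtain ⟨hp0, hp1⟩ := hp
  set Vs : Finset V := E.biUnion id with hVsdef
  have hVs : ∀ A ∈ E, A ⊆ Vs := fun A hA => Finset.subset_biUnion_of_mem id hA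
  set N := Vs.card with hNdef
  have hnN : n ≤ N := by
    rw [← hcardE A0 hA0]
    exact Finset.card_le_card (hVs A0 hA0)
  have hN2 : 2 ≤ N := le_trans hn hnN
  set m := E.card with hmdef
  -- choose M
  have h0 : Tendsto (fun M : ℕ => (1 : ℝ) / M) atTop (nhds 0) :=
    tendsto_one_div_atTop_nhds_zero_nat
  have hlim : Tendsto (fun M : ℕ => (N ^ 2 : ℝ) / M + k * 2 ^ n * ((1 - p) / 2 + 1 / M) ^ n
      + k ^ 2 * p) atTop (nhds (k * (1 - p) ^ n + k ^ 2 * p)) := by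
    have h1 : Tendsto (fun M : ℕ => (N ^ 2 : ℝ) / M) atTop (nhds 0) := by
      have := h0.const_mul (N ^ 2 : ℝ)
      simpa [div_eq_mul_inv, mul_comm] using this
    have h2 : Tendsto (fun M : ℕ => ((1 - p) / 2 + 1 / M) ^ n) atTop
        (nhds (((1 - p) / 2) ^ n)) := by
      have := (tendsto_const_nhds (x := (1 - p) / 2) (f := atTop (α := ℕ))).add h0
      rw [add_zero] at this
      exact this.pow n
    have h3 := (h1.add ((h2.const_mul (k * 2 ^ n)).add
      (tendsto_const_nhds (x := k ^ 2 * p))))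
    have heq : (0 : ℝ) + (k * 2 ^ n * ((1 - p) / 2) ^ n + k ^ 2 * p)
        = k * (1 - p) ^ n + k ^ 2 * p := by
      have : (2 : ℝ) ^ n * ((1 - p) / 2) ^ n = (1 - p) ^ n := by
        rw [← mul_pow]
        congr 1
        field_simp
      rw [zero_add, mul_assoc, this]
    rw [heq] at h3
    convert h3 using 2 with M
    ring
  have hev1 : ∀ᶠ M : ℕ in atTop, (N ^ 2 : ℝ) / M + k * 2 ^ n * ((1 - p) / 2 + 1 / M) ^ n
      + k ^ 2 * p < 1 := hlim.eventually_lt_const h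
  have hev2 : ∀ᶠ M : ℕ in atTop, (2 : ℝ) ≤ p * M := by
    have : Tendsto (fun M : ℕ => p * (M : ℝ)) atTop atTop :=
      (tendsto_natCast_atTop_atTop).const_mul_atTop hp0
    exact this.eventually_ge_atTop 2
  obtain ⟨M, hM1, hM2, hM3⟩ :
      ∃ M : ℕ, ((N ^ 2 : ℝ) / M + k * 2 ^ n * ((1 - p) / 2 + 1 / M) ^ n + k ^ 2 * p < 1)
        ∧ (2 : ℝ) ≤ p * M ∧ 1 ≤ M := by
    obtain ⟨M, hM⟩ := ((hev1.and hev2).and (eventually_ge_atTop 1)).exists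
    exact ⟨M, hM.1.1, hM.1.2, hM.2⟩
  set a : ℕ := ⌈(M : ℝ) * (1 - p) / 2⌉₊ with ha
  have hMR : (1 : ℝ) ≤ (M : ℝ) := by exact_mod_cast hM3
  have hMpos : (0 : ℝ) < M := lt_of_lt_of_le one_pos hMR
  have haR_le : (a : ℝ) ≤ (M : ℝ) * (1 - p) / 2 + 1 := by
    have := Nat.ceil_lt_add_one (a := (M : ℝ) * (1 - p) / 2)
      (by have h1p : (0:ℝ) ≤ 1 - p := by linarith
          positivity)
    linarith [this]
  have haR_ge : (M : ℝ) * (1 - p) / 2 ≤ a := Nat.le_ceil _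
  have h2a : 2 * a ≤ M := by
    have : (2 * a : ℝ) ≤ M := by
      have : (2 : ℝ) * a ≤ M * (1 - p) + 2 := by linarith
      nlinarith
    exact_mod_cast this
  set b : ℕ := M - a with hb
  have hab : a ≤ b := by omega
  have hMb : M - b = a := by omega
  have hba : b - a = M - 2 * a := by omega
  -- the numeric inequality, in ℕ
  have hlt : 4 ^ (n - 1) * (N ^ 2 * M ^ (N - 1)
      + m * (a ^ n * M ^ (N - n)) + m * ((M - b) ^ n * M ^ (N - n)))
      + m ^ 2 * ((b - a) * M ^ (N - 1))
      < 4 ^ (n - 1) * M ^ N := by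
    have hcast : ∀ u v : ℕ, ((u : ℝ) < v) → u < v := fun u v huv => by exact_mod_cast huv
    refine hcast _ _ ?_
    push_cast
    rw [hMb, hba]
    have hbacast : ((M - 2 * a : ℕ) : ℝ) = (M : ℝ) - 2 * a := by
      push_cast [Nat.cast_sub h2a]
      ring
    rw [hbacast]
    set R := (M : ℝ) with hRdef
    have hRpos : (0 : ℝ) < R := hMpos
    have hRne : R ≠ 0 := ne_of_gt hRpos
    have f1 : R ^ (N - 1) * R = R ^ N := by
      rw [← pow_succ]; congr 1; omega
    have f2 : R ^ n * R ^ (N - n) = R ^ N := by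
      rw [← pow_add]; congr 1; omega
    set X := (1 - p) / 2 + 1 / R with hXdef
    have h1p : (0 : ℝ) < 1 - p := by linarith
    have hXpos : 0 < X := by positivity
    have hRX : R * X = R * (1 - p) / 2 + 1 := by
      rw [hXdef, mul_add, mul_one_div, div_self hRne]
      ring
    have hf3 : (a : ℝ) ≤ R * X := by rw [hRX]; exact haR_le
    have hfa : (a : ℝ) ^ n * R ^ (N - n) ≤ X ^ n * R ^ N := by
      calc (a : ℝ) ^ n * R ^ (N - n) ≤ (R * X) ^ n * R ^ (N - n) := by
            have := pow_le_pow_left₀ (Nat.cast_nonneg a) hf3 n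
            exact mul_le_mul_of_nonneg_right this (by positivity)
        _ = X ^ n * R ^ N := by
            rw [mul_pow, mul_comm (R ^ n), mul_assoc, f2]
    have hm0 : (0 : ℝ) ≤ (m : ℝ) := Nat.cast_nonneg _
    have hk2 : (0 : ℝ) ≤ k * 2 ^ (n - 1) := by positivity
    have h4eq : ((2 : ℝ) ^ (n - 1)) ^ 2 = 4 ^ (n - 1) := by
      rw [← pow_mul, mul_comm (n-1) 2, pow_mul]
      norm_num
    have hmsq : ((m : ℝ)) ^ 2 ≤ k ^ 2 * 4 ^ (n - 1) := by
      calc ((m : ℝ)) ^ 2 ≤ (k * 2 ^ (n - 1)) ^ 2 := pow_le_pow_left₀ hm0 hEcard 2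
        _ = k ^ 2 * 4 ^ (n - 1) := by rw [mul_pow, h4eq]
    have hra1 : (0 : ℝ) ≤ R - 2 * a := by
      have : ((2 * a : ℕ) : ℝ) ≤ (M : ℝ) := by exact_mod_cast h2a
      push_cast at this
      linarith
    have hra2 : R - 2 * a ≤ p * R := by nlinarith [haR_ge]
    have h2n : (2 : ℝ) ^ n = 2 * 2 ^ (n - 1) := by
      rw [← pow_succ']; congr 1; omega
    have hXn : (0:ℝ) ≤ X ^ n * R ^ N := by positivity
    have step1 : 4 ^ (n - 1) * ((N:ℝ) ^ 2 * R ^ (N - 1)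
        + (m:ℝ) * ((a:ℝ) ^ n * R ^ (N - n)) + (m:ℝ) * ((a:ℝ) ^ n * R ^ (N - n)))
        + (m:ℝ) ^ 2 * ((R - 2 * a) * R ^ (N - 1))
        ≤ 4 ^ (n - 1) * ((N:ℝ) ^ 2 * R ^ (N - 1)
          + (k * 2 ^ (n - 1)) * (X ^ n * R ^ N) + (k * 2 ^ (n - 1)) * (X ^ n * R ^ N))
        + (k ^ 2 * 4 ^ (n - 1)) * ((p * R) * R ^ (N - 1)) := by
      have e1 : (m:ℝ) * ((a:ℝ) ^ n * R ^ (N - n)) ≤ (k * 2 ^ (n - 1)) * (X ^ n * R ^ N) :=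
        mul_le_mul hEcard hfa (by positivity) hk2
      have e2 : (m:ℝ) ^ 2 * ((R - 2 * a) * R ^ (N - 1))
          ≤ (k ^ 2 * 4 ^ (n - 1)) * ((p * R) * R ^ (N - 1)) := by
        refine mul_le_mul hmsq ?_ (by positivity) (by positivity)
        exact mul_le_mul_of_nonneg_right hra2 (by positivity)
      have e3 : (0:ℝ) ≤ (4:ℝ) ^ (n-1) := by positivity
      exact add_le_add (mul_le_mul_of_nonneg_left
        (add_le_add (add_le_add (le_refl _) e1) e1) e3) e2
    have step2 : 4 ^ (n - 1) * ((N:ℝ) ^ 2 * R ^ (N - 1)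
          + (k * 2 ^ (n - 1)) * (X ^ n * R ^ N) + (k * 2 ^ (n - 1)) * (X ^ n * R ^ N))
        + (k ^ 2 * 4 ^ (n - 1)) * ((p * R) * R ^ (N - 1))
        = 4 ^ (n - 1) * R ^ N * ((N:ℝ) ^ 2 / R + k * 2 ^ n * X ^ n + k ^ 2 * p) := by
      rw [← f1, h2n]
      field_simp
      ring
    have step3 : 4 ^ (n - 1) * R ^ N * ((N:ℝ) ^ 2 / R + k * 2 ^ n * X ^ n + k ^ 2 * p)
        < 4 ^ (n - 1) * R ^ N := by
      have hpos : (0:ℝ) < 4 ^ (n - 1) * R ^ N := by positivity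
      calc 4 ^ (n - 1) * R ^ N * ((N:ℝ) ^ 2 / R + k * 2 ^ n * X ^ n + k ^ 2 * p)
          < 4 ^ (n - 1) * R ^ N * 1 := by
            exact mul_lt_mul_of_pos_left hM1 hpos
        _ = 4 ^ (n - 1) * R ^ N := mul_one _
    exact lt_of_le_of_lt (step1.trans step2.le) step3
  obtain ⟨σ, hinj, hlow, hhigh, hbad2⟩ :=
    exists_good E Vs n M a b hVs hcardE (by omega) hN2 hlt
  obtain ⟨c, hc⟩ := coloring_works E (extSig Vs σ) a b Vs hVs hinj
    (fun A hA => Finset.card_pos.mp (by rw [hcardE A hA]; omega)) hlow hhigh hbad2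
  exact ⟨c, hc⟩
end

section
/- Let H = (V,E) be an n-uniform hypergraph (n ≥ 2) and let t : V → ℝ be injective. If there is no conflicting pair of edges under t, then H is 2-colorable. -/
/-- `(e, f)` is a conflicting pair under the injective birth-time assignment `t`
if the last vertex of `e` (the vertex of `e` with the largest `t`-value) equals
the first vertex of `f` (the vertex of `f` with the smallest `t`-value). -/
def ConflictingPair {V : Type*} (t : V → ℝ) (e f : Finset V) : Prop :=
  ∃ v, v ∈ e ∧ v ∈ f ∧ (∀ w ∈ e, t w ≤ t v) ∧ (∀ w ∈ f, t v ≤ t w)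

/-- If `t : V → ℝ` is injective and no pair of edges of an `n`-uniform hypergraph
(`n ≥ 2`) is conflicting under `t`, then the hypergraph is 2-colorable. -/
theorem two_colorable_of_no_conflicting_pair (n : ℕ) (hn : 2 ≤ n)
    (V : Type) (E : Finset (Finset V)) (hE : ∀ e ∈ E, e.card = n)
    (t : V → ℝ) (ht : Function.Injective t)
    (hconf : ¬ ∃ e ∈ E, ∃ f ∈ E, ConflictingPair t e f) :
    IsRColorable 2 E := by
  classical
  push_neg at hconf
  refine ⟨fun v => if ∃ f ∈ E, v ∈ f ∧ ∀ w ∈ f, t v ≤ t w then 0 else 1, ?_⟩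
  intro e he
  have hne : e.Nonempty := by
    rw [← Finset.card_pos, hE e he]; omega
  obtain ⟨u, hu, humin⟩ := e.exists_min_image t hne
  obtain ⟨w, hw, hwmax⟩ := e.exists_max_image t hne
  refine ⟨u, hu, w, hw, ?_⟩
  have huw : u ≠ w := by
    intro h; subst h
    obtain ⟨a, ha, b, hb, hab⟩ := Finset.one_lt_card.mp (by rw [hE e he]; omega)
    have ha' : t a = t u := le_antisymm (hwmax a ha) (humin a ha)
    have hb' : t b = t u := le_antisymm (hwmax b hb) (humin b hb)
    exact hab (ht (ha'.trans hb'.symm))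
  have h0 : (∃ f ∈ E, u ∈ f ∧ ∀ x ∈ f, t u ≤ t x) := ⟨e, he, hu, humin⟩
  have h1 : ¬ (∃ f ∈ E, w ∈ f ∧ ∀ x ∈ f, t w ≤ t x) := by
    rintro ⟨f, hf, hwf, hmin⟩
    exact hconf e he f hf ⟨w, hw, hwf, hwmax, hmin⟩
  simp only [if_pos h0, if_neg h1]
  decide
end

section
/- Let r ≥ 2 and n ≥ 2 be integers, let H = (V,E) be an n-uniform hypergraph, and let t : V → ℝ be injective. If no r-chain of edges of H is conflicting under t, then H is r-colorable. -/
/-- `f 0, f 1, …, f (r-1)` is an `r`-chain of edges of `E`: consecutive edges meet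
in exactly one vertex and non-consecutive edges are disjoint. -/
def IsRChain {V : Type*} [DecidableEq V] (r : ℕ) (E : Finset (Finset V))
    (f : ℕ → Finset V) : Prop :=
  (∀ i < r, f i ∈ E) ∧
  (∀ i, i + 1 < r → (f i ∩ f (i + 1)).card = 1) ∧
  (∀ i j, j < r → i + 1 < j → f i ∩ f j = ∅)

/-- An `r`-chain is conflicting under `t` if, for each `i`, the last vertex of
`f i` (largest `t`-value) is the first vertex of `f (i+1)` (smallest `t`-value). -/
def IsConflictingChain {V : Type*} (r : ℕ) (t : V → ℝ) (f : ℕ → Finset V) : Prop :=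
  ∀ i, i + 1 < r → ∃ v, v ∈ f i ∧ v ∈ f (i + 1) ∧
    (∀ w ∈ f i, t w ≤ t v) ∧ (∀ w ∈ f (i + 1), t v ≤ t w)

/-- A conflicting sequence of `k` edges of `E`. -/
def ConfSeq {V : Type*} (E : Finset (Finset V)) (t : V → ℝ) (k : ℕ)
    (g : ℕ → Finset V) : Prop :=
  (∀ i < k, g i ∈ E) ∧ ∀ i, i + 1 < k → ∃ v, v ∈ g i ∧ v ∈ g (i + 1) ∧
    (∀ w ∈ g i, t w ≤ t v) ∧ (∀ w ∈ g (i + 1), t v ≤ t w)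

lemma isRChain_of_confSeq {V : Type*} [DecidableEq V] {n r : ℕ} (hn : 2 ≤ n)
    {E : Finset (Finset V)} (hE : ∀ e ∈ E, e.card = n) {t : V → ℝ}
    (ht : Function.Injective t) {g : ℕ → Finset V} (h : ConfSeq E t r g) :
    IsRChain r E g := by
  have hcard : ∀ i < r, 2 ≤ (g i).card := fun i hi => by
    rw [hE _ (h.1 i hi)]; exact hn
  choose b hb₁ hb₂ hb₃ hb₄ using h.2
  have hstrict : ∀ i (hi : i + 1 < r) (hi' : i + 1 + 1 < r),
      t (b i hi) < t (b (i + 1) hi') := by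
    intro i hi hi'
    have h1 : t (b i hi) ≤ t (b (i + 1) hi') := hb₄ i hi _ (hb₁ (i + 1) hi')
    rcases h1.lt_or_eq with h' | h'
    · exact h'
    · exfalso
      have hsub : g (i + 1) ⊆ {b i hi} := by
        intro w hw
        have h2 : t w ≤ t (b (i + 1) hi') := hb₃ (i + 1) hi' w hw
        have h3 : t (b i hi) ≤ t w := hb₄ i hi w hw
        rw [← h'] at h2
        exact Finset.mem_singleton.2 (ht (le_antisymm h2 h3))
      have := (hcard (i + 1) (by omega)).trans (Finset.card_le_card hsub)
      simp at this
  have hlt : ∀ i j (hi : i + 1 < r) (hj : j + 1 < r), i < j →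
      t (b i hi) < t (b j hj) := by
    intro i j
    induction j with
    | zero => omega
    | succ m ih =>
      intro hi hj hij
      rcases Nat.lt_succ_iff_lt_or_eq.mp hij with h' | h'
      · have hm : m + 1 < r := by omega
        exact (ih hi hm h').trans (hstrict m hm hj)
      · subst h'; exact hstrict i hi hj
  refine ⟨h.1, ?_, ?_⟩
  · intro i hi
    have : g i ∩ g (i + 1) = {b i hi} := by
      ext w
      simp only [Finset.mem_inter, Finset.mem_singleton]
      constructor
      · rintro ⟨h1, h2⟩
        exact ht (le_antisymm (hb₃ i hi w h1) (hb₄ i hi w h2))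
      · rintro rfl; exact ⟨hb₁ i hi, hb₂ i hi⟩
    rw [this, Finset.card_singleton]
  · intro i j hj hij
    rw [Finset.eq_empty_iff_forall_notMem]
    intro w hw
    rw [Finset.mem_inter] at hw
    have hi : i + 1 < r := by omega
    have hj1 : (j - 1) + 1 < r := by omega
    have e1 : t w ≤ t (b i hi) := hb₃ i hi w hw.1
    have e2 : t (b (j - 1) hj1) ≤ t w := by
      have := hb₄ (j - 1) hj1 w
      rw [show j - 1 + 1 = j from by omega] at this
      exact this hw.2
    have e3 : t (b i hi) < t (b (j - 1) hj1) := hlt i (j - 1) hi hj1 (by omega)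
    linarith

/-- If `t : V → ℝ` is injective and no `r`-chain of edges of an `n`-uniform
hypergraph (`r, n ≥ 2`) is conflicting under `t`, then the hypergraph is
`r`-colorable. -/
theorem r_colorable_of_no_conflicting_chain (r n : ℕ) (hr : 2 ≤ r) (hn : 2 ≤ n)
    (V : Type) [DecidableEq V] (E : Finset (Finset V)) (hE : ∀ e ∈ E, e.card = n)
    (t : V → ℝ) (ht : Function.Injective t)
    (hconf : ¬ ∃ f : ℕ → Finset V, IsRChain r E f ∧ IsConflictingChain r t f) :
    IsRColorable r E := by
  classical
  set P : V → ℕ → Prop := fun v k => ∃ g : ℕ → Finset V, ConfSeq E t k g ∧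
    (k ≠ 0 → v ∈ g (k - 1) ∧ ∀ w ∈ g (k - 1), t w ≤ t v) with hPdef
  have hP0 : ∀ v, P v 0 :=
    fun v => ⟨fun _ => ∅, ⟨fun i h => absurd h (by omega), fun i h => absurd h (by omega)⟩,
      fun h => absurd rfl h⟩
  have hPbound : ∀ v k, P v k → k ≤ r - 1 := by
    rintro v k ⟨g, hg, -⟩
    by_contra h
    have hk : r ≤ k := by omega
    have hsub : ConfSeq E t r g :=
      ⟨fun i hi => hg.1 i (lt_of_lt_of_le hi hk), fun i hi => hg.2 i (by omega)⟩
    exact hconf ⟨g, isRChain_of_confSeq hn hE ht hsub, hsub.2⟩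
  set ℓ : V → ℕ := fun v => Nat.findGreatest (P v) (r - 1) with hℓdef
  have hℓP : ∀ v, P v (ℓ v) := fun v =>
    Nat.findGreatest_spec (Nat.zero_le _) (hP0 v)
  have hℓlt : ∀ v, ℓ v < r := fun v =>
    lt_of_le_of_lt (Nat.findGreatest_le _) (by omega)
  refine ⟨fun v => ⟨ℓ v, hℓlt v⟩, ?_⟩
  intro e he
  have hne : e.Nonempty := Finset.card_pos.1 (by rw [hE e he]; omega)
  obtain ⟨v, hv, hvmax⟩ := Finset.exists_max_image e t hne
  obtain ⟨u, hu, humin⟩ := Finset.exists_min_image e t hne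
  refine ⟨u, hu, v, hv, ?_⟩
  have key : P v (ℓ u + 1) := by
    obtain ⟨g, hg, hend⟩ := hℓP u
    refine ⟨fun i => if i < ℓ u then g i else e, ⟨?_, ?_⟩, ?_⟩
    · intro i hi
      by_cases h : i < ℓ u
      · simpa [h] using hg.1 i h
      · simpa [h] using he
    · intro i hi
      by_cases h : i + 1 < ℓ u
      · have hi' : i < ℓ u := by omega
        simp only [if_pos h, if_pos hi']
        exact hg.2 i h
      · have hik : i + 1 = ℓ u := by omega
        have hk0 : ℓ u ≠ 0 := by omega
        have hi' : i < ℓ u := by omega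
        obtain ⟨hu', humax⟩ := hend hk0
        have hgi : g i = g (ℓ u - 1) := by congr 1; omega
        have h2 : ¬ (i + 1 < ℓ u) := h
        refine ⟨u, ?_, ?_, ?_, ?_⟩
        · simp only [if_pos hi', hgi]; exact hu'
        · simp only [if_neg h2]; exact hu
        · intro w hw; simp only [if_pos hi', hgi] at hw; exact humax w hw
        · intro w hw; simp only [if_neg h2] at hw; exact humin w hw
    · intro _
      have h3 : ¬ (ℓ u + 1 - 1 < ℓ u) := by omega
      constructor
      · simp only [if_neg h3]; exact hv
      · intro w hw; simp only [if_neg h3] at hw; exact hvmax w hw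
  have h1 : ℓ u + 1 ≤ ℓ v := Nat.le_findGreatest (hPbound v _ key) key
  simp only [ne_eq, Fin.mk.injEq]
  omega
end

section
/- Let H = (V,E) be an n-uniform hypergraph with V finite, let p ∈ (0,1), and let (t_v)_{v∈V} be independent random variables, each uniformly distributed on [0,1]. Then the probability that there exist edges e, f with |e ∩ f| = 1 such that the common vertex v of e and f satisfies t_v = max_{w∈e} t_w, t_v = min_{w∈f} t_w, and t_v ∈ [(1−p)/2, (1+p)/2], is at most |E|²·p. -/
open MeasureTheory

/-- The joint distribution of independent birth times `(t_v)_{v ∈ V}`, each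
uniformly distributed on `[0,1]`: the product of uniform measures on `[0,1]`. -/
noncomputable def birthTimeMeasure (V : Type*) [Fintype V] : Measure (V → ℝ) :=
  Measure.pi fun _ => volume.restrict (Set.Icc (0 : ℝ) 1)

lemma sum_sum_ofReal_le {α : Type*} (s : Finset α) (p : ℝ) :
    ∑ _e ∈ s, ∑ _f ∈ s, ENNReal.ofReal p ≤ ENNReal.ofReal ((s.card : ℝ) ^ 2 * p) := by
  rcases le_or_gt p 0 with h | h
  · simp [ENNReal.ofReal_eq_zero.mpr h]
  · simp only [Finset.sum_const, nsmul_eq_mul]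
    rw [ENNReal.ofReal_mul (by positivity), ENNReal.ofReal_pow (by positivity),
      ENNReal.ofReal_natCast, sq, ← mul_assoc]

/-- For an `n`-uniform hypergraph with finite vertex set `V` and independent
uniform-`[0,1]` birth times, the probability that there exist edges `e, f` with
`e ∩ f = {v}` such that `t v` is the largest birth time in `e`, the smallest
birth time in `f`, and lies in `[(1-p)/2, (1+p)/2]`, is at most `|E|²·p`. -/
theorem middle_conflict_probability (n : ℕ) (V : Type) [Fintype V] [DecidableEq V]
    (E : Finset (Finset V)) (hE : ∀ e ∈ E, e.card = n)
    (p : ℝ) (hp : p ∈ Set.Ioo (0 : ℝ) 1) :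
    birthTimeMeasure V
      {t : V → ℝ | ∃ e ∈ E, ∃ f ∈ E, ∃ v, e ∩ f = {v} ∧
        (∀ w ∈ e, t w ≤ t v) ∧ (∀ w ∈ f, t v ≤ t w) ∧
        t v ∈ Set.Icc ((1 - p) / 2) ((1 + p) / 2)}
      ≤ ENNReal.ofReal ((E.card : ℝ) ^ 2 * p) := by
  obtain ⟨hp0, hp1⟩ := hp
  set a : ℝ := (1 - p) / 2 with ha
  set b : ℝ := (1 + p) / 2 with hb
  -- measure of a single-coordinate cylinder
  have key : ∀ v : V, birthTimeMeasure V {t : V → ℝ | t v ∈ Set.Icc a b}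
      = ENNReal.ofReal p := by
    intro v
    have h1 : {t : V → ℝ | t v ∈ Set.Icc a b} = Function.eval v ⁻¹' Set.Icc a b := rfl
    rw [h1, Set.eval_preimage, birthTimeMeasure, Measure.pi_pi]
    rw [Finset.prod_eq_single v]
    · rw [Function.update_self, Measure.restrict_apply measurableSet_Icc]
      have hsub : Set.Icc a b ∩ Set.Icc (0:ℝ) 1 = Set.Icc a b := by
        apply Set.inter_eq_left.mpr
        apply Set.Icc_subset_Icc
        · rw [ha]; linarith
        · rw [hb]; linarith
      rw [hsub, Real.volume_Icc]
      congr 1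
      rw [ha, hb]; ring
    · intro i _ hi
      rw [Function.update_of_ne hi, Measure.restrict_apply_univ, Real.volume_Icc]
      norm_num
    · intro h; exact absurd (Finset.mem_univ v) h
  -- the per-pair events
  set g : Finset V → Finset V → Set (V → ℝ) := fun e f =>
    {t : V → ℝ | ∃ v, e ∩ f = {v} ∧
      (∀ w ∈ e, t w ≤ t v) ∧ (∀ w ∈ f, t v ≤ t w) ∧ t v ∈ Set.Icc a b} with hg
  have hcover : {t : V → ℝ | ∃ e ∈ E, ∃ f ∈ E, ∃ v, e ∩ f = {v} ∧
        (∀ w ∈ e, t w ≤ t v) ∧ (∀ w ∈ f, t v ≤ t w) ∧ t v ∈ Set.Icc a b}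
      ⊆ ⋃ e ∈ E, ⋃ f ∈ E, g e f := by
    rintro t ⟨e, he, f, hf, v, h⟩
    exact Set.mem_biUnion he (Set.mem_biUnion hf ⟨v, h⟩)
  have hbound : ∀ e f : Finset V, birthTimeMeasure V (g e f) ≤ ENNReal.ofReal p := by
    intro e f
    by_cases h : ∃ v, e ∩ f = {v}
    · obtain ⟨v0, hv0⟩ := h
      have hsub : g e f ⊆ {t : V → ℝ | t v0 ∈ Set.Icc a b} := by
        rintro t ⟨v, hv, _, _, hmem⟩
        have : v = v0 := by
          have := hv0.symm.trans hv
          exact (Finset.singleton_injective this).symm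
        rwa [this] at hmem
      exact le_of_le_of_eq (measure_mono hsub) (key v0)
    · have : g e f = ∅ := by
        ext t
        simp only [hg, Set.mem_setOf_eq, Set.mem_empty_iff_false, iff_false]
        rintro ⟨v, hv, -⟩
        exact h ⟨v, hv⟩
      simp [this]
  refine le_trans (measure_mono hcover) ?_
  refine le_trans (measure_biUnion_finset_le _ _) ?_
  refine le_trans (Finset.sum_le_sum fun e _ => measure_biUnion_finset_le _ _) ?_
  refine le_trans (Finset.sum_le_sum fun e _ => Finset.sum_le_sum fun f _ => hbound e f) ?_
  exact sum_sum_ofReal_le E p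
end

section
/- Fix a real number c > 0. For n ≥ 2 define k_n = c·√(n/ln n) and p_n = ln(n/k_n)/n. Then lim_{n→∞} ( k_n·(1−p_n)^n + k_n²·p_n ) = c²/2. -/
open Real Filter

/-- Fix `c > 0`.  With `k n = c·√(n / ln n)` and `p n = ln(n / k n) / n`, the
quantity `k n · (1 - p n)^n + (k n)² · p n` tends to `c²/2` as `n → ∞`. -/
theorem limit_of_optimized_bound (c : ℝ) (hc : 0 < c) :
    Filter.Tendsto
      (fun n : ℕ =>
        (c * Real.sqrt ((n : ℝ) / Real.log n)) *
            (1 - Real.log ((n : ℝ) / (c * Real.sqrt ((n : ℝ) / Real.log n))) / (n : ℝ)) ^ n +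
          (c * Real.sqrt ((n : ℝ) / Real.log n)) ^ 2 *
            (Real.log ((n : ℝ) / (c * Real.sqrt ((n : ℝ) / Real.log n))) / (n : ℝ)))
      Filter.atTop (nhds (c ^ 2 / 2)) := by
  have hlogn : Tendsto (fun n : ℕ => Real.log n) atTop atTop :=
    Real.tendsto_log_atTop.comp tendsto_natCast_atTop_atTop
  -- n / log n → ∞
  have hquot : Tendsto (fun n : ℕ => (n : ℝ) / Real.log n) atTop atTop := by
    have h1 : Tendsto (fun x : ℝ => Real.exp x / x ^ 1) atTop atTop :=
      Real.tendsto_exp_div_pow_atTop 1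
    refine (h1.comp hlogn).congr' ?_
    filter_upwards [eventually_ge_atTop 1] with n hn
    have hn' : (1:ℝ) ≤ n := by exact_mod_cast hn
    simp [Function.comp, Real.exp_log (by linarith : (0:ℝ) < (n:ℝ))]
  -- basic eventual facts, for n ≥ 3 and n/log n large
  have hev : ∀ᶠ n : ℕ in atTop,
      (16 ≤ n ∧ 1 / c ^ 2 ≤ (n : ℝ) / Real.log n) ∧ -2 * Real.log c ≤ (n : ℝ) :=
    ((eventually_ge_atTop 16).and (hquot.eventually_ge_atTop _)).and
      (tendsto_natCast_atTop_atTop.eventually_ge_atTop _)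
  have key : ∀ n : ℕ, 16 ≤ n → 1 / c ^ 2 ≤ (n : ℝ) / Real.log n →
      -2 * Real.log c ≤ (n : ℝ) →
      (0 < Real.log n) ∧
      ((c * Real.sqrt ((n : ℝ) / Real.log n)) ^ 2 = c ^ 2 * ((n : ℝ) / Real.log n)) ∧
      (1 ≤ c * Real.sqrt ((n : ℝ) / Real.log n)) ∧
      (Real.log ((n : ℝ) / (c * Real.sqrt ((n : ℝ) / Real.log n))) =
        Real.log n / 2 - Real.log c + Real.log (Real.log n) / 2) ∧
      (Real.log ((n : ℝ) / (c * Real.sqrt ((n : ℝ) / Real.log n))) ≤ (n : ℝ)) := by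
    intro n hn3 hnc hcn
    have hn0 : (0:ℝ) < n := by positivity
    have hn3' : (16:ℝ) ≤ n := by exact_mod_cast hn3
    have hL : 1 < Real.log n := by
      have : Real.exp 1 < 3 := lt_trans Real.exp_one_lt_d9 (by norm_num)
      calc 1 < Real.log 3 := (Real.lt_log_iff_exp_lt (by norm_num)).2 this
        _ ≤ Real.log n := Real.log_le_log (by norm_num) (by linarith)
    have hL0 : 0 < Real.log n := by linarith
    have hx0 : 0 < (n : ℝ) / Real.log n := by positivity
    have hsq : (c * Real.sqrt ((n : ℝ) / Real.log n)) ^ 2 = c ^ 2 * ((n : ℝ) / Real.log n) := by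
      rw [mul_pow, Real.sq_sqrt hx0.le]
    have hk1 : 1 ≤ c * Real.sqrt ((n : ℝ) / Real.log n) := by
      have h1 : Real.sqrt (1 / c ^ 2) ≤ Real.sqrt ((n : ℝ) / Real.log n) :=
        Real.sqrt_le_sqrt hnc
      have h2 : Real.sqrt (1 / c ^ 2) = 1 / c := by
        rw [one_div, one_div, Real.sqrt_inv, Real.sqrt_sq hc.le]
      calc (1:ℝ) = c * (1 / c) := by rw [mul_one_div, div_self hc.ne']
        _ ≤ c * Real.sqrt ((n : ℝ) / Real.log n) := by
            rw [← h2]; exact mul_le_mul_of_nonneg_left h1 hc.le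
    have hlogk : Real.log (c * Real.sqrt ((n : ℝ) / Real.log n)) =
        Real.log c + (Real.log n - Real.log (Real.log n)) / 2 := by
      rw [Real.log_mul hc.ne' (by positivity), Real.log_sqrt hx0.le,
        Real.log_div hn0.ne' hL0.ne']
    have hlgeq : Real.log ((n : ℝ) / (c * Real.sqrt ((n : ℝ) / Real.log n))) =
        Real.log n / 2 - Real.log c + Real.log (Real.log n) / 2 := by
      rw [Real.log_div hn0.ne' (by positivity), hlogk]
      ring
    refine ⟨hL0, hsq, hk1, hlgeq, ?_⟩
    have hs4 : (4:ℝ) ≤ Real.sqrt n := by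
      have h := Real.sqrt_le_sqrt hn3'
      rwa [show (16:ℝ) = 4 ^ 2 by norm_num, Real.sqrt_sq (by norm_num : (0:ℝ) ≤ 4)] at h
    have hsn : Real.sqrt n ≤ (n:ℝ) / 4 := by
      have h := Real.sq_sqrt hn0.le
      nlinarith [Real.sqrt_nonneg (n:ℝ)]
    have hlogle : Real.log n ≤ (n:ℝ) / 2 := by
      have h := Real.log_le_sub_one_of_pos (show (0:ℝ) < Real.sqrt n by positivity)
      rw [Real.log_sqrt hn0.le] at h
      linarith
    have h1 : Real.log (Real.log n) ≤ Real.log n - 1 :=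
      Real.log_le_sub_one_of_pos hL0
    rw [hlgeq]
    linarith
  -- second term → c²/2
  have h2 : Tendsto (fun n : ℕ =>
      (c * Real.sqrt ((n : ℝ) / Real.log n)) ^ 2 *
        (Real.log ((n : ℝ) / (c * Real.sqrt ((n : ℝ) / Real.log n))) / (n : ℝ)))
      atTop (nhds (c ^ 2 / 2)) := by
    have hloglog : Tendsto (fun n : ℕ => Real.log (Real.log n) / Real.log n)
        atTop (nhds 0) :=
      (Real.isLittleO_log_id_atTop.tendsto_div_nhds_zero).comp hlogn
    have hinvlog : Tendsto (fun n : ℕ => (Real.log n)⁻¹) atTop (nhds 0) :=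
      tendsto_inv_atTop_zero.comp hlogn
    have hlim : Tendsto (fun n : ℕ =>
        c ^ 2 * (1 / 2 - Real.log c * (Real.log n)⁻¹ +
          Real.log (Real.log n) / Real.log n / 2)) atTop (nhds (c ^ 2 / 2)) := by
      have := ((tendsto_const_nhds (x := (1:ℝ)/2)).sub
          ((tendsto_const_nhds (x := Real.log c)).mul hinvlog)).add
          (hloglog.div_const 2)
      have h := this.const_mul (c ^ 2)
      simpa [div_eq_mul_inv] using h
    refine hlim.congr' ?_
    filter_upwards [hev] with n hn
    obtain ⟨hL0, hsq, _, hlg, _⟩ := key n hn.1.1 hn.1.2 hn.2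
    have hn0 : (0:ℝ) < n := by
      have h16 : (16:ℝ) ≤ n := by exact_mod_cast hn.1.1
      linarith
    rw [hsq, hlg]
    field_simp
  -- first term → 0
  have h1 : Tendsto (fun n : ℕ =>
      (c * Real.sqrt ((n : ℝ) / Real.log n)) *
        (1 - Real.log ((n : ℝ) / (c * Real.sqrt ((n : ℝ) / Real.log n))) / (n : ℝ)) ^ n)
      atTop (nhds 0) := by
    have hub : Tendsto (fun n : ℕ => c ^ 2 * (Real.log n)⁻¹) atTop (nhds 0) := by
      simpa using (tendsto_inv_atTop_zero.comp hlogn).const_mul (c ^ 2)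
    refine tendsto_of_tendsto_of_tendsto_of_le_of_le' tendsto_const_nhds hub ?_ ?_
    · -- lower bound 0
      filter_upwards [hev] with n hn
      obtain ⟨hL0, hsq, hk1, hlg, hub'⟩ := key n hn.1.1 hn.1.2 hn.2
      have hn0 : (0:ℝ) < n := by
        have h16 : (16:ℝ) ≤ n := by exact_mod_cast hn.1.1
        linarith
      have hp1 : Real.log ((n : ℝ) / (c * Real.sqrt ((n : ℝ) / Real.log n))) / (n : ℝ) ≤ 1 :=
        div_le_one_of_le₀ hub' hn0.le
      have : 0 ≤ 1 - Real.log ((n : ℝ) / (c * Real.sqrt ((n : ℝ) / Real.log n))) / (n : ℝ) := by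
        linarith
      positivity
    ·
      filter_upwards [hev] with n hn
      obtain ⟨hL0, hsq, hk1, hlg, hub'⟩ := key n hn.1.1 hn.1.2 hn.2
      set k := c * Real.sqrt ((n : ℝ) / Real.log n) with hkdef
      have hn0 : (0:ℝ) < n := by
        have h16 : (16:ℝ) ≤ n := by exact_mod_cast hn.1.1
        linarith
      have hk0 : 0 < k := lt_of_lt_of_le one_pos hk1
      set p := Real.log ((n : ℝ) / k) / (n : ℝ) with hpdef
      have hp1 : p ≤ 1 := div_le_one_of_le₀ hub' hn0.le
      have hbase : (0:ℝ) ≤ 1 - p := by linarith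
      have hexp : 1 - p ≤ Real.exp (-p) := by
        have := Real.add_one_le_exp (-p); linarith
      have hpow : (1 - p) ^ n ≤ Real.exp (-p) ^ n := pow_le_pow_left₀ hbase hexp n
      have hepn : Real.exp (-p) ^ n = k / (n:ℝ) := by
        rw [← Real.exp_nat_mul, hpdef]
        have : (n:ℝ) * (-(Real.log ((n : ℝ) / k) / (n:ℝ))) = -Real.log ((n:ℝ)/k) := by
          field_simp
        rw [this, Real.exp_neg, Real.exp_log (by positivity), inv_div]
      have : k * (1 - p) ^ n ≤ k * (k / (n:ℝ)) := by
        refine mul_le_mul_of_nonneg_left ?_ hk0.le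
        rw [← hepn]; exact hpow
      calc k * (1 - p) ^ n ≤ k * (k / (n:ℝ)) := this
        _ = k ^ 2 / (n:ℝ) := by ring
        _ = c ^ 2 * (Real.log n)⁻¹ := by
            rw [hsq]; field_simp
  have := h1.add h2
  simpa using this
end

section
/- Let r ≥ 2 and n ≥ 2 be integers, let p ∈ (0,1), and let t : V → [0,1] be injective on the vertex set of an n-uniform hypergraph. Suppose (f_1,…,f_r) is an r-chain that is conflicting under t, with f_i ∩ f_{i+1} = {x_i} for i = 1,…,r−1, and suppose every edge f_i has length at least (1−p)/r under t. Then for each i = 1,…,r−1, the birth time t(x_i) lies in the interval [(i − i·p)/r, (i + (r−i)·p)/r]. -/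
/-- The length of an edge `e` under `t`: the length of the shortest interval
containing all birth times of vertices of `e`, i.e. `max_{v ∈ e} t v − min_{v ∈ e} t v`. -/
noncomputable def edgeLength {V : Type*} (t : V → ℝ) (e : Finset V) : ℝ :=
  sSup (t '' ↑e) - sInf (t '' ↑e)

/-- Suppose `(f 0, …, f (r-1))` is a conflicting `r`-chain under an injective
`t : V → [0,1]`, with `f i ∩ f (i+1) = {x i}`, and every edge of the chain has
length at least `(1-p)/r`.  Then each `t (x i)` lies in the interval
`[((i+1) − (i+1)p)/r, ((i+1) + (r−(i+1))p)/r]` (here `x i` is the paper's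
`x_{i+1}`, `i = 0, …, r-2`). -/
theorem chain_intersection_birth_times (r n : ℕ) (hr : 2 ≤ r) (hn : 2 ≤ n)
    (p : ℝ) (hp : p ∈ Set.Ioo (0 : ℝ) 1)
    (V : Type) [DecidableEq V] (E : Finset (Finset V)) (hE : ∀ e ∈ E, e.card = n)
    (t : V → ℝ) (ht : Function.Injective t) (ht01 : ∀ v, t v ∈ Set.Icc (0 : ℝ) 1)
    (f : ℕ → Finset V) (hchain : IsRChain r E f) (hconf : IsConflictingChain r t f)
    (x : ℕ → V) (hx : ∀ i, i + 1 < r → f i ∩ f (i + 1) = {x i})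
    (hlen : ∀ i < r, (1 - p) / r ≤ edgeLength t (f i)) :
    ∀ i, i + 1 < r →
      t (x i) ∈ Set.Icc
        (((i : ℝ) + 1) * (1 - p) / r)
        ((((i : ℝ) + 1) + ((r : ℝ) - ((i : ℝ) + 1)) * p) / r) := by
  obtain ⟨hp0, hp1⟩ := hp
  have hrR : (0:ℝ) < r := by exact_mod_cast Nat.lt_of_lt_of_le (by norm_num) hr
  obtain ⟨hmem, hcard1, hdisj⟩ := hchain
  have hne : ∀ i < r, (t '' ↑(f i)).Nonempty := by
    intro i hi
    have hc := hE _ (hmem i hi)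
    have : (f i).Nonempty := by rw [← Finset.card_pos, hc]; omega
    exact (this.to_set).image t
  -- x i is greatest of f i and least of f (i+1)
  have hgl : ∀ i, i + 1 < r → IsGreatest (t '' ↑(f i)) (t (x i)) ∧
      IsLeast (t '' ↑(f (i+1))) (t (x i)) := by
    intro i hi
    obtain ⟨v, hv1, hv2, hmax, hmin⟩ := hconf i hi
    have hv : v = x i := by
      have h := Finset.mem_inter.mpr ⟨hv1, hv2⟩
      rw [hx i hi] at h; simpa using h
    subst hv
    refine ⟨⟨⟨x i, hv1, rfl⟩, ?_⟩, ⟨⟨x i, hv2, rfl⟩, ?_⟩⟩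
    · rintro y ⟨w, hw, rfl⟩; exact hmax w hw
    · rintro y ⟨w, hw, rfl⟩; exact hmin w hw
  have hsup : ∀ i, i + 1 < r → sSup (t '' ↑(f i)) = t (x i) :=
    fun i hi => (hgl i hi).1.csSup_eq
  have hinf : ∀ i, i + 1 < r → sInf (t '' ↑(f (i+1))) = t (x i) :=
    fun i hi => (hgl i hi).2.csInf_eq
  have hkey : ∀ i < r, sInf (t '' ↑(f i)) + (1 - p) / r ≤ sSup (t '' ↑(f i)) := by
    intro i hi
    have := hlen i hi
    unfold edgeLength at this
    linarith
  have hinf0 : ∀ i < r, (0:ℝ) ≤ sInf (t '' ↑(f i)) := by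
    intro i hi
    refine le_csInf (hne i hi) ?_
    rintro y ⟨w, hw, rfl⟩; exact (ht01 w).1
  have hsup1 : ∀ i < r, sSup (t '' ↑(f i)) ≤ 1 := by
    intro i hi
    refine csSup_le (hne i hi) ?_
    rintro y ⟨w, hw, rfl⟩; exact (ht01 w).2
  -- lower bound by induction
  have lower : ∀ i, i + 1 < r → ((i : ℝ) + 1) * (1 - p) / r ≤ t (x i) := by
    intro i
    induction i with
    | zero =>
      intro hi
      have h1 := hkey 0 (by omega)
      have h2 := hinf0 0 (by omega)
      rw [hsup 0 hi] at h1
      push_cast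
      have e : ((0:ℝ) + 1) * (1 - p) / r = (1 - p) / r := by ring
      rw [e]
      linarith
    | succ i ih =>
      intro hi
      have hi' : i + 1 < r := by omega
      have h1 := hkey (i+1) (by omega)
      rw [hsup (i+1) hi, hinf i hi'] at h1
      have h2 := ih hi'
      push_cast
      have e : ((i:ℝ) + 1 + 1) * (1 - p) / r = ((i:ℝ) + 1) * (1 - p) / r + (1 - p) / r := by
        ring
      rw [e]
      linarith
  -- upper bound by descending induction
  have upper : ∀ d i, i + 1 < r → r - 2 - i ≤ d →
      t (x i) ≤ (((i : ℝ) + 1) + ((r : ℝ) - ((i : ℝ) + 1)) * p) / r := by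
    intro d
    induction d with
    | zero =>
      intro i hi hd
      have hieq : i + 2 = r := by omega
      have h1 := hkey (i+1) (by omega)
      rw [hinf i hi] at h1
      have h2 := hsup1 (i+1) (by omega)
      have hrr : (r : ℝ) = (i : ℝ) + 2 := by exact_mod_cast congrArg (Nat.cast : ℕ → ℝ) hieq.symm
      have hne2 : ((i:ℝ) + 2) ≠ 0 := by positivity
      have e : (((i:ℝ)) + 1 + ((r:ℝ) - ((i:ℝ) + 1)) * p) / r = 1 - (1 - p) / r := by
        rw [hrr]; field_simp; ring
      rw [e]
      linarith
    | succ d ih =>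
      intro i hi hd
      by_cases hcase : i + 2 < r
      · have h1 := hkey (i+1) (by omega)
        rw [hinf i hi, hsup (i+1) hcase] at h1
        have h2 := ih (i+1) hcase (by omega)
        push_cast at h2 ⊢
        have e : (((i:ℝ)) + 1 + ((r:ℝ) - ((i:ℝ) + 1)) * p) / r =
            (((i:ℝ)) + 1 + 1 + ((r:ℝ) - ((i:ℝ) + 1 + 1)) * p) / r - (1 - p) / r := by
          ring
        rw [e]
        linarith
      · have hieq : i + 2 = r := by omega
        have h1 := hkey (i+1) (by omega)
        rw [hinf i hi] at h1
        have h2 := hsup1 (i+1) (by omega)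
        have hrr : (r : ℝ) = (i : ℝ) + 2 := by exact_mod_cast congrArg (Nat.cast : ℕ → ℝ) hieq.symm
        have hne2 : ((i:ℝ) + 2) ≠ 0 := by positivity
        have e : (((i:ℝ)) + 1 + ((r:ℝ) - ((i:ℝ) + 1)) * p) / r = 1 - (1 - p) / r := by
          rw [hrr]; field_simp; ring
        rw [e]
        linarith
  intro i hi
  exact ⟨lower i hi, upper (r - 2 - i) i hi le_rfl⟩
end

section
/- Let r ≥ 2, n ≥ 3 be integers, let p ∈ (0,1), let (f_1,…,f_r) be an r-chain of n-element edges with f_i ∩ f_{i+1} = {x_i}, and let (t_v) be independent random variables uniformly distributed on [0,1], indexed by the vertices of f_1 ∪ … ∪ f_r. Then the probability that the chain is conflicting under t and t(x_i) ∈ [(i − i·p)/r, (i + (r−i)·p)/r] for every i = 1,…,r−1 is at most p^(r−1) · r^(−r·(n−2)). -/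
open MeasureTheory

noncomputable def chainUnif : Measure ℝ := volume.restrict (Set.Icc (0:ℝ) 1)

instance : IsProbabilityMeasure chainUnif :=
  ⟨by simp [chainUnif, Measure.restrict_apply_univ, Real.volume_Icc]⟩

lemma chainUnif_le_one (s : Set ℝ) : chainUnif s ≤ 1 := prob_le_one

lemma chainUnif_Iic (c : ℝ) : chainUnif (Set.Iic c) ≤ ENNReal.ofReal c := by
  rw [chainUnif, Measure.restrict_apply measurableSet_Iic]
  calc volume (Set.Iic c ∩ Set.Icc 0 1) ≤ volume (Set.Icc 0 c) := by
        apply measure_mono; rintro y ⟨h1, h2, h3⟩; exact ⟨h2, h1⟩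
    _ = ENNReal.ofReal c := by rw [Real.volume_Icc, sub_zero]

lemma chainUnif_Ici (c : ℝ) : chainUnif (Set.Ici c) ≤ ENNReal.ofReal (1 - c) := by
  rw [chainUnif, Measure.restrict_apply measurableSet_Ici]
  calc volume (Set.Ici c ∩ Set.Icc 0 1) ≤ volume (Set.Icc c 1) := by
        apply measure_mono; rintro y ⟨h1, h2, h3⟩; exact ⟨h1, h3⟩
    _ = ENNReal.ofReal (1 - c) := Real.volume_Icc

lemma chainUnif_Icc (c d : ℝ) : chainUnif (Set.Icc c d) ≤ ENNReal.ofReal (d - c) := by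
  rw [chainUnif, Measure.restrict_apply measurableSet_Icc]
  calc volume (Set.Icc c d ∩ Set.Icc 0 1) ≤ volume (Set.Icc c d) :=
        measure_mono Set.inter_subset_left
    _ = ENNReal.ofReal (d - c) := Real.volume_Icc

lemma chain_amgm (r : ℕ) (hr : 0 < r) (g : ℕ → ℝ) (hg : ∀ i ∈ Finset.range r, 0 ≤ g i)
    (hsum : ∑ i ∈ Finset.range r, g i = 1) :
    ∏ i ∈ Finset.range r, g i ≤ ((r : ℝ)⁻¹) ^ r := by
  have hrR : (0:ℝ) < r := by exact_mod_cast hr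
  have key := Real.geom_mean_le_arith_mean_weighted (Finset.range r)
      (fun _ => (r : ℝ)⁻¹) g (fun i _ => by positivity)
      (by simp [Finset.sum_const, mul_comm]; field_simp) hg
  have h1 : ∑ i ∈ Finset.range r, (r:ℝ)⁻¹ * g i = (r:ℝ)⁻¹ := by
    rw [← Finset.mul_sum, hsum, mul_one]
  rw [h1] at key
  have h2 : ∏ i ∈ Finset.range r, g i ^ ((r:ℝ)⁻¹) =
      (∏ i ∈ Finset.range r, g i) ^ ((r:ℝ)⁻¹) := by
    rw [← Real.finset_prod_rpow _ _ hg]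
  rw [h2] at key
  have hprodnn : 0 ≤ ∏ i ∈ Finset.range r, g i := Finset.prod_nonneg hg
  have := pow_le_pow_left₀ (by positivity) key r
  rwa [← Real.rpow_natCast ((∏ i ∈ Finset.range r, g i) ^ ((r:ℝ)⁻¹)) r,
    ← Real.rpow_mul hprodnn, inv_mul_cancel₀ (ne_of_gt hrR), Real.rpow_one] at this

/-- Let `(f 0, …, f (r-1))` be an `r`-chain of `n`-element edges with
`f i ∩ f (i+1) = {x i}`, and let the birth times of the vertices be independent
and uniform on `[0,1]`.  The probability that the chain is conflicting (each
`x i` has the largest birth time in `f i` and the smallest one in `f (i+1)`) and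
every `t (x i)` lies in `[((i+1) − (i+1)p)/r, ((i+1) + (r−(i+1))p)/r]` is at most
`p^(r-1) · r^(-r(n-2))` (here `x i` is the paper's `x_{i+1}`, `i = 0, …, r-2`). -/
theorem chain_conflict_probability (r n : ℕ) (hr : 2 ≤ r) (hn : 3 ≤ n)
    (p : ℝ) (hp : p ∈ Set.Ioo (0 : ℝ) 1)
    (V : Type) [Fintype V] [DecidableEq V]
    (f : ℕ → Finset V) (hcard : ∀ i < r, (f i).card = n)
    (hinter : ∀ i, i + 1 < r → (f i ∩ f (i + 1)).card = 1)
    (hdisj : ∀ i j, j < r → i + 1 < j → f i ∩ f j = ∅)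
    (x : ℕ → V) (hx : ∀ i, i + 1 < r → f i ∩ f (i + 1) = {x i}) :
    birthTimeMeasure V
      {t : V → ℝ | ∀ i, i + 1 < r →
        (∀ w ∈ f i, t w ≤ t (x i)) ∧ (∀ w ∈ f (i + 1), t (x i) ≤ t w) ∧
        t (x i) ∈ Set.Icc (((i : ℝ) + 1) * (1 - p) / r)
          ((((i : ℝ) + 1) + ((r : ℝ) - ((i : ℝ) + 1)) * p) / r)}
      ≤ ENNReal.ofReal (p ^ (r - 1) * ((r : ℝ) ^ (r * (n - 2)))⁻¹) := by
  classical
  obtain ⟨hp0, hp1⟩ := hp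
  have hr0 : 0 < r := by omega
  have hrR : (0:ℝ) < r := by exact_mod_cast hr0
  have hrne : (r:ℝ) ≠ 0 := ne_of_gt hrR
  set lo : ℕ → ℝ := fun i => ((i : ℝ) + 1) * (1 - p) / r with hlo
  set hi : ℕ → ℝ := fun i => (((i : ℝ) + 1) + ((r : ℝ) - ((i : ℝ) + 1)) * p) / r with hhi
  set A : Set (V → ℝ) := {t : V → ℝ | ∀ i, i + 1 < r →
        (∀ w ∈ f i, t w ≤ t (x i)) ∧ (∀ w ∈ f (i + 1), t (x i) ≤ t w) ∧
        t (x i) ∈ Set.Icc (lo i) (hi i)} with hA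
  -- basic combinatorial facts
  have hxmem : ∀ i, i + 1 < r → x i ∈ f i ∧ x i ∈ f (i + 1) := by
    intro i hir
    have h1 : x i ∈ f i ∩ f (i + 1) := by
      rw [hx i hir]; exact Finset.mem_singleton_self _
    exact Finset.mem_inter.1 h1
  have hxf : ∀ i j, i < r → j + 1 < r → x j ∈ f i → j = i ∨ j + 1 = i := by
    intro i j hir hjr hmem
    by_contra hcon
    push_neg at hcon
    rcases Nat.lt_or_ge j i with h | h
    · have he : f j ∩ f i = ∅ := hdisj j i hir (by omega)
      have : x j ∈ f j ∩ f i := Finset.mem_inter.2 ⟨(hxmem j hjr).1, hmem⟩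
      rw [he] at this; exact absurd this (Finset.notMem_empty _)
    · have he : f i ∩ f (j+1) = ∅ := hdisj i (j+1) (by omega) (by omega)
      have : x j ∈ f i ∩ f (j+1) := Finset.mem_inter.2 ⟨hmem, (hxmem j hjr).2⟩
      rw [he] at this; exact absurd this (Finset.notMem_empty _)
  have hxinj : ∀ i j, i + 1 < r → j + 1 < r → x i = x j → i = j := by
    intro i j hir hjr hij
    have h1 : j = i ∨ j + 1 = i := hxf i j (by omega) hjr (hij ▸ (hxmem i hir).1)
    have h2 : j = i + 1 ∨ j + 1 = i + 1 := hxf (i+1) j hir hjr (hij ▸ (hxmem i hir).2)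
    omega
  set X : Finset V := Finset.image x (Finset.range (r-1)) with hX
  have hXmem : ∀ v, v ∈ X ↔ ∃ i, i + 1 < r ∧ x i = v := by
    intro v
    simp only [hX, Finset.mem_image, Finset.mem_range]
    constructor
    · rintro ⟨i, hi1, hi2⟩; exact ⟨i, by omega, hi2⟩
    · rintro ⟨i, hi1, hi2⟩; exact ⟨i, by omega, hi2⟩
  have hxX : ∀ i, i + 1 < r → x i ∈ X := fun i hir => (hXmem _).2 ⟨i, hir, rfl⟩
  have hXcard : X.card = r - 1 := by
    rw [hX, Finset.card_image_of_injOn, Finset.card_range]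
    intro i hi' j hj' hij
    simp only [Finset.coe_range, Set.mem_Iio] at hi' hj'
    exact hxinj i j (by omega) (by omega) hij
  have hfsdiff : ∀ i, i < r → n - 2 ≤ (f i \ X).card := by
    intro i hir
    have hsub : f i ∩ X ⊆ insert (x (i-1)) {x i} := by
      intro v hv
      obtain ⟨hv1, hv2⟩ := Finset.mem_inter.1 hv
      obtain ⟨j, hj1, hj2⟩ := (hXmem v).1 hv2
      rcases hxf i j hir hj1 (hj2 ▸ (by exact hj2 ▸ hv1)) with h | h
      · subst h; simp [← hj2]
      · have : j = i - 1 := by omega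
        subst this; simp [← hj2]
    have hc2 : (f i ∩ X).card ≤ 2 := by
      calc (f i ∩ X).card ≤ (insert (x (i-1)) ({x i} : Finset V)).card :=
            Finset.card_le_card hsub
        _ ≤ 2 := le_trans (Finset.card_insert_le _ _) (by simp)
    have heq : f i \ X = f i \ (f i ∩ X) := by
      ext v; simp only [Finset.mem_sdiff, Finset.mem_inter]; tauto
    rw [heq, Finset.card_sdiff_of_subset Finset.inter_subset_left, hcard i hir]
    omega
  -- measurability of the event
  have hAmeas : MeasurableSet A := by
    have hrepr : A = ⋂ (i : ℕ), ⋂ (_ : i + 1 < r),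
        ((⋂ w ∈ f i, {t : V → ℝ | t w ≤ t (x i)}) ∩
         ((⋂ w ∈ f (i+1), {t : V → ℝ | t (x i) ≤ t w}) ∩
          ((fun t : V → ℝ => t (x i)) ⁻¹' Set.Icc (lo i) (hi i)))) := by
      ext t
      simp only [hA, Set.mem_setOf_eq, Set.mem_iInter, Set.mem_inter_iff, Set.mem_preimage]
      try tauto
    rw [hrepr]
    refine MeasurableSet.iInter fun i => MeasurableSet.iInter fun _ => ?_
    refine MeasurableSet.inter ?_ (MeasurableSet.inter ?_ ?_)
    · exact MeasurableSet.biInter (Set.to_countable _) fun w _ =>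
        measurableSet_le (measurable_pi_apply w) (measurable_pi_apply (x i))
    · exact MeasurableSet.biInter (Set.to_countable _) fun w _ =>
        measurableSet_le (measurable_pi_apply (x i)) (measurable_pi_apply w)
    · exact measurable_pi_apply (x i) measurableSet_Icc
  -- split the product measure
  set e := MeasurableEquiv.piEquivPiSubtypeProd (fun _ : V => ℝ) (fun v => v ∈ X) with he
  set πX : Measure ({v : V // v ∈ X} → ℝ) := Measure.pi fun _ => chainUnif with hpiX
  set πXc : Measure ({v : V // ¬ v ∈ X} → ℝ) := Measure.pi fun _ => chainUnif with hpiXc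
  have hmp := measurePreserving_piEquivPiSubtypeProd (fun _ : V => chainUnif)
    (fun v => v ∈ X)
  set B := ⇑e.symm ⁻¹' A with hB
  have hBmeas : MeasurableSet B := e.symm.measurable hAmeas
  have heval : ∀ (a : {v : V // v ∈ X} → ℝ) (b : {v : V // ¬ v ∈ X} → ℝ) (v : V),
      e.symm (a, b) v = if h : v ∈ X then a ⟨v, h⟩ else b ⟨v, h⟩ := fun a b v => rfl
  have h1 : birthTimeMeasure V A = (πX.prod πXc) B := by
    have h2 : A = ⇑e ⁻¹' B := by
      rw [hB, ← Set.preimage_comp]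
      simp
    rw [show birthTimeMeasure V = Measure.pi (fun _ : V => chainUnif) from rfl, h2,
      he, hpiX, hpiXc]
    convert hmp.measure_preimage hBmeas.nullMeasurableSet using 2 <;> congr! <;>
      exact Subsingleton.elim _ _
  rw [h1, Measure.prod_apply hBmeas]
  -- coordinates of the `x i` and gap endpoints
  set al : ({v : V // v ∈ X} → ℝ) → ℕ → ℝ :=
    fun a k => if h : x k ∈ X then a ⟨x k, h⟩ else 0 with hal
  set be : ({v : V // v ∈ X} → ℝ) → ℕ → ℝ :=
    fun a j => if j = 0 then 0 else if j ≤ r - 1 then al a (j-1) else 1 with hbe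
  have hbe0 : ∀ a, be a 0 = 0 := fun a => by simp [hbe]
  have hbemid : ∀ a j, 1 ≤ j → j ≤ r - 1 → be a j = al a (j-1) := by
    intro a j h1 h2
    simp only [hbe]
    rw [if_neg (by omega), if_pos h2]
  have hber : ∀ a, be a r = 1 := by
    intro a
    simp only [hbe]
    rw [if_neg (by omega), if_neg (by omega)]
  have halval : ∀ a k (hk : k + 1 < r), al a k = a ⟨x k, hxX k hk⟩ := by
    intro a k hk
    simp only [hal]
    rw [dif_pos (hxX k hk)]
  set T : ({v : V // v ∈ X} → ℝ) → V → Set ℝ := fun a v =>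
    ⋂ k ∈ Finset.range (r-1),
      {s : ℝ | (v ∈ f k → s ≤ al a k) ∧ (v ∈ f (k+1) → al a k ≤ s)} with hT
  set S' : {v : V // v ∈ X} → Set ℝ := fun j =>
    ⋂ i ∈ Finset.range (r-1),
      (if x i = (j : V) then Set.Icc (lo i) (hi i) else Set.univ) with hS
  set G : Set ({v : V // v ∈ X} → ℝ) := Set.pi Set.univ S' with hG
  set C : ENNReal := ENNReal.ofReal (((r:ℝ) ^ (r*(n-2)))⁻¹) with hC
  -- evaluation of the glueing map
  have hevalX : ∀ a b k, k + 1 < r → e.symm (a, b) (x k) = al a k := by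
    intro a b k hk
    rw [heval, dif_pos (hxX k hk), halval a k hk]
  have hevalXc : ∀ a b (w : {v : V // ¬ v ∈ X}), e.symm (a, b) (w : V) = b w := by
    intro a b w
    rw [heval, dif_neg w.2]
  -- per-vertex bound
  have hvert : ∀ a i (v : V), i < r → v ∈ f i → v ∉ X →
      chainUnif (T a v) ≤ min (ENNReal.ofReal (be a (i+1) - be a i)) 1 := by
    intro a i v hir hvf hvX
    refine le_min ?_ (chainUnif_le_one _)
    have hmemT : ∀ s, s ∈ T a v → ∀ k, k < r - 1 →
        (v ∈ f k → s ≤ al a k) ∧ (v ∈ f (k+1) → al a k ≤ s) := by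
      intro s hs k hk
      simp only [hT, Set.mem_iInter, Set.mem_setOf_eq] at hs
      exact hs k (Finset.mem_range.2 hk)
    rcases Nat.eq_zero_or_pos i with h0 | hipos
    · subst h0
      have hsub : T a v ⊆ Set.Iic (al a 0) := fun s hs =>
        (hmemT s hs 0 (by omega)).1 hvf
      have h2 : be a 1 - be a 0 = al a 0 := by
        rw [hbe0, hbemid a 1 le_rfl (by omega)]
        simp
      rw [h2]
      exact le_trans (measure_mono hsub) (chainUnif_Iic _)
    · rcases Nat.lt_or_ge i (r-1) with hmid | hlast
      · -- middle edge
        have hsub : T a v ⊆ Set.Icc (al a (i-1)) (al a i) := by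
          intro s hs
          constructor
          · have := (hmemT s hs (i-1) (by omega)).2
            rw [show i - 1 + 1 = i by omega] at this
            exact this hvf
          · exact (hmemT s hs i hmid).1 hvf
        have h2 : be a (i+1) - be a i = al a i - al a (i-1) := by
          rw [hbemid a (i+1) (by omega) (by omega), hbemid a i (by omega) (by omega)]
          simp
        rw [h2]
        exact le_trans (measure_mono hsub) (chainUnif_Icc _ _)
      · -- last edge, i = r - 1
        have hieq : i = r - 1 := by omega
        have hsub : T a v ⊆ Set.Ici (al a (r-2)) := by
          intro s hs
          have := (hmemT s hs (r-2) (by omega)).2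
          rw [show r - 2 + 1 = r - 1 by omega] at this
          exact this (by rw [← hieq]; exact hvf)
        have h2 : be a (i+1) - be a i = 1 - al a (r-2) := by
          rw [show i + 1 = r by omega, hber, hieq,
            hbemid a (r-1) (by omega) le_rfl, show r - 1 - 1 = r - 2 by omega]
        rw [h2]
        exact le_trans (measure_mono hsub) (chainUnif_Ici _)
  -- the slice is contained in a product set
  have hslice : ∀ a, Prod.mk a ⁻¹' B ⊆
      Set.pi Set.univ (fun w : {v : V // ¬ v ∈ X} => T a (w : V)) := by
    intro a b hb
    have hbA : e.symm (a, b) ∈ A := hb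
    simp only [hA, Set.mem_setOf_eq] at hbA
    intro w _
    simp only [hT, Set.mem_iInter, Set.mem_setOf_eq]
    intro k hk
    have hkr : k + 1 < r := by
      have := Finset.mem_range.1 hk; omega
    obtain ⟨hle, hge, _⟩ := hbA k hkr
    constructor
    · intro hwf
      have := hle (w : V) hwf
      rwa [hevalX a b k hkr, hevalXc a b w] at this
    · intro hwf
      have := hge (w : V) hwf
      rwa [hevalX a b k hkr, hevalXc a b w] at this
  -- the slice is empty off G
  have hsliceG : ∀ a, a ∉ G → Prod.mk a ⁻¹' B = ∅ := by
    intro a ha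
    rw [Set.eq_empty_iff_forall_notMem]
    intro b hb
    have hbA : e.symm (a, b) ∈ A := hb
    simp only [hA, Set.mem_setOf_eq] at hbA
    apply ha
    rw [hG]
    intro j _
    simp only [hS, Set.mem_iInter]
    intro i hi'
    split_ifs with hxij
    · have hir : i + 1 < r := by have := Finset.mem_range.1 hi'; omega
      have := (hbA i hir).2.2
      rw [hevalX a b i hir, halval a i hir] at this
      have hj : (⟨x i, hxX i (by omega)⟩ : {v : V // v ∈ X}) = j := Subtype.ext hxij
      rwa [hj] at this
    · exact Set.mem_univ _
  -- product bound over the free vertices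
  have hprodbound : ∀ a, (∏ w : {v : V // ¬ v ∈ X}, chainUnif (T a (w : V))) ≤ C := by
    intro a
    set gb : ℕ → ENNReal := fun i => min (ENNReal.ofReal (be a (i+1) - be a i)) 1 with hgb
    have hconv : (∏ w : {v : V // ¬ v ∈ X}, chainUnif (T a (w : V))) =
        ∏ v ∈ Xᶜ, chainUnif (T a v) :=
      (Finset.prod_subtype Xᶜ (by simp) (fun v => chainUnif (T a v))).symm
    rw [hconv]
    set D := (Finset.range r).biUnion (fun i => f i \ X) with hD
    have hDsub : D ⊆ Xᶜ := by
      intro v hv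
      simp only [hD, Finset.mem_biUnion, Finset.mem_sdiff] at hv
      obtain ⟨i, _, _, h⟩ := hv
      exact Finset.mem_compl.2 h
    have hstep1 : ∏ v ∈ Xᶜ, chainUnif (T a v) ≤ ∏ v ∈ D, chainUnif (T a v) := by
      rw [← Finset.prod_sdiff hDsub]
      calc (∏ v ∈ Xᶜ \ D, chainUnif (T a v)) * ∏ v ∈ D, chainUnif (T a v)
          ≤ 1 * ∏ v ∈ D, chainUnif (T a v) :=
            mul_le_mul_left
              (Finset.prod_le_one (fun v _ => zero_le) fun v _ => chainUnif_le_one _) _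
        _ = ∏ v ∈ D, chainUnif (T a v) := one_mul _
    have hkeydisj : ∀ i j, i < j → j < r → Disjoint (f i \ X) (f j \ X) := by
      intro i j hij hjr
      rw [Finset.disjoint_left]
      rintro v hv1 hv2
      obtain ⟨hvfi, hvX⟩ := Finset.mem_sdiff.1 hv1
      obtain ⟨hvfj, _⟩ := Finset.mem_sdiff.1 hv2
      rcases eq_or_lt_of_le (Nat.succ_le_of_lt hij) with h | h
      · have hir : i + 1 < r := by omega
        have hvin : v ∈ f i ∩ f (i+1) := Finset.mem_inter.2
          ⟨hvfi, by rw [show i + 1 = j from h]; exact hvfj⟩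
        rw [hx i hir] at hvin
        have := Finset.mem_singleton.1 hvin
        exact hvX (by rw [this]; exact hxX i hir)
      · have he' := hdisj i j hjr h
        have hvin : v ∈ f i ∩ f j := Finset.mem_inter.2 ⟨hvfi, hvfj⟩
        rw [he'] at hvin
        exact absurd hvin (Finset.notMem_empty _)
    have hpd : (↑(Finset.range r) : Set ℕ).PairwiseDisjoint (fun i => f i \ X) := by
      intro i hi' j hj' hne
      simp only [Finset.coe_range, Set.mem_Iio] at hi' hj'
      rcases lt_or_gt_of_ne hne with h | h
      · exact hkeydisj i j h hj'
      · exact (hkeydisj j i h hi').symm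
    have hstep2 : ∏ v ∈ D, chainUnif (T a v) =
        ∏ i ∈ Finset.range r, ∏ v ∈ f i \ X, chainUnif (T a v) :=
      Finset.prod_biUnion hpd
    have hstep3 : ∀ i ∈ Finset.range r,
        (∏ v ∈ f i \ X, chainUnif (T a v)) ≤ gb i ^ (n-2) := by
      intro i hi'
      have hir : i < r := Finset.mem_range.1 hi'
      have h1 : ∏ v ∈ f i \ X, chainUnif (T a v) ≤ gb i ^ (f i \ X).card :=
        Finset.prod_le_pow_card _ _ _ (fun v hv => by
          obtain ⟨hv1, hv2⟩ := Finset.mem_sdiff.1 hv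
          exact hvert a i v hir hv1 hv2)
      refine h1.trans ?_
      exact pow_le_pow_right_of_le_one' (min_le_right _ _) (hfsdiff i hir)
    have hkey : ∏ i ∈ Finset.range r, gb i ≤ ENNReal.ofReal (((r:ℝ)⁻¹) ^ r) := by
      by_cases hpos : ∀ i ∈ Finset.range r, (0:ℝ) ≤ be a (i+1) - be a i
      · calc ∏ i ∈ Finset.range r, gb i
            ≤ ∏ i ∈ Finset.range r, ENNReal.ofReal (be a (i+1) - be a i) :=
              Finset.prod_le_prod' fun i _ => min_le_left _ _
          _ = ENNReal.ofReal (∏ i ∈ Finset.range r, (be a (i+1) - be a i)) :=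
              (ENNReal.ofReal_prod_of_nonneg hpos).symm
          _ ≤ ENNReal.ofReal (((r:ℝ)⁻¹) ^ r) := by
              apply ENNReal.ofReal_le_ofReal
              apply chain_amgm r hr0 _ hpos
              rw [Finset.sum_range_sub (be a), hber a, hbe0 a, sub_zero]
      · push_neg at hpos
        obtain ⟨i, hi', hneg⟩ := hpos
        have hz : gb i = 0 := by
          simp only [hgb]
          rw [ENNReal.ofReal_eq_zero.2 hneg.le]
          simp
        rw [Finset.prod_eq_zero hi' hz]
        exact zero_le
    calc ∏ v ∈ Xᶜ, chainUnif (T a v)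
        ≤ ∏ i ∈ Finset.range r, ∏ v ∈ f i \ X, chainUnif (T a v) := by
          rw [← hstep2]; exact hstep1
      _ ≤ ∏ i ∈ Finset.range r, gb i ^ (n-2) := Finset.prod_le_prod' hstep3
      _ = (∏ i ∈ Finset.range r, gb i) ^ (n-2) := Finset.prod_pow _ _ _
      _ ≤ (ENNReal.ofReal (((r:ℝ)⁻¹) ^ r)) ^ (n-2) := pow_le_pow_left' hkey _
      _ = C := by
          rw [hC, ← ENNReal.ofReal_pow (by positivity), ← pow_mul, ← inv_pow]
  -- pointwise bound on the integrand
  have hbound : ∀ a, πXc (Prod.mk a ⁻¹' B) ≤ Set.indicator G (fun _ => C) a := by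
    intro a
    by_cases hGa : a ∈ G
    · rw [Set.indicator_of_mem hGa]
      calc πXc (Prod.mk a ⁻¹' B)
          ≤ πXc (Set.pi Set.univ fun w : {v : V // ¬ v ∈ X} => T a (w : V)) :=
            measure_mono (hslice a)
        _ = ∏ w : {v : V // ¬ v ∈ X}, chainUnif (T a (w : V)) := Measure.pi_pi _ _
        _ ≤ C := hprodbound a
    · rw [Set.indicator_of_notMem hGa, hsliceG a hGa]
      simp
  -- measurability of G and its measure
  have hGmeas : MeasurableSet G := by
    rw [hG]
    refine MeasurableSet.pi (Set.to_countable _) fun j _ => ?_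
    refine MeasurableSet.biInter (Set.to_countable _) fun i _ => ?_
    split_ifs
    · exact measurableSet_Icc
    · exact MeasurableSet.univ
  have hGbound : πX G ≤ ENNReal.ofReal p ^ (r - 1) := by
    have h1 : πX G = ∏ j : {v : V // v ∈ X}, chainUnif (S' j) := Measure.pi_pi _ _
    rw [h1]
    have h2 : ∀ j : {v : V // v ∈ X}, chainUnif (S' j) ≤ ENNReal.ofReal p := by
      intro j
      obtain ⟨i, hir, hxi⟩ := (hXmem (j : V)).1 j.2
      have hsub : S' j ⊆ Set.Icc (lo i) (hi i) := by
        intro s hs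
        simp only [hS, Set.mem_iInter] at hs
        have := hs i (Finset.mem_range.2 (by omega))
        rwa [if_pos hxi] at this
      calc chainUnif (S' j) ≤ chainUnif (Set.Icc (lo i) (hi i)) := measure_mono hsub
        _ ≤ ENNReal.ofReal (hi i - lo i) := chainUnif_Icc _ _
        _ = ENNReal.ofReal p := by
            congr 1
            simp only [hlo, hhi]
            field_simp
            ring
    calc (∏ j : {v : V // v ∈ X}, chainUnif (S' j))
        ≤ ∏ _j : {v : V // v ∈ X}, ENNReal.ofReal p :=
          Finset.prod_le_prod' fun j _ => h2 j
      _ = ENNReal.ofReal p ^ (r-1) := by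
          rw [Finset.prod_const, Finset.univ_eq_attach, Finset.card_attach, hXcard]
  -- put everything together
  calc ∫⁻ a, πXc (Prod.mk a ⁻¹' B) ∂πX
      ≤ ∫⁻ a, Set.indicator G (fun _ => C) a ∂πX := lintegral_mono hbound
    _ = C * πX G := lintegral_indicator_const hGmeas C
    _ ≤ C * ENNReal.ofReal p ^ (r-1) := mul_le_mul_right hGbound _
    _ = ENNReal.ofReal (p ^ (r - 1) * ((r : ℝ) ^ (r * (n - 2)))⁻¹) := by
        rw [hC, ← ENNReal.ofReal_pow hp0.le,
          ← ENNReal.ofReal_mul (by positivity), mul_comm]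
end

section
/- Let r ≥ 2 and n ≥ 2 be integers, let H = (V,E) be an n-uniform hypergraph, let p ∈ (0,1), and suppose there exists an injective birth time assignment t : V → [0,1] under which no edge is short (i.e., every edge has length at least (1−p)/r) and no r-chain of edges of H is conflicting. Then H is r-colorable. -/
section Aux

variable {V : Type} [DecidableEq V]

noncomputable def greedy (E : Finset (Finset V)) (t : V → ℝ) (v : V) : ℕ :=
  sInf {i | ¬ ∃ e ∈ E, v ∈ e ∧ (∀ w ∈ e, t w ≤ t v) ∧
    ∀ w, w ∈ E.biUnion id → t w < t v → w ∈ e → greedy E t w = i}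
termination_by ((E.biUnion id).filter fun w => t w < t v).card
decreasing_by
  rename_i w hw hlt _
  apply Finset.card_lt_card
  constructor
  · intro u hu
    simp only [Finset.mem_filter] at hu ⊢
    exact ⟨hu.1, hu.2.trans hlt⟩
  · intro hsub
    have := hsub (Finset.mem_filter.mpr ⟨hw, hlt⟩)
    simp at this

def Forb (E : Finset (Finset V)) (t : V → ℝ) (i : ℕ) (v : V) : Prop :=
  ∃ e ∈ E, v ∈ e ∧ (∀ w ∈ e, t w ≤ t v) ∧
    ∀ w, w ∈ E.biUnion id → t w < t v → w ∈ e → greedy E t w = i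

lemma greedy_def (E : Finset (Finset V)) (t : V → ℝ) (v : V) :
    greedy E t v = sInf {i | ¬ Forb E t i v} := by
  rw [greedy]; rfl

lemma forb_of_lt {E : Finset (Finset V)} {t : V → ℝ} {i : ℕ} {v : V}
    (h : i < greedy E t v) : Forb E t i v := by
  rw [greedy_def] at h
  have := Nat.notMem_of_lt_sInf h
  simpa using this

lemma forb_nonempty {E : Finset (Finset V)} {t : V → ℝ} (ht : Function.Injective t)
    (hcard : ∀ e ∈ E, 2 ≤ e.card) (v : V) : {i | ¬ Forb E t i v}.Nonempty := by
  by_contra h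
  have h' : ∀ i, Forb E t i v := by
    intro i; by_contra hi; exact h ⟨i, hi⟩
  choose e he hv hlast hcol using h'
  have einj : Function.Injective e := by
    intro i j hij
    obtain ⟨w, hw, hwv⟩ := Finset.exists_mem_ne
      (lt_of_lt_of_le one_lt_two (hcard _ (he i))) v
    have hlt : t w < t v := lt_of_le_of_ne (hlast i w hw) (fun hh => hwv (ht hh))
    have hwb : w ∈ E.biUnion id := Finset.mem_biUnion.mpr ⟨e i, he i, hw⟩
    have h1 := hcol i w hwb hlt hw
    have h2 := hcol j w hwb hlt (hij ▸ hw)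
    omega
  exact Set.infinite_range_of_injective einj
    (Set.Finite.subset E.finite_toSet (Set.range_subset_iff.mpr he))

lemma not_forb_greedy {E : Finset (Finset V)} {t : V → ℝ} (ht : Function.Injective t)
    (hcard : ∀ e ∈ E, 2 ≤ e.card) (v : V) : ¬ Forb E t (greedy E t v) v := by
  have := Nat.sInf_mem (forb_nonempty ht hcard v)
  rw [greedy_def]
  exact this

lemma chain_exists {E : Finset (Finset V)} {t : V → ℝ} (ht : Function.Injective t)
    (hcard : ∀ e ∈ E, 2 ≤ e.card) :
    ∀ (i : ℕ) (u : V), Forb E t i u → ∃ (f : ℕ → Finset V) (g : ℕ → V),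
      (∀ k ≤ i, f k ∈ E) ∧
      (∀ k ≤ i, g k ∈ f k) ∧
      (∀ k ≤ i, ∀ w ∈ f k, t w ≤ t (g k)) ∧
      (∀ k ≤ i, ∀ w ∈ f k, w ≠ g k → greedy E t w = k) ∧
      (∀ k < i, g k ∈ f (k+1)) ∧
      (∀ k < i, ∀ w ∈ f (k+1), t (g k) ≤ t w) ∧
      g i = u := by
  intro i
  induction i with
  | zero =>
    rintro u ⟨e, he, hv, hlast, hcol⟩
    refine ⟨fun _ => e, fun _ => u, fun _ _ => he, fun _ _ => hv, fun _ _ => hlast,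
      ?_, by omega, by omega, rfl⟩
    intro k hk w hw hne
    obtain rfl : k = 0 := Nat.le_zero.mp hk
    exact hcol w (Finset.mem_biUnion.mpr ⟨e, he, hw⟩)
      (lt_of_le_of_ne (hlast w hw) (fun hh => hne (ht hh))) hw
  | succ i ih =>
    rintro u ⟨e, he, hv, hlast, hcol⟩
    obtain ⟨m, hm, hmin⟩ := e.exists_min_image t ⟨u, hv⟩
    obtain ⟨x, hx, hxu⟩ := Finset.exists_mem_ne
      (lt_of_lt_of_le one_lt_two (hcard _ he)) u
    have hxlt : t x < t u := lt_of_le_of_ne (hlast x hx) (fun hh => hxu (ht hh))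
    have hmlt : t m < t u := lt_of_le_of_lt (hmin x hx) hxlt
    have hgm : greedy E t m = i + 1 :=
      hcol m (Finset.mem_biUnion.mpr ⟨e, he, hm⟩) hmlt hm
    have hFm : Forb E t i m := forb_of_lt (by omega)
    obtain ⟨f', g', h1, h2, h3, h4, h5, h6, h7⟩ := ih m hFm
    refine ⟨fun k => if k ≤ i then f' k else e, fun k => if k ≤ i then g' k else u,
      ?_, ?_, ?_, ?_, ?_, ?_, ?_⟩
    · intro k hk
      dsimp only
      split_ifs with h
      · exact h1 k h
      · exact he
    · intro k hk
      dsimp only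
      split_ifs with h
      · exact h2 k h
      · exact hv
    · intro k hk w hw
      dsimp only at hw ⊢
      by_cases h : k ≤ i
      · rw [if_pos h] at hw ⊢; exact h3 k h w hw
      · rw [if_neg h] at hw ⊢; exact hlast w hw
    · intro k hk w hw hne
      dsimp only at hw hne
      by_cases h : k ≤ i
      · rw [if_pos h] at hw hne; exact h4 k h w hw hne
      · rw [if_neg h] at hw hne
        obtain rfl : k = i + 1 := by omega
        exact hcol w (Finset.mem_biUnion.mpr ⟨e, he, hw⟩)
          (lt_of_le_of_ne (hlast w hw) (fun hh => hne (ht hh))) hw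
    · intro k hk
      dsimp only
      by_cases h : k < i
      · rw [if_pos (by omega : k ≤ i), if_pos (by omega : k + 1 ≤ i)]
        exact h5 k h
      · have hki : k = i := by omega
        rw [if_pos (le_of_eq hki), if_neg (by omega : ¬ k + 1 ≤ i), hki, h7]
        exact hm
    · intro k hk w hw
      dsimp only at hw ⊢
      by_cases h : k < i
      · rw [if_pos (by omega : k + 1 ≤ i)] at hw
        rw [if_pos (by omega : k ≤ i)]
        exact h6 k h w hw
      · have hki : k = i := by omega
        rw [if_neg (by omega : ¬ k + 1 ≤ i)] at hw
        rw [if_pos (le_of_eq hki), hki, h7]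
        exact hmin w hw
    · simp

end Aux

/-- If there is an injective birth-time assignment `t : V → [0,1]` under which no
edge of an `n`-uniform hypergraph is short (every edge has length at least
`(1-p)/r`) and no `r`-chain is conflicting, then the hypergraph is `r`-colorable. -/

theorem r_colorable_of_good_assignment (r n : ℕ) (hr : 2 ≤ r) (hn : 2 ≤ n)
    (V : Type) [DecidableEq V] (E : Finset (Finset V)) (hE : ∀ e ∈ E, e.card = n)
    (p : ℝ) (hp : p ∈ Set.Ioo (0 : ℝ) 1)
    (t : V → ℝ) (ht : Function.Injective t) (ht01 : ∀ v, t v ∈ Set.Icc (0 : ℝ) 1)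
    (hshort : ∀ e ∈ E, (1 - p) / r ≤ edgeLength t e)
    (hconf : ¬ ∃ f : ℕ → Finset V, IsRChain r E f ∧ IsConflictingChain r t f) :
    IsRColorable r E := by

  have hcard : ∀ e ∈ E, 2 ≤ e.card := fun e he => (hE e he) ▸ hn
  -- every vertex gets greedy color < r
  have hglt : ∀ v, greedy E t v < r := by
    intro v
    by_contra hge
    push_neg at hge
    have hforb : Forb E t (r - 1) v := forb_of_lt (by omega)
    obtain ⟨f, g, h1, h2, h3, h4, h5, h6, h7⟩ := chain_exists ht hcard (r - 1) v hforb
    -- the greedy color of g k is at least k + 1, for k ≤ r - 1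
    have hgk : ∀ k ≤ r - 1, k + 1 ≤ greedy E t (g k) := by
      intro k hk
      by_cases h : k < r - 1
      · -- g k ∈ f (k+1) and g k ≠ g (k+1)
        have hmem := h5 k h
        have hne : g k ≠ g (k + 1) := by
          intro heq
          obtain ⟨x, hx, hxne⟩ := Finset.exists_mem_ne
            (lt_of_lt_of_le one_lt_two (hcard _ (h1 (k+1) (by omega)))) (g (k+1))
          have hx1 : t x ≤ t (g (k+1)) := h3 (k+1) (by omega) x hx
          have hx2 : t (g k) ≤ t x := h6 k h x hx
          exact hxne (ht (le_antisymm hx1 (heq ▸ hx2)))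
        have := h4 (k+1) (by omega) (g k) hmem hne
        omega
      · have hki : k = r - 1 := by omega
        rw [hki, h7]; omega
    -- membership color bound
    have hcolmem : ∀ k ≤ r - 1, ∀ w ∈ f k, greedy E t w = k ∨ w = g k := by
      intro k hk w hw
      by_cases h : w = g k
      · exact Or.inr h
      · exact Or.inl (h4 k hk w hw h)
    apply hconf
    refine ⟨f, ⟨fun i hi => h1 i (by omega), ?_, ?_⟩, ?_⟩
    · -- consecutive intersections
      intro k hk
      have hset : f k ∩ f (k + 1) = {g k} := by
        ext w
        simp only [Finset.mem_inter, Finset.mem_singleton]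
        constructor
        · rintro ⟨hw1, hw2⟩
          rcases hcolmem k (by omega) w hw1 with hc1 | hc1
          · rcases hcolmem (k+1) (by omega) w hw2 with hc2 | hc2
            · omega
            · have := hgk (k+1) (by omega)
              rw [← hc2] at this; omega
          · exact hc1
        · rintro rfl
          exact ⟨h2 k (by omega), h5 k (by omega)⟩
      rw [hset, Finset.card_singleton]
    · -- far apart disjoint
      intro i j hj hij
      rw [Finset.eq_empty_iff_forall_notMem]
      intro w hw
      rw [Finset.mem_inter] at hw
      have hbi : greedy E t w ≤ i + 1 := by
        rcases hcolmem i (by omega) w hw.1 with hc | hc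
        · omega
        · have := hgk i (by omega); rw [← hc] at this
          -- need upper bound: if w = g i with i < r-1 then = i+1
          have hi' : i < r - 1 := by omega
          have hne : g i ≠ g (i + 1) := by
            intro heq
            obtain ⟨x, hx, hxne⟩ := Finset.exists_mem_ne
              (lt_of_lt_of_le one_lt_two (hcard _ (h1 (i+1) (by omega)))) (g (i+1))
            have hx1 : t x ≤ t (g (i+1)) := h3 (i+1) (by omega) x hx
            have hx2 : t (g i) ≤ t x := h6 i hi' x hx
            exact hxne (ht (le_antisymm hx1 (heq ▸ hx2)))
          have := h4 (i+1) (by omega) (g i) (h5 i hi') hne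
          rw [hc]; omega
      have hbj : j ≤ greedy E t w := by
        rcases hcolmem j (by omega) w hw.2 with hc | hc
        · omega
        · have := hgk j (by omega); rw [← hc] at this; omega
      omega
    · -- conflicting
      intro k hk
      exact ⟨g k, h2 k (by omega), h5 k (by omega), h3 k (by omega), h6 k (by omega)⟩
  refine ⟨fun v => ⟨greedy E t v, hglt v⟩, ?_⟩
  intro e he
  obtain ⟨v, hv, hmax⟩ := e.exists_max_image t
    (Finset.card_pos.mp (by have := hcard e he; omega))
  have hnf := not_forb_greedy ht hcard (E := E) (t := t) v
  rw [Forb] at hnf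
  push_neg at hnf
  obtain ⟨w, hwb, hwlt, hwe, hwne⟩ := hnf e he hv hmax
  exact ⟨w, hwe, v, hv, fun hh => hwne (by simpa [Fin.ext_iff] using hh)⟩
end

section
/- Let r ≥ 2 be an integer and let H = (V,E) be an n-uniform hypergraph in which every edge intersects at most D other edges (D ≥ 1). Then: (i) every edge of H intersects at most r·D^r distinct r-chains of H; (ii) every r-chain of H intersects at most r·D edges of H; and (iii) every r-chain of H intersects at most r²·D^r other r-chains of H. -/
/-- `f : Fin r → Finset V` is an `r`-chain of edges of `E`: consecutive edges meet
in exactly one vertex and non-consecutive edges are disjoint. -/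
def IsRChainFin {V : Type*} [DecidableEq V] (r : ℕ) (E : Finset (Finset V))
    (f : Fin r → Finset V) : Prop :=
  (∀ i, f i ∈ E) ∧
  (∀ i j : Fin r, (i : ℕ) + 1 = (j : ℕ) → (f i ∩ f j).card = 1) ∧
  (∀ i j : Fin r, (i : ℕ) + 1 < (j : ℕ) → f i ∩ f j = ∅)

/-- The set of edges of `E` other than `x` that meet `x`. -/
def Nbh {V : Type*} [DecidableEq V] (E : Finset (Finset V)) (x : Finset V) :
    Finset (Finset V) :=
  E.filter (fun y => y ≠ x ∧ (x ∩ y).Nonempty)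

/-- `Nbh`, truncated to `∅` off `E`. -/
def NbhE {V : Type*} [DecidableEq V] (E : Finset (Finset V)) (x : Finset V) :
    Finset (Finset V) :=
  if x ∈ E then Nbh E x else ∅

lemma tree_count {α ι : Type*} [DecidableEq α] [DecidableEq ι] [Fintype ι]
    (D : ℕ) (N : α → Finset α) (hN : ∀ x, (N x).card ≤ D)
    (A : Finset α) (root : ι) (par : ι → ι) (rank : ι → ℕ)
    (hpar : ∀ j, j ≠ root → rank (par j) < rank j)
    (S : Finset (ι → α))
    (hS : ∀ f ∈ S, f root ∈ A ∧ ∀ j, j ≠ root → f j ∈ N (f (par j))) :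
    S.card ≤ A.card * D ^ (Fintype.card ι - 1) := by
  classical
  have hcard : Fintype.card {j : ι // j ≠ root} = Fintype.card ι - 1 := by
    simp [Fintype.card_subtype_compl]
  calc S.card
      ≤ (A ×ˢ Fintype.piFinset (fun _ : {j : ι // j ≠ root} => Finset.range D)).card := by
        apply Finset.card_le_card_of_injOn
          (fun f => (f root, fun j : {j : ι // j ≠ root} =>
            (N (f (par j.1))).toList.idxOf (f j.1)))
        · intro f hf
          obtain ⟨h1, h2⟩ := hS f hf
          simp only [Finset.mem_coe, Finset.mem_product, Fintype.mem_piFinset, Finset.mem_range]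
          refine ⟨h1, fun j => ?_⟩
          calc (N (f (par j.1))).toList.idxOf (f j.1)
              < (N (f (par j.1))).toList.length :=
                List.idxOf_lt_length_iff.2 (Finset.mem_toList.2 (h2 j.1 j.2))
            _ = (N (f (par j.1))).card := Finset.length_toList _
            _ ≤ D := hN _
        · intro f hf g hg hfg
          simp only [Prod.mk.injEq] at hfg
          obtain ⟨hroot, hsnd⟩ := hfg
          have key : ∀ m, ∀ j, rank j < m → f j = g j := by
            intro m
            induction m with
            | zero => intro j hj; omega
            | succ m ih =>
              intro j hj
              by_cases hjr : j = root
              · rw [hjr]; exact hroot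
              · have hpj : f (par j) = g (par j) :=
                  ih (par j) (by have := hpar j hjr; omega)
                have hidx := congrFun hsnd ⟨j, hjr⟩
                simp only at hidx
                rw [hpj] at hidx
                have hfm : f j ∈ (N (g (par j))).toList := by
                  rw [Finset.mem_toList, ← hpj]
                  exact (hS f hf).2 j hjr
                have hgm : g j ∈ (N (g (par j))).toList := by
                  rw [Finset.mem_toList]
                  exact (hS g hg).2 j hjr
                exact (List.idxOf_inj hfm).1 hidx
          funext j
          exact key (rank j + 1) j (Nat.lt_succ_self _)
    _ = A.card * D ^ (Fintype.card ι - 1) := by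
        rw [Finset.card_product, Fintype.card_piFinset]
        simp [hcard]

lemma chain_consec_ne {V : Type*} [DecidableEq V] {r n : ℕ} {E : Finset (Finset V)}
    (hn : 2 ≤ n) (hE : ∀ e ∈ E, e.card = n) {f : Fin r → Finset V}
    (hf : IsRChainFin r E f) {a b : Fin r} (hab : (a : ℕ) + 1 = (b : ℕ)) :
    f a ≠ f b := by
  intro h
  have h1 := hf.2.1 a b hab
  rw [h, Finset.inter_self] at h1
  have := hE (f b) (hf.1 b)
  omega

lemma chain_adj {V : Type*} [DecidableEq V] {r n : ℕ} {E : Finset (Finset V)}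
    (hr : 2 ≤ r) (hn : 2 ≤ n) (hE : ∀ e ∈ E, e.card = n) {f : Fin r → Finset V}
    (hf : IsRChainFin r E f) (i : Fin r) :
    ∃ i' : Fin r, f i ∈ Nbh E (f i') ∧ f i' ∈ Nbh E (f i) := by
  have hi := i.isLt
  rcases lt_or_ge ((i : ℕ) + 1) r with h | h
  · refine ⟨⟨(i : ℕ) + 1, h⟩, ?_, ?_⟩
    · have h1 := hf.2.1 i ⟨(i : ℕ) + 1, h⟩ rfl
      have hne := chain_consec_ne hn hE hf (a := i) (b := ⟨(i : ℕ) + 1, h⟩) rfl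
      have hne' : (f i ∩ f ⟨(i : ℕ) + 1, h⟩).Nonempty := Finset.card_pos.1 (by omega)
      exact Finset.mem_filter.2 ⟨hf.1 i, hne, by rwa [Finset.inter_comm] at hne'⟩
    · have h1 := hf.2.1 i ⟨(i : ℕ) + 1, h⟩ rfl
      have hne := chain_consec_ne hn hE hf (a := i) (b := ⟨(i : ℕ) + 1, h⟩) rfl
      have hne' : (f i ∩ f ⟨(i : ℕ) + 1, h⟩).Nonempty := Finset.card_pos.1 (by omega)
      exact Finset.mem_filter.2 ⟨hf.1 _, hne.symm, hne'⟩
  · have h1le : 1 ≤ (i : ℕ) := by omega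
    have hab : ((⟨(i : ℕ) - 1, by omega⟩ : Fin r) : ℕ) + 1 = (i : ℕ) := by
      show (i : ℕ) - 1 + 1 = (i : ℕ); omega
    refine ⟨⟨(i : ℕ) - 1, by omega⟩, ?_, ?_⟩
    · have h1 := hf.2.1 ⟨(i : ℕ) - 1, by omega⟩ i hab
      have hne := chain_consec_ne hn hE hf hab
      have hne' : (f ⟨(i : ℕ) - 1, by omega⟩ ∩ f i).Nonempty := Finset.card_pos.1 (by omega)
      exact Finset.mem_filter.2 ⟨hf.1 i, hne.symm, hne'⟩
    · have h1 := hf.2.1 ⟨(i : ℕ) - 1, by omega⟩ i hab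
      have hne := chain_consec_ne hn hE hf hab
      have hne' : (f ⟨(i : ℕ) - 1, by omega⟩ ∩ f i).Nonempty := Finset.card_pos.1 (by omega)
      exact Finset.mem_filter.2 ⟨hf.1 _, hne, by rwa [Finset.inter_comm] at hne'⟩

lemma pivot_count {V : Type*} [DecidableEq V] {E : Finset (Finset V)} {D r n : ℕ}
    (hn : 2 ≤ n) (hr : 1 ≤ r) (hE : ∀ e ∈ E, e.card = n)
    (hN : ∀ x, (NbhE E x).card ≤ D)
    (i : Fin r) (A : Finset (Finset V)) (hA : A.card ≤ D)
    (S : Finset (Fin r → Finset V))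
    (hS : ∀ f ∈ S, IsRChainFin r E f ∧ f i ∈ A) :
    S.card ≤ D ^ r := by
  have hi := i.isLt
  have key := tree_count D (NbhE E) hN A i
      (fun j => if h : (j : ℕ) < (i : ℕ) then ⟨(j : ℕ) + 1, by omega⟩
        else if h' : (i : ℕ) < (j : ℕ) then ⟨(j : ℕ) - 1, by omega⟩ else j)
      (fun j => ((i : ℕ) - (j : ℕ)) + ((j : ℕ) - (i : ℕ)))
      ?_ S ?_
  · calc S.card ≤ A.card * D ^ (Fintype.card (Fin r) - 1) := key
      _ ≤ D * D ^ (r - 1) := by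
          rw [Fintype.card_fin]; exact Nat.mul_le_mul_right _ hA
      _ = D ^ r := by rw [← pow_succ']; congr 1; omega
  · intro j hj
    have hij : (j : ℕ) ≠ (i : ℕ) := fun h => hj (Fin.ext h)
    have hjlt := j.isLt
    split_ifs with h h'
    · simp only []; omega
    · simp only []; omega
    · omega
  · intro f hf
    obtain ⟨hc, hfA⟩ := hS f hf
    refine ⟨hfA, fun j hj => ?_⟩
    have hij : (j : ℕ) ≠ (i : ℕ) := fun h => hj (Fin.ext h)
    have hjlt := j.isLt
    split_ifs with h h'
    · have hcons := hc.2.1 j ⟨(j : ℕ) + 1, by omega⟩ rfl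
      have hne := chain_consec_ne hn hE hc (a := j) (b := ⟨(j : ℕ) + 1, by omega⟩) rfl
      have hne' : (f j ∩ f ⟨(j : ℕ) + 1, by omega⟩).Nonempty := Finset.card_pos.1 (by omega)
      rw [NbhE, if_pos (hc.1 _)]
      exact Finset.mem_filter.2 ⟨hc.1 j, hne, by rwa [Finset.inter_comm] at hne'⟩
    · have h1le : 1 ≤ (j : ℕ) := by omega
      have hab : ((⟨(j : ℕ) - 1, by omega⟩ : Fin r) : ℕ) + 1 = (j : ℕ) := by
        show (j : ℕ) - 1 + 1 = (j : ℕ); omega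
      have hcons := hc.2.1 ⟨(j : ℕ) - 1, by omega⟩ j hab
      have hne := chain_consec_ne hn hE hc hab
      have hne' : (f ⟨(j : ℕ) - 1, by omega⟩ ∩ f j).Nonempty := Finset.card_pos.1 (by omega)
      rw [NbhE, if_pos (hc.1 _)]
      exact Finset.mem_filter.2 ⟨hc.1 j, hne.symm, hne'⟩
    · exact absurd (Fin.ext (by omega : (j : ℕ) = (i : ℕ))) hj

lemma singleton_inter_eq {V : Type*} [DecidableEq V] {s t : Finset V}
    (hs : s.card = 1) (ht : t.card = 1) (hst : (s ∩ t).card = 1) : s = t := by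
  have hsub1 : s ∩ t ⊆ s := Finset.inter_subset_left
  have hsub2 : s ∩ t ⊆ t := Finset.inter_subset_right
  have h1 : s ∩ t = s := Finset.eq_of_subset_of_card_le hsub1 (by omega)
  have h2 : s ∩ t = t := Finset.eq_of_subset_of_card_le hsub2 (by omega)
  rw [← h1, h2]

lemma no_chain_small {V : Type*} [DecidableEq V] {r n : ℕ} {E : Finset (Finset V)}
    (hr : 2 ≤ r) (hE : ∀ e ∈ E, e.card = n)
    (hsmall : n = 0 ∨ (n = 1 ∧ 3 ≤ r)) (f : Fin r → Finset V) :
    ¬ IsRChainFin r E f := by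
  intro hf
  have h01 := hf.2.1 ⟨0, by omega⟩ ⟨1, by omega⟩ rfl
  rcases hsmall with h | ⟨h, hr3⟩
  · have hc0 := hE _ (hf.1 ⟨0, by omega⟩)
    have hsub : f ⟨0, by omega⟩ ∩ f ⟨1, by omega⟩ ⊆ f ⟨0, by omega⟩ :=
      Finset.inter_subset_left
    have hle := Finset.card_le_card hsub
    omega
  · have h12 := hf.2.1 ⟨1, by omega⟩ ⟨2, by omega⟩ rfl
    have h02 := hf.2.2 ⟨0, by omega⟩ ⟨2, by omega⟩ (by norm_num)
    have hcard0 : (f (⟨0, by omega⟩ : Fin r)).card = 1 := by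
      have := hE _ (hf.1 ⟨0, by omega⟩); omega
    have hcard1 : (f (⟨1, by omega⟩ : Fin r)).card = 1 := by
      have := hE _ (hf.1 ⟨1, by omega⟩); omega
    have e01 : f (⟨0, by omega⟩ : Fin r) = f ⟨1, by omega⟩ :=
      singleton_inter_eq hcard0 hcard1 h01
    rw [e01] at h02
    rw [h02] at h12
    simp at h12

lemma chain_two_one {V : Type*} [DecidableEq V] {n : ℕ} {E : Finset (Finset V)}
    (hn : n = 1) (hE : ∀ e ∈ E, e.card = n) {f : Fin 2 → Finset V}
    (hf : IsRChainFin 2 E f) : f ⟨0, by omega⟩ = f ⟨1, by omega⟩ := by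
  have h01 := hf.2.1 ⟨0, by omega⟩ ⟨1, by omega⟩ rfl
  have hcard0 : (f (⟨0, by omega⟩ : Fin 2)).card = 1 := by
    have := hE _ (hf.1 ⟨0, by omega⟩); omega
  have hcard1 : (f (⟨1, by omega⟩ : Fin 2)).card = 1 := by
    have := hE _ (hf.1 ⟨1, by omega⟩); omega
  exact singleton_inter_eq hcard0 hcard1 h01

/-- In an `n`-uniform hypergraph in which every edge intersects at most `D ≥ 1`
other edges: (i) every edge intersects at most `r·D^r` `r`-chains; (ii) every
`r`-chain intersects at most `r·D` edges; (iii) every `r`-chain intersects at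
most `r²·D^r` other `r`-chains.  (An edge intersects a chain if it intersects
some edge of the chain; two chains intersect if some edge of one intersects
some edge of the other.) -/
theorem chain_counting (r n D : ℕ) (hr : 2 ≤ r) (hD : 1 ≤ D)
    (V : Type) [DecidableEq V] (E : Finset (Finset V)) (hE : ∀ e ∈ E, e.card = n)
    (hdeg : ∀ e ∈ E, {f | f ∈ E ∧ f ≠ e ∧ (e ∩ f).Nonempty}.ncard ≤ D) :
    (∀ e ∈ E,
      {f : Fin r → Finset V | IsRChainFin r E f ∧ ∃ i, (e ∩ f i).Nonempty}.ncard
        ≤ r * D ^ r) ∧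
    (∀ g : Fin r → Finset V, IsRChainFin r E g →
      {e | e ∈ E ∧ ∃ i, (e ∩ g i).Nonempty}.ncard ≤ r * D) ∧
    (∀ g : Fin r → Finset V, IsRChainFin r E g →
      {f : Fin r → Finset V | IsRChainFin r E f ∧ f ≠ g ∧
        ∃ i j, (f i ∩ g j).Nonempty}.ncard ≤ r ^ 2 * D ^ r) := by
  classical
  have hNb : ∀ e ∈ E, (Nbh E e).card ≤ D := by
    intro e he
    have h := hdeg e he
    have hset : {f | f ∈ E ∧ f ≠ e ∧ (e ∩ f).Nonempty} = ↑(Nbh E e) := by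
      ext f
      simp only [Set.mem_setOf_eq, Finset.mem_coe, Nbh, Finset.mem_filter]
    rwa [hset, Set.ncard_coe_finset] at h
  have hN : ∀ x, (NbhE E x).card ≤ D := by
    intro x
    rw [NbhE]
    split_ifs with h
    · exact hNb x h
    · simp
  by_cases hn2 : 2 ≤ n
  · -- main case: n ≥ 2
    refine ⟨?_, ?_, ?_⟩
    · -- (i)
      intro e he
      set 𝒮 := (Fintype.piFinset fun _ : Fin r => E).filter
          (fun f => IsRChainFin r E f ∧ ∃ i, (e ∩ f i).Nonempty) with h𝒮
      have hset : {f : Fin r → Finset V | IsRChainFin r E f ∧ ∃ i, (e ∩ f i).Nonempty}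
          = ↑𝒮 := by
        ext f
        simp only [h𝒮, Set.mem_setOf_eq, Finset.mem_coe, Finset.mem_filter,
          Fintype.mem_piFinset]
        exact ⟨fun ⟨hc, hi⟩ => ⟨fun j => hc.1 j, hc, hi⟩, fun ⟨_, hc, hi⟩ => ⟨hc, hi⟩⟩
      rw [hset, Set.ncard_coe_finset]
      have hsub : 𝒮 ⊆ Finset.univ.biUnion (fun i : Fin r =>
          (Fintype.piFinset fun _ : Fin r => E).filter
            (fun f => IsRChainFin r E f ∧ f i ∈ Nbh E e)) := by
        intro f hf
        rw [h𝒮, Finset.mem_filter] at hf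
        obtain ⟨hpi, hc, i, hi⟩ := hf
        rw [Finset.mem_biUnion]
        by_cases hfe : f i = e
        · obtain ⟨i', -, hmem⟩ := chain_adj hr hn2 hE hc i
          rw [hfe] at hmem
          exact ⟨i', Finset.mem_univ _, Finset.mem_filter.2 ⟨hpi, hc, hmem⟩⟩
        · exact ⟨i, Finset.mem_univ _, Finset.mem_filter.2 ⟨hpi, hc,
            Finset.mem_filter.2 ⟨hc.1 i, hfe, hi⟩⟩⟩
      calc 𝒮.card
          ≤ ∑ i : Fin r, ((Fintype.piFinset fun _ : Fin r => E).filter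
              (fun f => IsRChainFin r E f ∧ f i ∈ Nbh E e)).card :=
            le_trans (Finset.card_le_card hsub) Finset.card_biUnion_le
        _ ≤ ∑ _i : Fin r, D ^ r := Finset.sum_le_sum (fun i _ =>
            pivot_count hn2 (by omega) hE hN i (Nbh E e) (hNb e he) _
              (fun f hf => ⟨(Finset.mem_filter.1 hf).2.1, (Finset.mem_filter.1 hf).2.2⟩))
        _ = r * D ^ r := by simp [Finset.sum_const, Finset.card_univ]
    · -- (ii)
      intro g hg
      have hset : {a | a ∈ E ∧ ∃ i, (a ∩ g i).Nonempty}
          = ↑(E.filter (fun a => ∃ i, (a ∩ g i).Nonempty)) := by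
        ext a
        simp only [Set.mem_setOf_eq, Finset.mem_coe, Finset.mem_filter]
      rw [hset, Set.ncard_coe_finset]
      have hsub : E.filter (fun a => ∃ i, (a ∩ g i).Nonempty)
          ⊆ Finset.univ.biUnion (fun i : Fin r => Nbh E (g i)) := by
        intro a ha
        rw [Finset.mem_filter] at ha
        obtain ⟨haE, i, hi⟩ := ha
        rw [Finset.mem_biUnion]
        by_cases hae : a = g i
        · obtain ⟨i', hmem, -⟩ := chain_adj hr hn2 hE hg i
          exact ⟨i', Finset.mem_univ _, by rw [hae]; exact hmem⟩
        · exact ⟨i, Finset.mem_univ _, Finset.mem_filter.2 ⟨haE, hae,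
            by rwa [Finset.inter_comm] at hi⟩⟩
      calc (E.filter (fun a => ∃ i, (a ∩ g i).Nonempty)).card
          ≤ ∑ i : Fin r, (Nbh E (g i)).card :=
            le_trans (Finset.card_le_card hsub) Finset.card_biUnion_le
        _ ≤ ∑ _i : Fin r, D := Finset.sum_le_sum (fun i _ => hNb _ (hg.1 i))
        _ = r * D := by simp [Finset.sum_const, Finset.card_univ]
    · -- (iii)
      intro g hg
      set 𝒯 := (Fintype.piFinset fun _ : Fin r => E).filter
          (fun f => IsRChainFin r E f ∧ f ≠ g ∧ ∃ i j, (f i ∩ g j).Nonempty) with h𝒯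
      have hset : {f : Fin r → Finset V | IsRChainFin r E f ∧ f ≠ g ∧
          ∃ i j, (f i ∩ g j).Nonempty} = ↑𝒯 := by
        ext f
        simp only [h𝒯, Set.mem_setOf_eq, Finset.mem_coe, Finset.mem_filter,
          Fintype.mem_piFinset]
        exact ⟨fun ⟨hc, hne, hi⟩ => ⟨fun j => hc.1 j, hc, hne, hi⟩,
          fun ⟨_, hc, hne, hi⟩ => ⟨hc, hne, hi⟩⟩
      rw [hset, Set.ncard_coe_finset]
      have hsub : 𝒯 ⊆ Finset.univ.biUnion (fun p : Fin r × Fin r =>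
          (Fintype.piFinset fun _ : Fin r => E).filter
            (fun f => IsRChainFin r E f ∧ f p.1 ∈ Nbh E (g p.2))) := by
        intro f hf
        rw [h𝒯, Finset.mem_filter] at hf
        obtain ⟨hpi, hc, hne, i, j, hij⟩ := hf
        rw [Finset.mem_biUnion]
        by_cases hfe : f i = g j
        · obtain ⟨i', -, hmem⟩ := chain_adj hr hn2 hE hc i
          rw [hfe] at hmem
          exact ⟨(i', j), Finset.mem_univ _, Finset.mem_filter.2 ⟨hpi, hc, hmem⟩⟩
        · exact ⟨(i, j), Finset.mem_univ _, Finset.mem_filter.2 ⟨hpi, hc,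
            Finset.mem_filter.2 ⟨hc.1 i, hfe, by rwa [Finset.inter_comm] at hij⟩⟩⟩
      calc 𝒯.card
          ≤ ∑ p : Fin r × Fin r, ((Fintype.piFinset fun _ : Fin r => E).filter
              (fun f => IsRChainFin r E f ∧ f p.1 ∈ Nbh E (g p.2))).card :=
            le_trans (Finset.card_le_card hsub) Finset.card_biUnion_le
        _ ≤ ∑ _p : Fin r × Fin r, D ^ r := Finset.sum_le_sum (fun p _ =>
            pivot_count hn2 (by omega) hE hN p.1 (Nbh E (g p.2)) (hNb _ (hg.1 p.2)) _
              (fun f hf => ⟨(Finset.mem_filter.1 hf).2.1, (Finset.mem_filter.1 hf).2.2⟩))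
        _ = r ^ 2 * D ^ r := by
            simp only [Finset.sum_const, Finset.card_univ, Fintype.card_prod,
              Fintype.card_fin, smul_eq_mul]
            ring
  · -- small case: n ≤ 1
    push_neg at hn2
    by_cases hnc : ∀ f : Fin r → Finset V, ¬ IsRChainFin r E f
    · refine ⟨?_, ?_, ?_⟩
      · intro e he
        have hempty : {f : Fin r → Finset V | IsRChainFin r E f ∧
            ∃ i, (e ∩ f i).Nonempty} = ∅ := by
          ext f
          simp only [Set.mem_setOf_eq, Set.mem_empty_iff_false, iff_false, not_and]
          exact fun hc => absurd hc (hnc f)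
        rw [hempty]
        simp
      · intro g hg; exact absurd hg (hnc g)
      · intro g hg; exact absurd hg (hnc g)
    · push_neg at hnc
      obtain ⟨f₀, hf₀⟩ := hnc
      have hn1 : n = 1 := by
        have h01 : n = 0 ∨ n = 1 := by omega
        rcases h01 with h | h
        · exact absurd hf₀ (no_chain_small hr hE (Or.inl h) f₀)
        · exact h
      have hr2 : r = 2 := by
        by_contra h
        exact absurd hf₀ (no_chain_small hr hE (Or.inr ⟨hn1, by omega⟩) f₀)
      subst hr2
      refine ⟨?_, ?_, ?_⟩
      · -- (i) for r = 2, n = 1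
        intro e he
        have hmap : Set.MapsTo (fun f : Fin 2 → Finset V => f ⟨0, by omega⟩)
            {f | IsRChainFin 2 E f ∧ ∃ i, (e ∩ f i).Nonempty}
            ↑(insert e (Nbh E e)) := by
          rintro f ⟨hc, i, hi⟩
          have heq := chain_two_one hn1 hE hc
          have hi0 : (e ∩ f ⟨0, by omega⟩).Nonempty := by
            have hfi : f i = f ⟨0, by omega⟩ := by
              rcases i with ⟨iv, hiv⟩
              interval_cases iv
              · rfl
              · exact heq.symm
            rwa [hfi] at hi
          simp only [Finset.coe_insert, Set.mem_insert_iff, Finset.mem_coe]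
          by_cases hfe : f ⟨0, by omega⟩ = e
          · exact Or.inl hfe
          · exact Or.inr (Finset.mem_filter.2 ⟨hc.1 _, hfe, hi0⟩)
        have hinj : Set.InjOn (fun f : Fin 2 → Finset V => f ⟨0, by omega⟩)
            {f | IsRChainFin 2 E f ∧ ∃ i, (e ∩ f i).Nonempty} := by
          rintro f ⟨hcf, -⟩ g ⟨hcg, -⟩ h
          funext j
          have heqf := chain_two_one hn1 hE hcf
          have heqg := chain_two_one hn1 hE hcg
          rcases j with ⟨jv, hjv⟩
          interval_cases jv
          · exact h
          · rw [← heqf, ← heqg]; exact h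
        have hcount := Set.ncard_le_ncard_of_injOn _ hmap hinj (Finset.finite_toSet _)
        rw [Set.ncard_coe_finset] at hcount
        have hc1 := Finset.card_insert_le e (Nbh E e)
        have hc2 := hNb e he
        have hc3 : D + 1 ≤ 2 * D ^ 2 := by nlinarith
        exact hcount.trans ((hc1.trans (Nat.add_le_add_right hc2 1)).trans hc3)
      · -- (ii) for r = 2, n = 1
        intro g hg
        have heq := chain_two_one hn1 hE hg
        have hsub : {a | a ∈ E ∧ ∃ i, (a ∩ g i).Nonempty}
            ⊆ ↑(insert (g ⟨0, by omega⟩) (Nbh E (g ⟨0, by omega⟩))) := by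
          rintro a ⟨haE, i, hi⟩
          have hi0 : (a ∩ g ⟨0, by omega⟩).Nonempty := by
            have hgi : g i = g ⟨0, by omega⟩ := by
              rcases i with ⟨iv, hiv⟩
              interval_cases iv
              · rfl
              · exact heq.symm
            rwa [hgi] at hi
          simp only [Finset.coe_insert, Set.mem_insert_iff, Finset.mem_coe]
          by_cases hae : a = g ⟨0, by omega⟩
          · exact Or.inl hae
          · exact Or.inr (Finset.mem_filter.2 ⟨haE, hae,
              by rwa [Finset.inter_comm] at hi0⟩)
        have hcount := Set.ncard_le_ncard hsub (Finset.finite_toSet _)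
        rw [Set.ncard_coe_finset] at hcount
        have hc1 := Finset.card_insert_le (g ⟨0, by omega⟩) (Nbh E (g ⟨0, by omega⟩))
        have hc2 := hNb _ (hg.1 ⟨0, by omega⟩)
        omega
      · -- (iii) for r = 2, n = 1
        intro g hg
        have heqg := chain_two_one hn1 hE hg
        have hmap : Set.MapsTo (fun f : Fin 2 → Finset V => f ⟨0, by omega⟩)
            {f | IsRChainFin 2 E f ∧ f ≠ g ∧ ∃ i j, (f i ∩ g j).Nonempty}
            ↑(Nbh E (g ⟨0, by omega⟩)) := by
          rintro f ⟨hc, hne, i, j, hij⟩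
          have heqf := chain_two_one hn1 hE hc
          have hi0 : (f ⟨0, by omega⟩ ∩ g ⟨0, by omega⟩).Nonempty := by
            have hfi : f i = f ⟨0, by omega⟩ := by
              rcases i with ⟨iv, hiv⟩
              interval_cases iv
              · rfl
              · exact heqf.symm
            have hgj : g j = g ⟨0, by omega⟩ := by
              rcases j with ⟨jv, hjv⟩
              interval_cases jv
              · rfl
              · exact heqg.symm
            rw [hfi, hgj] at hij
            exact hij
          have hfne : f ⟨0, by omega⟩ ≠ g ⟨0, by omega⟩ := by
            intro h
            apply hne
            funext k
            rcases k with ⟨kv, hkv⟩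
            interval_cases kv
            · exact h
            · rw [← heqf, ← heqg]; exact h
          exact Finset.mem_coe.2 (Finset.mem_filter.2 ⟨hc.1 _, hfne,
            by rwa [Finset.inter_comm] at hi0⟩)
        have hinj : Set.InjOn (fun f : Fin 2 → Finset V => f ⟨0, by omega⟩)
            {f | IsRChainFin 2 E f ∧ f ≠ g ∧ ∃ i j, (f i ∩ g j).Nonempty} := by
          rintro f ⟨hcf, -⟩ f' ⟨hcf', -⟩ h
          funext k
          have heqf := chain_two_one hn1 hE hcf
          have heqf' := chain_two_one hn1 hE hcf'
          rcases k with ⟨kv, hkv⟩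
          interval_cases kv
          · exact h
          · rw [← heqf, ← heqf']; exact h
        have hcount := Set.ncard_le_ncard_of_injOn _ hmap hinj (Finset.finite_toSet _)
        rw [Set.ncard_coe_finset] at hcount
        have hc2 := hNb _ (hg.1 (⟨0, by norm_num⟩ : Fin 2))
        have hc3 : D ≤ 2 ^ 2 * D ^ 2 := by nlinarith
        exact hcount.trans (hc2.trans hc3)
end
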